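/- arXiv:1605.01385 — 10 statements merged into one kernel-verified Lean document; each statement's English description precedes it below -/
import Mathlib

section
/- Let (X,f) be a dynamical system with X nonempty and metrizable. Then (X,f) is an abstract ω-limit set if and only if f is weakly incompressible. -/
open Topology Set

/-- `ω*`: the space of free (non-principal) ultrafilters on `ℕ`,
a subspace of `βℕ = Ultrafilter ℕ`. -/
abbrev OmegaStar : Type := {p : Ultrafilter ℕ // ∀ n : ℕ, p ≠ pure n}

lemma map_succ_free (p : Ultrafilter ℕ) (hp : ∀ n : ℕ, p ≠ pure n) :
    ∀ n : ℕ, Ultrafilter.map (· + 1) p ≠ pure n := by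
  intro n h
  have h1 : (· + 1) ⁻¹' {n} ∈ p := by
    have : ({n} : Set ℕ) ∈ Ultrafilter.map (· + 1) p := by
      rw [h]; exact rfl
    exact Ultrafilter.mem_map.mp this
  rcases n with _ | k
  · have : ((· + 1) ⁻¹' {0} : Set ℕ) = ∅ := by
      ext m; simp
    rw [this] at h1
    exact Ultrafilter.empty_notMem h1
  · have : ((· + 1) ⁻¹' {k + 1} : Set ℕ) = {k} := by
      ext m; simp
    rw [this] at h1
    obtain ⟨x, hx, hpx⟩ := Ultrafilter.eq_pure_of_finite_mem (Set.finite_singleton k) h1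
    rcases hx with rfl
    exact hp x hpx

/-- The shift map `σ : ω* → ω*`, pushforward under `n ↦ n + 1`. -/
def shiftMap (p : OmegaStar) : OmegaStar :=
  ⟨Ultrafilter.map (· + 1) p.1, map_succ_free p.1 p.2⟩

/-- `(X, f)` is a quotient of `(ω*, σ)`. -/
def IsQuotientOfShift {X : Type*} [TopologicalSpace X] (f : X → X) : Prop :=
  ∃ Q : OmegaStar → X, Continuous Q ∧ Function.Surjective Q ∧
    ∀ p : OmegaStar, Q (shiftMap p) = f (Q p)

/-- A self-map `f : X → X` is weakly incompressible if no open `U` with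
`∅ ≠ U ≠ X` satisfies `f(cl U) ⊆ U`. -/
def WeaklyIncompressible {X : Type*} [TopologicalSpace X] (f : X → X) : Prop :=
  ∀ U : Set X, IsOpen U → U.Nonempty → U ≠ Set.univ → ¬ (f '' closure U ⊆ U)

/-- The weight of a topological space: the least cardinality of a topological basis. -/
noncomputable def tweight (X : Type*) [TopologicalSpace X] : Cardinal :=
  ⨅ B : {B : Set (Set X) // TopologicalSpace.IsTopologicalBasis B}, Cardinal.mk B.1

/-- The ω-limit set of a point `y` under `g`. -/
def omegaLimitSet {Y : Type*} [TopologicalSpace Y] (g : Y → Y) (y : Y) : Set Y :=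
  ⋂ n : ℕ, closure {z : Y | ∃ m : ℕ, n ≤ m ∧ g^[m] y = z}

/-- `(X, f)` is an abstract ω-limit set. -/
def AbstractOmegaLimit {X : Type u} [TopologicalSpace X] (f : X → X) : Prop :=
  ∃ (Y : Type u) (_ : TopologicalSpace Y) (_ : CompactSpace Y) (_ : T2Space Y)
    (g : Y → Y) (y : Y), Continuous g ∧
      Set.MapsTo g (omegaLimitSet g y) (omegaLimitSet g y) ∧
      ∃ H : X ≃ₜ (omegaLimitSet g y), ∀ x : X, (H (f x) : Y) = g (H x)


universe u

set_option linter.unusedSectionVars false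


section Forward
variable {Y : Type*} [TopologicalSpace Y] [CompactSpace Y] [T2Space Y] (g : Y → Y) (y : Y)

def otail (n : ℕ) : Set Y := {z : Y | ∃ m : ℕ, n ≤ m ∧ g^[m] y = z}

lemma isClosed_omega : IsClosed (omegaLimitSet g y) := isClosed_iInter fun _ => isClosed_closure

lemma omega_subset_closure_otail (n : ℕ) : omegaLimitSet g y ⊆ closure (otail g y n) :=
  iInter_subset _ n

lemma absorb {G : Set Y} (hG : IsOpen G) (hΛ : omegaLimitSet g y ⊆ G) :
    ∃ N, ∀ m ≥ N, g^[m] y ∈ G := by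
  by_contra h
  push_neg at h
  have hne : ∀ n : ℕ, (closure (otail g y n) ∩ Gᶜ).Nonempty := by
    intro n
    obtain ⟨m, hm, hmG⟩ := h n
    exact ⟨g^[m] y, subset_closure ⟨m, hm, rfl⟩, hmG⟩
  have hanti : ∀ n : ℕ, closure (otail g y (n+1)) ∩ Gᶜ ⊆ closure (otail g y n) ∩ Gᶜ := by
    intro n
    apply inter_subset_inter_left
    apply closure_mono
    rintro z ⟨m, hm, rfl⟩
    exact ⟨m, Nat.le_of_succ_le hm, rfl⟩
  have hcl : ∀ n : ℕ, IsClosed (closure (otail g y n) ∩ Gᶜ) :=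
    fun n => isClosed_closure.inter hG.isClosed_compl
  obtain ⟨w, hw⟩ := IsCompact.nonempty_iInter_of_sequence_nonempty_isCompact_isClosed
    _ hanti hne ((hcl 0).isCompact) hcl
  simp only [mem_iInter, mem_inter_iff] at hw
  exact (hw 0).2 (hΛ (mem_iInter.2 fun n => (hw n).1))

lemma visit {z : Y} (hz : z ∈ omegaLimitSet g y) {O : Set Y} (hO : IsOpen O) (hzO : z ∈ O)
    (n : ℕ) : ∃ m ≥ n, g^[m] y ∈ O := by
  have := omega_subset_closure_otail g y n hz
  rw [mem_closure_iff] at this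
  obtain ⟨p, hpO, m, hm, rfl⟩ := this O hO hzO
  exact ⟨m, hm, hpO⟩

lemma cluster (P : ℕ → Prop) (h : ∀ n, ∃ m ≥ n, P m) :
    ∃ w ∈ omegaLimitSet g y, ∀ O : Set Y, IsOpen O → w ∈ O → ∃ m, P m ∧ g^[m] y ∈ O := by
  set t : ℕ → Set Y := fun n => closure {z : Y | ∃ m : ℕ, n ≤ m ∧ P m ∧ g^[m] y = z} with ht
  have hanti : ∀ n, t (n+1) ⊆ t n := by
    intro n
    apply closure_mono
    rintro z ⟨m, hm, hP, rfl⟩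
    exact ⟨m, Nat.le_of_succ_le hm, hP, rfl⟩
  have hne : ∀ n, (t n).Nonempty := by
    intro n
    obtain ⟨m, hm, hP⟩ := h n
    exact ⟨g^[m] y, subset_closure ⟨m, hm, hP, rfl⟩⟩
  have hcl : ∀ n, IsClosed (t n) := fun n => isClosed_closure
  obtain ⟨w, hw⟩ := IsCompact.nonempty_iInter_of_sequence_nonempty_isCompact_isClosed
    t hanti hne ((hcl 0).isCompact) hcl
  rw [mem_iInter] at hw
  refine ⟨w, mem_iInter.2 fun n => closure_mono ?_ (hw n), ?_⟩
  · rintro z ⟨m, hm, _, rfl⟩; exact ⟨m, hm, rfl⟩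
  · intro O hO hwO
    have := hw 0
    rw [mem_closure_iff] at this
    obtain ⟨p, hpO, m, _, hP, rfl⟩ := this O hO hwO
    exact ⟨m, hP, hpO⟩

theorem no_attracting_relopen (hg : Continuous g)
    (hM : MapsTo g (omegaLimitSet g y) (omegaLimitSet g y))
    {U V₀ : Set Y} (hV₀ : IsOpen V₀)
    (hUV : V₀ ∩ omegaLimitSet g y = U)
    (hne : U.Nonempty) (hneq : U ≠ omegaLimitSet g y)
    (hatt : g '' closure U ⊆ U) : False := by
  set Λ := omegaLimitSet g y with hΛdef
  have hUsub : U ⊆ Λ := hUV ▸ inter_subset_right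
  have hA : closure U ⊆ Λ := (isClosed_omega g y).closure_subset_iff.2 hUsub
  by_cases hdense : closure U = Λ
  · -- dense case : g '' Λ ⊆ U, separate a point z ∈ Λ \ U from g '' Λ
    have hgΛ : g '' Λ ⊆ U := hdense ▸ hatt
    obtain ⟨z, hzΛ, hzU⟩ : ∃ z, z ∈ Λ ∧ z ∉ U := by
      by_contra hc
      push_neg at hc
      exact hneq (Subset.antisymm hUsub hc)
    have hcpt : IsCompact (g '' Λ) := ((isClosed_omega g y).isCompact).image hg
    have hdisj : Disjoint (g '' Λ) {z} := by
      simp only [disjoint_singleton_right]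
      exact fun hz => hzU (hgΛ hz)
    obtain ⟨V, O, hVop, hOop, hsubV, hsubO, hVO⟩ :=
      SeparatedNhds.of_isCompact_isCompact_isClosed hcpt isCompact_singleton
        isClosed_singleton hdisj
    have hGop : IsOpen (g ⁻¹' V) := hVop.preimage hg
    have hΛG : Λ ⊆ g ⁻¹' V := fun q hq => hsubV ⟨q, hq, rfl⟩
    obtain ⟨N, hN⟩ := absorb g y hGop hΛG
    have htail : otail g y (N+1) ⊆ V := by
      rintro _ ⟨m, hm, rfl⟩
      obtain ⟨m, rfl⟩ := Nat.exists_eq_add_of_le hm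
      rw [show N + 1 + m = (N + m) + 1 by ring, Function.iterate_succ_apply']
      exact hN (N + m) (Nat.le_add_right N m)
    have hzV : z ∈ closure V := closure_mono htail (omega_subset_closure_otail g y (N+1) hzΛ)
    have : O ∩ closure V = ∅ := by
      exact disjoint_iff_inter_eq_empty.1 (hVO.closure_left hOop).symm
    exact absurd (mem_inter (hsubO rfl) hzV) (this ▸ notMem_empty z)
  · -- main case
    obtain ⟨z, hzΛ, hzA⟩ : ∃ z, z ∈ Λ ∧ z ∉ closure U := by
      by_contra hc
      push_neg at hc
      exact hdense (Subset.antisymm hA hc)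
    obtain ⟨O, V₂, hOop, hV₂op, hsubO, hsubV₂, hOV₂⟩ :=
      SeparatedNhds.of_isCompact_isCompact_isClosed isCompact_singleton
        (isClosed_closure (s := U)).isCompact isClosed_closure
        (by simpa [disjoint_singleton_left] using hzA)
    set V : Set Y := V₀ ∩ V₂ with hVdef
    have hVop : IsOpen V := hV₀.inter hV₂op
    have hUsubV : U ⊆ V := fun u hu =>
      ⟨(hUV ▸ hu : u ∈ V₀ ∩ Λ).1, hsubV₂ (subset_closure hu)⟩
    have hVΛ : V ∩ Λ ⊆ U := by
      intro q hq
      rw [← hUV]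
      exact ⟨hq.1.1, hq.2⟩
    have hOV : O ∩ V = ∅ :=
      disjoint_iff_inter_eq_empty.1 (hOV₂.mono_right inter_subset_right)
    have hAgV : closure U ⊆ g ⁻¹' V := by
      intro a ha
      exact hUsubV (hatt ⟨a, ha, rfl⟩)
    obtain ⟨V', hV'op, hAV', hclV'⟩ :=
      normal_exists_closure_subset isClosed_closure (hVop.preimage hg) hAgV
    obtain ⟨u, hu⟩ := hne
    have huVV' : u ∈ V ∩ V' := ⟨hUsubV hu, hAV' (subset_closure hu)⟩
    -- key claim : arbitrarily large t with g^[t] y ∈ V ∩ V' and g^[t+1] y ∉ V'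
    have claim : ∀ n, ∃ t ≥ n, (g^[t] y ∈ V ∩ V' ∧ g^[t+1] y ∉ V') := by
      intro n
      obtain ⟨m₁, hm₁, hm₁mem⟩ := visit g y (hUsub hu) (hVop.inter hV'op) huVV' n
      obtain ⟨m₂, hm₂, hm₂mem⟩ := visit g y hzΛ hOop (hsubO rfl) (m₁+1)
      classical
      set P : ℕ → Prop := fun s => m₁ ≤ s ∧ g^[s] y ∈ V ∩ V' with hPdef
      have hm₁le : m₁ ≤ m₂ - 1 := by omega
      set t := Nat.findGreatest P (m₂ - 1) with htdef
      have hPt : P t := Nat.findGreatest_spec hm₁le ⟨le_refl m₁, hm₁mem⟩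
      have htle : t ≤ m₂ - 1 := Nat.findGreatest_le _
      refine ⟨t, le_trans hm₁ hPt.1, hPt.2, ?_⟩
      intro hmem
      have hnext : g^[t+1] y ∈ V := by
        rw [Function.iterate_succ_apply']
        exact hclV' (subset_closure hPt.2.2)
      have htne : t + 1 ≠ m₂ := by
        intro h
        rw [h] at hnext
        exact absurd (mem_inter hm₂mem hnext) (hOV ▸ notMem_empty _)
      have ht1le : t + 1 ≤ m₂ - 1 := by omega
      exact Nat.findGreatest_is_greatest (Nat.lt_succ_self t) ht1le
        ⟨by omega, hnext, hmem⟩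
    have claim' : ∀ n, ∃ t ≥ n, (g^[t] y ∈ V ∩ V' ∧ g^[t+1] y ∉ V') := claim
    obtain ⟨w, hwΛ, hwcl⟩ := cluster g y _ claim'
    have hwV' : w ∈ closure V' := by
      rw [mem_closure_iff]
      intro N hNop hwN
      obtain ⟨m, hPm, hmN⟩ := hwcl N hNop hwN
      exact ⟨g^[m] y, hmN, hPm.1.2⟩
    have hgw : g w ∈ U := hVΛ ⟨hclV' hwV', hM hwΛ⟩
    have hwpre : w ∈ g ⁻¹' V' := hAV' (subset_closure hgw)
    obtain ⟨m, hPm, hmN⟩ := hwcl (g ⁻¹' V') (hV'op.preimage hg) hwpre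
    exact hPm.2 (by rw [Function.iterate_succ_apply']; exact hmN)
end Forward






theorem wi_of_abstract {X : Type u} [TopologicalSpace X] (f : X → X)
    (h : AbstractOmegaLimit f) : WeaklyIncompressible f := by
  obtain ⟨Y, _, _, _, g, y, hg, hM, H, hconj⟩ := h
  intro U hUop hUne hUuniv hatt
  set U' : Set Y := Subtype.val '' (H '' U) with hU'def
  have hHUopen : IsOpen (H '' U) := H.isOpen_image.2 hUop
  obtain ⟨V₀, hV₀op, hV₀eq⟩ := isOpen_induced_iff.1 hHUopen
  have hUV : V₀ ∩ omegaLimitSet g y = U' := by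
    rw [hU'def, ← hV₀eq, Subtype.image_preimage_coe, inter_comm]
  have hclemb := (isClosed_omega g y).isClosedEmbedding_subtypeVal
  have hclosure : closure U' = Subtype.val '' (H '' closure U) := by
    rw [hU'def, hclemb.closure_image_eq, H.image_closure]
  have hne' : U'.Nonempty := by
    obtain ⟨x, hx⟩ := hUne
    exact ⟨(H x : Y), ⟨H x, ⟨x, hx, rfl⟩, rfl⟩⟩
  have hneq' : U' ≠ omegaLimitSet g y := by
    intro heq
    obtain ⟨x₀, hx₀⟩ : ∃ x, x ∉ U := by
      by_contra hc; push_neg at hc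
      exact hUuniv (eq_univ_of_forall hc)
    have : (H x₀ : Y) ∈ U' := heq.symm ▸ (H x₀).2
    obtain ⟨q, ⟨x, hx, rfl⟩, hq⟩ := this
    have : x = x₀ := H.injective (Subtype.val_injective hq)
    exact hx₀ (this ▸ hx)
  have hatt' : g '' closure U' ⊆ U' := by
    rintro _ ⟨a, ha, rfl⟩
    rw [hclosure] at ha
    obtain ⟨q, ⟨x, hx, rfl⟩, rfl⟩ := ha
    refine ⟨H (f x), ⟨f x, hatt ⟨x, hx, rfl⟩, rfl⟩, ?_⟩
    exact hconj x
  exact no_attracting_relopen g y hg hM hV₀op hUV hne' hneq' hatt'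


section Chains
variable {X : Type*} [MetricSpace X] [CompactSpace X]

/-- an ε-chain from a to b with at least one step -/
def IsEpsChain (f : X → X) (ε : ℝ) (a b : X) : Prop :=
  ∃ n : ℕ, 1 ≤ n ∧ ∃ z : ℕ → X, z 0 = a ∧ z n = b ∧
    ∀ i < n, dist (f (z i)) (z (i+1)) < ε

lemma chain_all (f : X → X) (hf : Continuous f) (hwi : WeaklyIncompressible f)
    {ε : ℝ} (hε : 0 < ε) (a b : X) : IsEpsChain f ε a b := by
  set U : Set X := {b | IsEpsChain f ε a b} with hUdef
  have hne : f a ∈ U := by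
    refine ⟨1, le_refl 1, fun i => if i = 0 then a else f a, by simp, by simp, ?_⟩
    intro i hi
    interval_cases i
    simpa using hε
  have hop : IsOpen U := by
    rw [Metric.isOpen_iff]
    rintro c ⟨n, hn, z, hz0, hzn, hj⟩
    refine ⟨ε - dist (f (z (n-1))) c, ?_, ?_⟩
    · have := hj (n-1) (by omega)
      rw [show n - 1 + 1 = n by omega, hzn] at this
      linarith
    · intro c' hc'
      rw [Metric.mem_ball] at hc'
      refine ⟨n, hn, Function.update z n c', ?_, ?_, ?_⟩
      · rw [Function.update_of_ne (by omega) _ _]; exact hz0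
      · simp
      · intro i hi
        by_cases hin : i + 1 = n
        · have h1 : Function.update z n c' i = z i := Function.update_of_ne (by omega) _ _
          have h2 : Function.update z n c' (i+1) = c' := by rw [hin]; simp
          rw [h1, h2]
          have : i = n - 1 := by omega
          calc dist (f (z i)) c' ≤ dist (f (z i)) c + dist c c' := dist_triangle _ _ _
            _ < dist (f (z (n-1))) c + (ε - dist (f (z (n-1))) c) := by
                rw [this, dist_comm c c']; linarith
            _ = ε := by ring
        · rw [Function.update_of_ne (by omega), Function.update_of_ne (by omega)]
          exact hj i hi
  have hcl : f '' closure U ⊆ U := by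
    rintro _ ⟨c, hc, rfl⟩
    obtain ⟨δ, hδ, hδ'⟩ := Metric.continuousAt_iff.1 (hf.continuousAt (x := c)) ε hε
    obtain ⟨c', hc'U, hcc'⟩ := Metric.mem_closure_iff.1 hc δ hδ
    obtain ⟨n, hn, z, hz0, hzn, hj⟩ := hc'U
    refine ⟨n+1, by omega, fun i => if i ≤ n then z i else f c, by simp [hz0], by simp, ?_⟩
    intro i hi
    show dist (f (if i ≤ n then z i else f c)) (if i + 1 ≤ n then z (i+1) else f c) < ε
    by_cases hin : i < n
    · rw [if_pos (by omega : i ≤ n), if_pos (by omega : i + 1 ≤ n)]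
      exact hj i hin
    · have hieq : i = n := by omega
      rw [if_pos (by omega : i ≤ n), if_neg (by omega : ¬ i + 1 ≤ n), hieq, hzn]
      exact hδ' (by rwa [dist_comm] at hcc')
  by_cases huniv : U = Set.univ
  · have : b ∈ U := by rw [huniv]; trivial
    exact this
  · exact absurd hcl (hwi U hop ⟨f a, hne⟩ huniv)

end Chains

section Seq
variable {X : Type*} [MetricSpace X] [CompactSpace X] [Nonempty X]

noncomputable def tgt (X : Type*) [TopologicalSpace X] [TopologicalSpace.SeparableSpace X] [Nonempty X] (k : ℕ) : X := TopologicalSpace.denseSeq X (Nat.unpair k).1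

lemma seg_exists (f : X → X) (hf : Continuous f) (hwi : WeaklyIncompressible f) (a : X) (k : ℕ) :
    ∃ p : ℕ × (ℕ → X), 1 ≤ p.1 ∧ p.2 0 = a ∧ p.2 p.1 = tgt X k ∧
      ∀ i < p.1, dist (f (p.2 i)) (p.2 (i+1)) < (1/2:ℝ)^k := by
  obtain ⟨n, hn, z, h0, hn', hj⟩ := chain_all f hf hwi (pow_pos (by norm_num : (0:ℝ) < 1/2) k) a (tgt X k)
  exact ⟨(n, z), hn, h0, hn', hj⟩

noncomputable def FF (f : X → X) (hf : Continuous f) (hwi : WeaklyIncompressible f) : ℕ → ℕ × (ℕ → X)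
  | 0 => (0, fun _ => tgt X 0)
  | (k+1) =>
    let p := FF f hf hwi k
    let c := Classical.choose (seg_exists f hf hwi (p.2 p.1) (k+1))
    (p.1 + c.1, fun i => if i ≤ p.1 then p.2 i else c.2 (i - p.1))

lemma FF_step (f : X → X) (hf : Continuous f) (hwi : WeaklyIncompressible f) (k : ℕ) :
    (FF f hf hwi k).1 < (FF f hf hwi (k+1)).1 ∧
    (∀ i ≤ (FF f hf hwi k).1, (FF f hf hwi (k+1)).2 i = (FF f hf hwi k).2 i) ∧
    (FF f hf hwi (k+1)).2 (FF f hf hwi (k+1)).1 = tgt X (k+1) ∧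
    ∀ i, (FF f hf hwi k).1 ≤ i → i < (FF f hf hwi (k+1)).1 →
      dist (f ((FF f hf hwi (k+1)).2 i)) ((FF f hf hwi (k+1)).2 (i+1)) < (1/2:ℝ)^(k+1) := by
  set p := FF f hf hwi k with hp
  have spec := Classical.choose_spec (seg_exists f hf hwi (p.2 p.1) (k+1))
  set c := Classical.choose (seg_exists f hf hwi (p.2 p.1) (k+1)) with hc
  have hFF : FF f hf hwi (k+1) =
      (p.1 + c.1, fun i => if i ≤ p.1 then p.2 i else c.2 (i - p.1)) := by
    rw [FF]
  obtain ⟨hc1, hc0, hcend, hcj⟩ := spec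
  have hv : ∀ i, p.1 ≤ i → (if i ≤ p.1 then p.2 i else c.2 (i - p.1)) = c.2 (i - p.1) := by
    intro i hi
    rcases eq_or_lt_of_le hi with h | h
    · rw [if_pos (by omega : i ≤ p.1), ← h, Nat.sub_self, hc0]
    · rw [if_neg (by omega : ¬ i ≤ p.1)]
  refine ⟨?_, ?_, ?_, ?_⟩
  · rw [hFF]; exact Nat.lt_add_of_pos_right (by omega)
  · intro i hi
    rw [hFF]
    exact if_pos hi
  · rw [hFF]
    simp only
    rw [hv _ (Nat.le_add_right _ _), Nat.add_sub_cancel_left]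
    exact hcend
  · intro i hi hi'
    rw [hFF] at hi' ⊢
    simp only at hi' ⊢
    rw [hv i hi, hv (i+1) (by omega), show i + 1 - p.1 = (i - p.1) + 1 by omega]
    exact hcj (i - p.1) (by omega)

lemma FF_le_len (f : X → X) (hf : Continuous f) (hwi : WeaklyIncompressible f) : ∀ k, k ≤ (FF f hf hwi k).1 := by
  intro k
  induction k with
  | zero => exact Nat.zero_le _
  | succ n ih => exact Nat.succ_le_of_lt (lt_of_le_of_lt ih (FF_step f hf hwi n).1)

lemma FF_len_mono (f : X → X) (hf : Continuous f) (hwi : WeaklyIncompressible f) : Monotone (fun k => (FF f hf hwi k).1) :=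
  monotone_nat_of_le_succ fun k => le_of_lt (FF_step f hf hwi k).1

lemma FF_endpoint (f : X → X) (hf : Continuous f) (hwi : WeaklyIncompressible f) : ∀ k, (FF f hf hwi k).2 (FF f hf hwi k).1 = tgt X k := by
  intro k
  cases k with
  | zero => rfl
  | succ n => exact (FF_step f hf hwi n).2.2.1

lemma FF_agree (f : X → X) (hf : Continuous f) (hwi : WeaklyIncompressible f) : ∀ {k k' : ℕ}, k ≤ k' → ∀ {i : ℕ}, i ≤ (FF f hf hwi k).1 →
    (FF f hf hwi k').2 i = (FF f hf hwi k).2 i := by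
  intro k k' hkk'
  induction k' , hkk' using Nat.le_induction with
  | base => intro i _; rfl
  | succ n hn ih =>
      intro i hi
      rw [(FF_step f hf hwi n).2.1 i (le_trans hi (FF_len_mono f hf hwi hn)), ih hi]

noncomputable def xseq (f : X → X) (hf : Continuous f) (hwi : WeaklyIncompressible f) (n : ℕ) : X := (FF f hf hwi (n+1)).2 n

lemma xseq_eq (f : X → X) (hf : Continuous f) (hwi : WeaklyIncompressible f) {k n : ℕ} (h : n ≤ (FF f hf hwi k).1) : xseq f hf hwi n = (FF f hf hwi k).2 n := by
  rcases le_total k (n+1) with hk | hk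
  · exact FF_agree f hf hwi hk h
  · exact (FF_agree f hf hwi hk (le_trans (Nat.le_succ n) (FF_le_len f hf hwi (n+1)))).symm

lemma xseq_jump (f : X → X) (hf : Continuous f) (hwi : WeaklyIncompressible f) (k n : ℕ) (h : (FF f hf hwi k).1 ≤ n) :
    dist (f (xseq f hf hwi n)) (xseq f hf hwi (n+1)) < (1/2:ℝ)^k := by
  classical
  set P : ℕ → Prop := fun j => (FF f hf hwi j).1 ≤ n with hP
  have hkn : k ≤ n + 1 := le_trans (FF_le_len f hf hwi k) (le_trans h (Nat.le_succ n))
  have hPk : P k := h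
  have hj : P (Nat.findGreatest P (n+1)) := Nat.findGreatest_spec hkn hPk
  set j := Nat.findGreatest P (n+1) with hjdef
  have hjk : k ≤ j := Nat.le_findGreatest hkn hPk
  have hj1 : n < (FF f hf hwi (j+1)).1 := by
    by_contra hcon
    push_neg at hcon
    have hj1le : j + 1 ≤ n + 1 := by
      have := FF_le_len f hf hwi (j+1)
      omega
    exact Nat.findGreatest_is_greatest (Nat.lt_succ_self j) hj1le hcon
  have hjump := (FF_step f hf hwi j).2.2.2 n hj hj1
  rw [← xseq_eq f hf hwi (le_of_lt hj1), ← xseq_eq f hf hwi hj1] at hjump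
  calc dist (f (xseq f hf hwi n)) (xseq f hf hwi (n+1)) < (1/2:ℝ)^(j+1) := hjump
    _ ≤ (1/2:ℝ)^k := pow_le_pow_of_le_one (by norm_num) (by norm_num) (by omega)

lemma xseq_visits (f : X → X) (hf : Continuous f) (hwi : WeaklyIncompressible f) (j N : ℕ) :
    ∃ m ≥ N, xseq f hf hwi m = TopologicalSpace.denseSeq X j := by
  set k := Nat.pair j N with hk
  refine ⟨(FF f hf hwi k).1, le_trans (Nat.right_le_pair j N) (FF_le_len f hf hwi k), ?_⟩
  rw [xseq_eq f hf hwi (le_refl _), FF_endpoint f hf hwi k]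
  show TopologicalSpace.denseSeq X (Nat.unpair k).1 = _
  rw [hk, Nat.unpair_pair]

lemma exists_pseudo_orbit (f : X → X) (hf : Continuous f) (hwi : WeaklyIncompressible f) :
    ∃ x : ℕ → X,
      (∀ ε : ℝ, 0 < ε → ∃ N, ∀ n ≥ N, dist (f (x n)) (x (n+1)) < ε) ∧
      (∀ (p : X) (ε : ℝ), 0 < ε → ∀ N : ℕ, ∃ m ≥ N, dist (x m) p < ε) := by
  refine ⟨xseq f hf hwi, ?_, ?_⟩
  · intro ε hε
    obtain ⟨k, hk⟩ := exists_pow_lt_of_lt_one hε (by norm_num : (1/2:ℝ) < 1)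
    exact ⟨(FF f hf hwi k).1, fun n hn => lt_trans (xseq_jump f hf hwi k n hn) hk⟩
  · intro p ε hε N
    obtain ⟨j, hj⟩ := (TopologicalSpace.denseRange_denseSeq X).exists_dist_lt p hε
    obtain ⟨m, hm, hmeq⟩ := xseq_visits f hf hwi j N
    exact ⟨m, hm, by rw [hmeq, dist_comm]; exact hj⟩

end Seq


section Construction
variable {X : Type u} [MetricSpace X]

def cS (x : ℕ → X) : Set (X × ℝ) :=
  {q : X × ℝ | q.2 = 0} ∪ Set.range (fun n : ℕ => ((x n, ((n : ℝ)+1)⁻¹) : X × ℝ))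

lemma mem_cS_zero (x : ℕ → X) (a : X) : ((a, (0:ℝ)) : X × ℝ) ∈ cS x := Or.inl rfl

lemma mem_cS_orbit (x : ℕ → X) (n : ℕ) : ((x n, ((n:ℝ)+1)⁻¹) : X × ℝ) ∈ cS x :=
  Or.inr ⟨n, rfl⟩

lemma inv_pos' (n : ℕ) : (0:ℝ) < ((n:ℝ)+1)⁻¹ := by positivity

lemma nat_inv_inj {n m : ℕ} (h : ((n:ℝ)+1)⁻¹ = ((m:ℝ)+1)⁻¹) : n = m := by
  rw [inv_inj] at h
  exact_mod_cast (by linarith : (n:ℝ) = (m:ℝ))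

lemma nat_inv_anti {n m : ℕ} (h : n ≤ m) : ((m:ℝ)+1)⁻¹ ≤ ((n:ℝ)+1)⁻¹ := by
  have : ((n:ℝ)+1) ≤ ((m:ℝ)+1) := by
    have : (n:ℝ) ≤ m := by exact_mod_cast h
    linarith
  exact inv_anti₀ (by positivity) this

lemma inv_small1 {ε : ℝ} (hε : 0 < ε) : ∃ N : ℕ, ∀ m ≥ N, ((m:ℝ)+1)⁻¹ < ε := by
  obtain ⟨N, hN⟩ := exists_nat_gt (1/ε)
  refine ⟨N, fun m hm => ?_⟩
  have hm' : (N:ℝ) ≤ m := by exact_mod_cast hm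
  have h2 : 1/ε < (m:ℝ)+1 := by linarith
  have hεinv : (0:ℝ) < 1/ε := by positivity
  calc ((m:ℝ)+1)⁻¹ < (1/ε)⁻¹ := by
        apply inv_strictAnti₀ hεinv h2
    _ = ε := by rw [one_div, inv_inv]
  
-- elements of cS are either at level 0 or orbit points
lemma cS_cases (x : ℕ → X) (q : ↥(cS x)) :
    q.1.2 = 0 ∨ ∃ n : ℕ, q.1 = (x n, ((n:ℝ)+1)⁻¹) := by
  rcases q.2 with h | ⟨n, hn⟩
  · exact Or.inl h
  · exact Or.inr ⟨n, hn.symm⟩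

lemma isClosed_cS (x : ℕ → X) : IsClosed (cS x) := by
  rw [← isOpen_compl_iff, isOpen_iff_mem_nhds]
  intro q hq
  have hq2 : q.2 ≠ 0 := fun h => hq (Or.inl h)
  have hb : (0:ℝ) < |q.2| := abs_pos.2 hq2
  set M : ℕ := ⌈2 / |q.2|⌉₊ with hM
  set P : Set (X × ℝ) := (fun n : ℕ => ((x n, ((n:ℝ)+1)⁻¹) : X × ℝ)) '' {n | n < M} with hP
  have hPfin : P.Finite := Set.Finite.image _ (Set.finite_lt_nat M)
  have hqP : q ∉ P := by
    rintro ⟨n, _, rfl⟩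
    exact hq (Or.inr ⟨n, rfl⟩)
  set N : Set (X × ℝ) := Pᶜ ∩ {p : X × ℝ | |p.2 - q.2| < |q.2|/2} with hN
  have hNopen : IsOpen N := by
    apply IsOpen.inter hPfin.isClosed.isOpen_compl
    have hcont : Continuous fun p : X × ℝ => |p.2 - q.2| :=
      (continuous_snd.sub continuous_const).abs
    exact isOpen_lt hcont continuous_const
  have hqN : q ∈ N := ⟨hqP, by simp only [mem_setOf_eq, sub_self, abs_zero]; positivity⟩
  refine Filter.mem_of_superset (hNopen.mem_nhds hqN) ?_
  rintro p ⟨hpP, hp2⟩ hmem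
  rcases hmem with h0 | ⟨n, rfl⟩
  · rw [mem_setOf_eq, h0, zero_sub, abs_neg] at hp2
    linarith
  · apply hpP
    refine ⟨n, ?_, rfl⟩
    rw [mem_setOf_eq, hM]
    simp only [mem_setOf_eq] at hp2
    -- hp2 : |(n+1)⁻¹ - q.2| < |q.2|/2 ; conclude (n+1)⁻¹ > |q.2|/2
    have htri : |q.2| ≤ |q.2 - ((n:ℝ)+1)⁻¹| + ((n:ℝ)+1)⁻¹ := by
      have h01 : |q.2| ≤ |q.2 - ((n:ℝ)+1)⁻¹| + |((n:ℝ)+1)⁻¹| := by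
        calc |q.2| = |q.2 - ((n:ℝ)+1)⁻¹ + ((n:ℝ)+1)⁻¹| := by ring_nf
          _ ≤ _ := abs_add_le _ _
      rwa [abs_of_pos (inv_pos' n)] at h01
    rw [abs_sub_comm] at hp2
    have hbig : |q.2|/2 < ((n:ℝ)+1)⁻¹ := by linarith
    have hn1 : (0:ℝ) < (n:ℝ)+1 := by positivity
    have hprod : ((n:ℝ)+1) * |q.2| < 2 := by
      have := mul_lt_mul_of_pos_left hbig hn1
      rw [mul_inv_cancel₀ (ne_of_gt hn1)] at this
      linarith
    have : (n:ℝ) < 2 / |q.2| := by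
      rw [lt_div_iff₀ hb]
      nlinarith
    exact Nat.lt_ceil.2 this

lemma isCompact_cS [CompactSpace X] (x : ℕ → X) : IsCompact (cS x) := by
  apply IsCompact.of_isClosed_subset
    ((isCompact_univ : IsCompact (Set.univ : Set X)).prod (isCompact_Icc (a := (0:ℝ)) (b := 1)))
    (isClosed_cS x)
  rintro p (h0 | ⟨n, rfl⟩)
  · exact ⟨mem_univ _, by rw [mem_Icc, h0]; norm_num⟩
  · refine ⟨mem_univ _, mem_Icc.2 ⟨le_of_lt (inv_pos' n), ?_⟩⟩
    have : (1:ℝ) ≤ (n:ℝ)+1 := by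
      have : (0:ℝ) ≤ (n:ℝ) := Nat.cast_nonneg n
      linarith
    calc ((n:ℝ)+1)⁻¹ ≤ 1⁻¹ := inv_anti₀ one_pos this
      _ = 1 := inv_one

noncomputable def cG (f : X → X) (x : ℕ → X) (q : ↥(cS x)) : ↥(cS x) :=
  letI := Classical.dec (∃ n : ℕ, q.1 = (x n, ((n:ℝ)+1)⁻¹))
  if h : ∃ n : ℕ, q.1 = (x n, ((n:ℝ)+1)⁻¹) then
    ⟨(x (Classical.choose h + 1), ((↑(Classical.choose h + 1) : ℝ)+1)⁻¹),
      mem_cS_orbit x (Classical.choose h + 1)⟩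
  else ⟨(f q.1.1, 0), mem_cS_zero x _⟩

lemma cG_zero (f : X → X) (x : ℕ → X) (q : ↥(cS x)) (h : q.1.2 = 0) :
    cG f x q = ⟨(f q.1.1, 0), mem_cS_zero x _⟩ := by
  unfold cG
  rw [dif_neg]
  rintro ⟨n, hn⟩
  have h2 := congrArg Prod.snd hn
  simp only at h2
  rw [h] at h2
  exact absurd h2.symm (ne_of_gt (inv_pos' n))

lemma cG_orbit (f : X → X) (x : ℕ → X) (n : ℕ) (q : ↥(cS x))
    (h : q.1 = (x n, ((n:ℝ)+1)⁻¹)) :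
    cG f x q = ⟨(x (n+1), ((↑(n+1) : ℝ)+1)⁻¹), mem_cS_orbit x (n+1)⟩ := by
  have hex : ∃ m : ℕ, q.1 = (x m, ((m:ℝ)+1)⁻¹) := ⟨n, h⟩
  have hspec := Classical.choose_spec hex
  have hmn : Classical.choose hex = n := by
    have h2 := congrArg Prod.snd (hspec.symm.trans h)
    simp only at h2
    exact nat_inv_inj h2
  unfold cG
  rw [dif_pos hex]
  simp only [hmn]

end Construction

section Construction2
variable {X : Type u} [MetricSpace X]

lemma gap_lemma {m n : ℕ} (h : m ≠ n) :
    ((n:ℝ)+1)⁻¹ - ((n:ℝ)+2)⁻¹ ≤ |((m:ℝ)+1)⁻¹ - ((n:ℝ)+1)⁻¹| := by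
  have hn1 : (0:ℝ) < (n:ℝ)+1 := by positivity
  have hn2 : (0:ℝ) < (n:ℝ)+2 := by positivity
  have hm1 : (0:ℝ) < (m:ℝ)+1 := by positivity
  rcases lt_or_gt_of_ne h with hlt | hgt
  · -- m < n, so m + 1 ≤ n and n ≥ 1
    have hn0 : (0:ℝ) < (n:ℝ) := by
      have : (1:ℕ) ≤ n := by omega
      exact_mod_cast Nat.lt_of_lt_of_le Nat.zero_lt_one this
    have hmn : (m:ℝ)+1 ≤ (n:ℝ) := by
      have : m+1 ≤ n := by omega
      exact_mod_cast this
    have h1 : ((n:ℝ))⁻¹ ≤ ((m:ℝ)+1)⁻¹ := inv_anti₀ hm1 hmn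
    have e1 : ((n:ℝ))⁻¹ - ((n:ℝ)+1)⁻¹ = ((n:ℝ)*((n:ℝ)+1))⁻¹ := by
      field_simp
      ring
    have e2 : ((n:ℝ)+1)⁻¹ - ((n:ℝ)+2)⁻¹ = (((n:ℝ)+1)*((n:ℝ)+2))⁻¹ := by
      field_simp
      ring
    have h3 : (((n:ℝ)+1)*((n:ℝ)+2))⁻¹ ≤ ((n:ℝ)*((n:ℝ)+1))⁻¹ := by
      apply inv_anti₀ (by positivity)
      nlinarith
    have h4 : ((n:ℝ)+1)⁻¹ ≤ ((m:ℝ)+1)⁻¹ := inv_anti₀ hm1 (by linarith)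
    rw [abs_of_nonneg (by linarith)]
    linarith
  · -- m > n, so m+1 ≥ n+2
    have hmn : (n:ℝ)+2 ≤ (m:ℝ)+1 := by
      have : n+2 ≤ m+1 := by omega
      exact_mod_cast this
    have h1 : ((m:ℝ)+1)⁻¹ ≤ ((n:ℝ)+2)⁻¹ := inv_anti₀ hn2 hmn
    have h4 : ((m:ℝ)+1)⁻¹ ≤ ((n:ℝ)+1)⁻¹ := inv_anti₀ hn1 (by linarith)
    rw [abs_of_nonpos (by linarith)]
    linarith

lemma gap_pos (n : ℕ) : (0:ℝ) < ((n:ℝ)+1)⁻¹ - ((n:ℝ)+2)⁻¹ := by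
  have e2 : ((n:ℝ)+1)⁻¹ - ((n:ℝ)+2)⁻¹ = (((n:ℝ)+1)*((n:ℝ)+2))⁻¹ := by
    field_simp
    ring
  rw [e2]
  positivity

lemma cG_cont (f : X → X) (hf : Continuous f) (x : ℕ → X)
    (h1 : ∀ ε : ℝ, 0 < ε → ∃ N, ∀ n ≥ N, dist (f (x n)) (x (n+1)) < ε) :
    Continuous (cG f x) := by
  rw [Metric.continuous_iff]
  intro q ε hε
  rcases cS_cases x q with hz | ⟨n, hn⟩
  · -- q = (a, 0)
    have hq1 : q.1 = (q.1.1, 0) := by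
      rw [Prod.ext_iff]
      exact ⟨rfl, hz⟩
    obtain ⟨δc, hδc, hδc'⟩ := Metric.continuousAt_iff.1 (hf.continuousAt (x := q.1.1))
      (ε/2) (by linarith)
    obtain ⟨N₁, hN₁⟩ := h1 (ε/2) (by linarith)
    obtain ⟨N₂, hN₂⟩ := inv_small1 hε
    set N := max N₁ N₂ with hNdef
    refine ⟨min δc ((N:ℝ)+1)⁻¹, lt_min hδc (inv_pos' N), ?_⟩
    intro q' hq'
    have hd : dist q'.1 q.1 < min δc ((N:ℝ)+1)⁻¹ := by
      rw [← Subtype.dist_eq]; exact hq'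
    have hdfst : dist q'.1.1 q.1.1 < δc := lt_of_le_of_lt (by
      rw [Prod.dist_eq]; exact le_max_left _ _) (lt_of_lt_of_le hd (min_le_left _ _))
    have hdsnd : dist q'.1.2 q.1.2 < ((N:ℝ)+1)⁻¹ := lt_of_le_of_lt (by
      rw [Prod.dist_eq]; exact le_max_right _ _) (lt_of_lt_of_le hd (min_le_right _ _))
    rcases cS_cases x q' with hz' | ⟨m, hm⟩
    · -- q' = (b, 0)
      rw [Subtype.dist_eq, cG_zero f x q hz, cG_zero f x q' hz']
      rw [Prod.dist_eq]
      simp only [dist_self]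
      rw [max_eq_left dist_nonneg]
      exact lt_trans (hδc' hdfst) (by linarith)
    · -- q' = (x m, (m+1)⁻¹) with m large
      have hm2 : q'.1.2 = ((m:ℝ)+1)⁻¹ := by rw [hm]
      have hmN : N ≤ m := by
        by_contra hcon
        push_neg at hcon
        have : ((N:ℝ)+1)⁻¹ ≤ ((m:ℝ)+1)⁻¹ := nat_inv_anti (le_of_lt hcon)
        rw [hm2, hz, Real.dist_eq, sub_zero, abs_of_pos (inv_pos' m)] at hdsnd
        linarith
      have hfst : dist (x m) q.1.1 < δc := by
        have : q'.1.1 = x m := by rw [hm]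
        rwa [this] at hdfst
      rw [Subtype.dist_eq, cG_zero f x q hz, cG_orbit f x m q' hm]
      rw [Prod.dist_eq]
      apply max_lt
      · -- dist (x (m+1)) (f q.1.1)
        calc dist (x (m+1)) (f q.1.1)
            ≤ dist (x (m+1)) (f (x m)) + dist (f (x m)) (f q.1.1) := dist_triangle _ _ _
          _ < ε/2 + ε/2 := by
              apply add_lt_add
              · rw [dist_comm]; exact hN₁ m (le_trans (le_max_left _ _) hmN)
              · exact hδc' hfst
          _ = ε := by ring
      · -- second coordinate
        rw [Real.dist_eq, sub_zero, abs_of_pos (inv_pos' (m+1))]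
        have : ((m:ℝ)+1)+1 = ((m+1:ℕ):ℝ)+1 := by push_cast; ring
        apply hN₂ (m+1) (by omega)
  · -- q is an isolated orbit point
    refine ⟨((n:ℝ)+1)⁻¹ - ((n:ℝ)+2)⁻¹, gap_pos n, ?_⟩
    intro q' hq'
    have hd : dist q'.1 q.1 < ((n:ℝ)+1)⁻¹ - ((n:ℝ)+2)⁻¹ := by
      rw [← Subtype.dist_eq]; exact hq'
    have hdsnd : dist q'.1.2 q.1.2 < ((n:ℝ)+1)⁻¹ - ((n:ℝ)+2)⁻¹ := lt_of_le_of_lt (by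
      rw [Prod.dist_eq]; exact le_max_right _ _) hd
    have hq2 : q.1.2 = ((n:ℝ)+1)⁻¹ := by rw [hn]
    have hqq' : q' = q := by
      rcases cS_cases x q' with hz' | ⟨m, hm⟩
      · exfalso
        rw [hz', hq2, Real.dist_eq, zero_sub, abs_neg, abs_of_pos (inv_pos' n)] at hdsnd
        have := inv_pos' (n+1)
        have hc : ((n:ℝ)+1)+1 = ((n+1:ℕ):ℝ)+1 := by push_cast; ring
        have h2 : (0:ℝ) < ((n:ℝ)+2)⁻¹ := by positivity
        linarith
      · have hm2 : q'.1.2 = ((m:ℝ)+1)⁻¹ := by rw [hm]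
        have hmeqn : m = n := by
          by_contra hne
          have := gap_lemma hne
          rw [hm2, hq2, Real.dist_eq] at hdsnd
          linarith
        apply Subtype.ext
        rw [hm, hmeqn, hn]
    rw [hqq', dist_self]
    exact hε

end Construction2

section Construction3
variable {X : Type u} [MetricSpace X]

noncomputable def y0 (x : ℕ → X) : ↥(cS x) :=
  ⟨(x 0, ((↑(0:ℕ) : ℝ)+1)⁻¹), mem_cS_orbit x 0⟩

lemma cG_iterate (f : X → X) (x : ℕ → X) (m : ℕ) :
    (cG f x)^[m] (y0 x) = ⟨(x m, ((m:ℝ)+1)⁻¹), mem_cS_orbit x m⟩ := by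
  induction m with
  | zero => rfl
  | succ k ih =>
      rw [Function.iterate_succ_apply', ih, cG_orbit f x k _ rfl]

lemma omega_snd_zero (f : X → X) (x : ℕ → X) (q : ↥(cS x))
    (hq : q ∈ omegaLimitSet (cG f x) (y0 x)) : q.1.2 = 0 := by
  have hsnd : ∀ n : ℕ, q.1.2 ∈ Icc (0:ℝ) ((n:ℝ)+1)⁻¹ := by
    intro n
    have hqn : q ∈ closure {z : ↥(cS x) | ∃ m : ℕ, n ≤ m ∧ (cG f x)^[m] (y0 x) = z} :=
      mem_iInter.1 hq n
    have hcont : Continuous (fun p : ↥(cS x) => p.1.2) :=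
      continuous_snd.comp continuous_subtype_val
    have hmaps : MapsTo (fun p : ↥(cS x) => p.1.2)
        {z : ↥(cS x) | ∃ m : ℕ, n ≤ m ∧ (cG f x)^[m] (y0 x) = z}
        (Icc (0:ℝ) ((n:ℝ)+1)⁻¹) := by
      rintro z ⟨m, hm, rfl⟩
      rw [cG_iterate]
      exact ⟨le_of_lt (inv_pos' m), nat_inv_anti hm⟩
    have := map_mem_closure hcont hqn hmaps
    rwa [IsClosed.closure_eq isClosed_Icc] at this
  have h0 : 0 ≤ q.1.2 := (hsnd 0).1
  have hle : q.1.2 ≤ 0 := by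
    by_contra hcon
    push_neg at hcon
    obtain ⟨N, hN⟩ := inv_small1 hcon
    exact absurd ((hsnd N).2) (not_le.2 (hN N (le_refl N)))
  linarith

lemma omega_mem (f : X → X) (x : ℕ → X)
    (h2 : ∀ (p : X) (ε : ℝ), 0 < ε → ∀ N : ℕ, ∃ m ≥ N, dist (x m) p < ε) (p : X) :
    (⟨(p, 0), mem_cS_zero x p⟩ : ↥(cS x)) ∈ omegaLimitSet (cG f x) (y0 x) := by
  rw [omegaLimitSet, mem_iInter]
  intro n
  rw [Metric.mem_closure_iff]
  intro ε hε
  obtain ⟨Nε, hNε⟩ := inv_small1 hε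
  obtain ⟨m, hm, hdist⟩ := h2 p ε hε (max n Nε)
  refine ⟨(cG f x)^[m] (y0 x), ⟨m, le_trans (le_max_left _ _) hm, rfl⟩, ?_⟩
  rw [cG_iterate, Subtype.dist_eq, Prod.dist_eq]
  apply max_lt
  · rw [dist_comm]
    exact hdist
  · rw [Real.dist_eq, zero_sub, abs_neg, abs_of_pos (inv_pos' m)]
    exact hNε m (le_trans (le_max_right _ _) hm)

end Construction3




theorem abstract_of_wi {X : Type u} [TopologicalSpace X] [CompactSpace X] [T2Space X]
    [Nonempty X] [TopologicalSpace.MetrizableSpace X] (f : X → X) (hf : Continuous f)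
    (hwi : WeaklyIncompressible f) : AbstractOmegaLimit f := by
  letI : MetricSpace X := TopologicalSpace.metrizableSpaceMetric X
  obtain ⟨x, h1, h2⟩ := exists_pseudo_orbit f hf hwi
  haveI : CompactSpace ↥(cS x) := isCompact_iff_compactSpace.1 (isCompact_cS x)
  have homega_mem : ∀ q : ↥(cS x), q.1.2 = 0 → q ∈ omegaLimitSet (cG f x) (y0 x) := by
    intro q hz
    have hqeq : q = ⟨(q.1.1, 0), mem_cS_zero x q.1.1⟩ := by
      apply Subtype.ext
      rw [Prod.ext_iff]
      exact ⟨rfl, hz⟩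
    rw [hqeq]
    exact omega_mem f x h2 q.1.1
  let e : X ≃ ↥(omegaLimitSet (cG f x) (y0 x)) :=
  { toFun := fun p => ⟨⟨(p, 0), mem_cS_zero x p⟩, omega_mem f x h2 p⟩
    invFun := fun q => q.1.1.1
    left_inv := fun p => rfl
    right_inv := fun q => by
      apply Subtype.ext
      apply Subtype.ext
      have hz : q.1.1.2 = 0 := omega_snd_zero f x q.1 q.2
      rw [Prod.ext_iff]
      exact ⟨rfl, hz.symm⟩ }
  have he : Continuous e := by
    apply Continuous.subtype_mk
    apply Continuous.subtype_mk
    exact continuous_id.prodMk continuous_const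
  let H : X ≃ₜ ↥(omegaLimitSet (cG f x) (y0 x)) := Continuous.homeoOfEquivCompactToT2 (f := e) he
  refine ⟨↥(cS x), inferInstance, inferInstance, inferInstance, cG f x, y0 x,
    cG_cont f hf x h1, ?_, H, ?_⟩
  · intro q hq
    have hz := omega_snd_zero f x q hq
    rw [cG_zero f x q hz]
    exact homega_mem _ rfl
  · intro p
    show ((H (f p) : ↥(omegaLimitSet (cG f x) (y0 x))) : ↥(cS x)) = cG f x (H p)
    have hHp : ((H p : ↥(omegaLimitSet (cG f x) (y0 x))) : ↥(cS x)) =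
        ⟨(p, 0), mem_cS_zero x p⟩ := rfl
    have hHfp : ((H (f p) : ↥(omegaLimitSet (cG f x) (y0 x))) : ↥(cS x)) =
        ⟨(f p, 0), mem_cS_zero x (f p)⟩ := rfl
    rw [hHfp, hHp, cG_zero f x ⟨(p, 0), mem_cS_zero x p⟩ rfl]

/-- Bowen–Sharkovsky: a nonempty metrizable dynamical system is an abstract
ω-limit set iff it is weakly incompressible. -/
theorem abstractOmegaLimit_iff_weaklyIncompressible_of_metrizable
    {X : Type u} [TopologicalSpace X] [CompactSpace X] [T2Space X] [Nonempty X]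
    [TopologicalSpace.MetrizableSpace X]
    (f : X → X) (hf : Continuous f) :
    AbstractOmegaLimit f ↔ WeaklyIncompressible f := by
  constructor
  · exact wi_of_abstract f
  · exact abstract_of_wi f hf
end

section
/- Let (X,f) be a dynamical system. Then (X,f) is chain transitive if and only if f is weakly incompressible. -/
open Topology Set

/-- `(X, f)` is chain transitive: for all `a, b` and every open cover `𝒰` of `X`
there is a `𝒰`-chain from `a` to `b`. -/
def ChainTransitive {X : Type*} [TopologicalSpace X] (f : X → X) : Prop :=
  ∀ a b : X, ∀ 𝒰 : Set (Set X), (∀ U ∈ 𝒰, IsOpen U) → Set.univ ⊆ ⋃₀ 𝒰 →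
    ∃ (n : ℕ) (x : ℕ → X), 1 ≤ n ∧ x 0 = a ∧ x n = b ∧
      ∀ i < n, ∃ U ∈ 𝒰, f (x i) ∈ U ∧ x (i + 1) ∈ U

/-- A dynamical system is chain transitive iff it is weakly incompressible. -/
theorem chainTransitive_iff_weaklyIncompressible
    {X : Type u} [TopologicalSpace X] [CompactSpace X] [T2Space X]
    (f : X → X) (hf : Continuous f) :
    ChainTransitive f ↔ WeaklyIncompressible f := by
  constructor
  · intro hct U hU hne hneU hsub
    obtain ⟨a, ha⟩ := hne
    obtain ⟨b, hb⟩ : ∃ b, b ∉ U := by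
      by_contra h
      push_neg at h
      exact hneU (Set.eq_univ_of_forall h)
    set K := f '' closure U with hK
    have hKcl : IsClosed K := (IsClosed.isCompact isClosed_closure).image hf |>.isClosed
    obtain ⟨n, x, hn, hx0, hxn, hchain⟩ := hct a b {U, Kᶜ}
      (by rintro V (rfl | rfl)
          · exact hU
          · exact hKcl.isOpen_compl)
      (by intro y _
          by_cases hy : y ∈ K
          · exact ⟨U, Or.inl rfl, hsub hy⟩
          · exact ⟨Kᶜ, Or.inr rfl, hy⟩)
    have key : ∀ i, i ≤ n → x i ∈ U := by
      intro i
      induction i with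
      | zero => intro _; rw [hx0]; exact ha
      | succ k ih =>
        intro hk
        have hk' : k < n := Nat.lt_of_succ_le hk
        have hxk := ih (le_of_lt hk')
        obtain ⟨V, hV, hfV, hxV⟩ := hchain k hk'
        rcases hV with rfl | rfl
        · exact hxV
        · exact absurd (⟨x k, subset_closure hxk, rfl⟩ : f (x k) ∈ K) hfV
    exact hb (hxn ▸ key n le_rfl)
  · intro hwi a b 𝒰 hopen hcover
    set R := {c : X | ∃ n, ∃ x : ℕ → X, 1 ≤ n ∧ x 0 = a ∧ x n = c ∧
      ∀ i < n, ∃ U ∈ 𝒰, f (x i) ∈ U ∧ x (i + 1) ∈ U} with hR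
    -- R is nonempty
    obtain ⟨U0, hU0, hfa⟩ := Set.mem_sUnion.mp (hcover (Set.mem_univ (f a)))
    have hRne : R.Nonempty := by
      refine ⟨f a, 1, fun i => if i = 0 then a else f a, le_rfl, by simp, by simp, ?_⟩
      intro i hi
      interval_cases i
      exact ⟨U0, hU0, by simpa using hfa, by simpa using hfa⟩
    -- R is open
    have hRopen : IsOpen R := by
      rw [isOpen_iff_forall_mem_open]
      rintro c ⟨n, x, hn, hx0, hxn, hchain⟩
      have hn1 : n - 1 < n := Nat.sub_lt hn one_pos
      obtain ⟨U, hU, hfU, hxU⟩ := hchain (n - 1) hn1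
      have hsucc : n - 1 + 1 = n := Nat.succ_pred_eq_of_pos hn
      have hcU : c ∈ U := by rw [← hxn, ← hsucc]; exact hxU
      refine ⟨U, ?_, hopen U hU, hcU⟩
      intro b' hb'
      refine ⟨n, fun i => if i = n then b' else x i, hn, ?_, by simp, ?_⟩
      · beta_reduce; rw [if_neg (by omega), hx0]
      · intro i hi
        by_cases h : i + 1 = n
        · refine ⟨U, hU, ?_, by simpa [h] using hb'⟩
          have hieq : i = n - 1 := by omega
          beta_reduce; rw [if_neg hi.ne, hieq]
          exact hfU
        · obtain ⟨V, hV, h1, h2⟩ := hchain i hi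
          exact ⟨V, hV, by beta_reduce; rw [if_neg hi.ne]; exact h1, by beta_reduce; rw [if_neg h]; exact h2⟩
    -- f(cl R) ⊆ R
    have hsub : f '' closure R ⊆ R := by
      rintro _ ⟨y, hy, rfl⟩
      obtain ⟨U, hU, hfy⟩ := Set.mem_sUnion.mp (hcover (Set.mem_univ (f y)))
      obtain ⟨c, hcU, hcR⟩ :=
        mem_closure_iff.mp hy (f ⁻¹' U) ((hopen U hU).preimage hf) hfy
      obtain ⟨n, x, hn, hx0, hxn, hchain⟩ := hcR
      refine ⟨n + 1, fun i => if i = n + 1 then f y else x i, by omega, ?_, by simp, ?_⟩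
      · beta_reduce; rw [if_neg (by omega), hx0]
      · intro i hi
        by_cases h : i = n
        · subst h
          refine ⟨U, hU, ?_, by simpa using hfy⟩
          beta_reduce; rw [if_neg (by omega), hxn]
          exact hcU
        · have hi' : i < n := by omega
          obtain ⟨V, hV, h1, h2⟩ := hchain i hi'
          exact ⟨V, hV, by beta_reduce; rw [if_neg (by omega)]; exact h1,
            by beta_reduce; rw [if_neg (by omega)]; exact h2⟩
    have hRuniv : R = Set.univ := by
      by_contra h
      exact hwi R hRopen hRne h hsub
    have : b ∈ R := hRuniv.symm ▸ Set.mem_univ b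
    exact this
end

section
/- Let (X,f) be a dynamical system. If (X,f) is a quotient of (ω*,σ), then f is weakly incompressible. -/
open Topology Set

lemma free_le_cofinite {p : Ultrafilter ℕ} (hp : ∀ n : ℕ, p ≠ pure n) :
    (p : Filter ℕ) ≤ Filter.cofinite := by
  rcases p.le_cofinite_or_eq_pure with h | ⟨a, ha⟩
  · exact h
  · exact absurd ha (hp a)

lemma cofinite_mem_free {p : Ultrafilter ℕ} (hp : ∀ n : ℕ, p ≠ pure n)
    {A : Set ℕ} (hA : Aᶜ.Finite) : A ∈ p :=
  free_le_cofinite hp (Filter.mem_cofinite.mpr hA)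

lemma exists_free_ultrafilter_mem {S : Set ℕ} (hS : S.Infinite) :
    ∃ p : Ultrafilter ℕ, (∀ n : ℕ, p ≠ pure n) ∧ S ∈ p := by
  have : (Filter.cofinite ⊓ Filter.principal S).NeBot :=
    Filter.cofinite_inf_principal_neBot_iff.mpr hS
  obtain ⟨u, hu⟩ := Filter.exists_ultrafilter_le (Filter.cofinite ⊓ Filter.principal S)
  refine ⟨u, ?_, (hu.trans inf_le_right) (Filter.mem_principal_self S)⟩
  intro n hn
  have h1 : ({n}ᶜ : Set ℕ) ∈ u := (hu.trans inf_le_left) (Filter.mem_cofinite.mpr (by simp))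
  rw [hn] at h1
  simp at h1

lemma isClosed_omegaStar : IsClosed {p : Ultrafilter ℕ | ∀ n : ℕ, p ≠ pure n} := by
  rw [← isOpen_compl_iff]
  have : {p : Ultrafilter ℕ | ∀ n : ℕ, p ≠ pure n}ᶜ = ⋃ n : ℕ, {p : Ultrafilter ℕ | {n} ∈ p} := by
    ext p
    simp only [mem_compl_iff, mem_setOf_eq, not_forall, not_not, mem_iUnion]
    constructor
    · rintro ⟨n, rfl⟩; exact ⟨n, rfl⟩
    · rintro ⟨n, hn⟩
      obtain ⟨x, hx, hpx⟩ := Ultrafilter.eq_pure_of_finite_mem (Set.finite_singleton n) hn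
      rcases hx with rfl
      exact ⟨x, hpx⟩
  rw [this]
  exact isOpen_iUnion fun n => ultrafilter_isOpen_basic _

instance : CompactSpace OmegaStar :=
  isCompact_iff_compactSpace.mp isClosed_omegaStar.isCompact

lemma shiftMap_surjective : Function.Surjective shiftMap := by
  intro p
  have hfree : ∀ n : ℕ, Ultrafilter.map Nat.pred p.1 ≠ pure n := by
    intro n hn
    have h1 : Nat.pred ⁻¹' {n} ∈ p.1 := by
      refine Ultrafilter.mem_map.mp ?_
      rw [hn]; exact rfl
    have h2 : (Nat.pred ⁻¹' {n} : Set ℕ).Finite := by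
      apply ((Set.finite_singleton (n + 1)).insert n).subset
      intro m hm
      simp only [mem_preimage, mem_singleton_iff] at hm
      rcases m with _ | k <;> simp_all
    obtain ⟨x, _, hx⟩ := Ultrafilter.eq_pure_of_finite_mem h2 h1
    exact p.2 x hx
  refine ⟨⟨Ultrafilter.map Nat.pred p.1, hfree⟩, ?_⟩
  apply Subtype.ext
  show Ultrafilter.map (· + 1) (Ultrafilter.map Nat.pred p.1) = p.1
  rw [Ultrafilter.map_map]
  apply Ultrafilter.coe_injective
  rw [Ultrafilter.coe_map]
  have hev : ((· + 1) ∘ Nat.pred) =ᶠ[(p.1 : Filter ℕ)] id := by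
    have hc : ({0}ᶜ : Set ℕ) ∈ p.1 := cofinite_mem_free p.2 (by simp)
    filter_upwards [hc] with m hm
    rcases m with _ | k
    · simp at hm
    · rfl
  rw [Filter.map_congr hev, Filter.map_id]

lemma isOpen_star (B : Set ℕ) : IsOpen {q : OmegaStar | B ∈ q.1} :=
  (ultrafilter_isOpen_basic B).preimage continuous_subtype_val

/-- Every quotient of `(ω*, σ)` is weakly incompressible. -/
theorem weaklyIncompressible_of_isQuotientOfShift
    {X : Type u} [TopologicalSpace X] [CompactSpace X] [T2Space X]
    (f : X → X) (hf : Continuous f) (h : IsQuotientOfShift f) :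
    WeaklyIncompressible f := by
  obtain ⟨Q, hQc, hQs, hQσ⟩ := h
  intro U hUopen hUne hUuniv hcon
  set V : Set OmegaStar := Q ⁻¹' U with hV
  have hVopen : IsOpen V := hUopen.preimage hQc
  have hσ : ∀ p ∈ closure V, shiftMap p ∈ V := by
    intro p hp
    have h1 : Q p ∈ closure U := by
      have hsub : closure V ⊆ Q ⁻¹' closure U :=
        closure_minimal (preimage_mono subset_closure) (isClosed_closure.preimage hQc)
      exact hsub hp
    have h2 : f (Q p) ∈ U := hcon ⟨Q p, h1, rfl⟩
    show Q (shiftMap p) ∈ U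
    rw [hQσ p]; exact h2
  -- For each p in closure V, find a basic set B with B ∈ p and star B ⊆ σ⁻¹ V
  have hbasic : ∀ p ∈ closure V, ∃ B : Set ℕ, B ∈ p.1 ∧
      ∀ q : OmegaStar, B ∈ q.1 → shiftMap q ∈ V := by
    intro p hp
    have hσp : shiftMap p ∈ V := hσ p hp
    obtain ⟨O, hO, hVO⟩ := isOpen_induced_iff.mp hVopen
    have h1 : (shiftMap p).1 ∈ O := by
      rw [← hVO] at hσp; exact hσp
    obtain ⟨t, ht, hmem, hsub⟩ := ultrafilterBasis_is_basis.exists_subset_of_mem_open h1 hO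
    obtain ⟨A, rfl⟩ := ht
    refine ⟨(· + 1) ⁻¹' A, Ultrafilter.mem_map.mp hmem, ?_⟩
    intro q hq
    have : (shiftMap q).1 ∈ O := hsub (Ultrafilter.mem_map.mpr hq)
    rw [← hVO]; exact this
  classical
  choose! B hB1 hB2 using hbasic
  have hK : IsCompact (closure V) := isClosed_closure.isCompact
  have hcover : closure V ⊆ ⋃ p : closure V, {q : OmegaStar | B p.1 ∈ q.1} := by
    intro q hq
    exact mem_iUnion.mpr ⟨⟨q, hq⟩, hB1 q hq⟩
  obtain ⟨t, hts⟩ := hK.elim_finite_subcover (fun p : closure V => {q : OmegaStar | B p.1 ∈ q.1})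
    (fun p => isOpen_star _) hcover
  set A : Set ℕ := ⋃ i ∈ (t : Set (closure V)), B i.1 with hA
  -- closure V ⊆ star A
  have hclA : ∀ q ∈ closure V, A ∈ q.1 := by
    intro q hq
    obtain ⟨i, hit, hqi⟩ := Set.mem_iUnion₂.mp (hts hq)
    exact Filter.mem_of_superset hqi
      (Set.subset_biUnion_of_mem (u := fun i => B i.1) (Finset.mem_coe.mpr hit))
  -- star A maps into V under σ
  have hAV : ∀ q : OmegaStar, A ∈ q.1 → shiftMap q ∈ V := by
    intro q hq
    rw [hA, Ultrafilter.finite_biUnion_mem_iff t.finite_toSet] at hq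
    obtain ⟨i, hit, hqi⟩ := hq
    exact hB2 i.1 i.2 q hqi
  -- the "boundary" set is finite
  have hSfin : {a | a ∈ A ∧ a + 1 ∉ A}.Finite := by
    by_contra hSinf
    obtain ⟨u, hufree, huS⟩ := exists_free_ultrafilter_mem hSinf
    have huA : A ∈ u := Filter.mem_of_superset huS fun a ha => ha.1
    have h1 : shiftMap ⟨u, hufree⟩ ∈ V := hAV ⟨u, hufree⟩ huA
    have h2 : A ∈ (shiftMap ⟨u, hufree⟩).1 := hclA _ (subset_closure h1)
    have h3 : (· + 1) ⁻¹' A ∈ u := Ultrafilter.mem_map.mp h2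
    have h4 : {a | a ∈ A ∧ a + 1 ∉ A} ∩ ((· + 1) ⁻¹' A) ∈ u := Filter.inter_mem huS h3
    have h5 : {a | a ∈ A ∧ a + 1 ∉ A} ∩ ((· + 1) ⁻¹' A) = ∅ := by
      ext a; simp only [mem_inter_iff, mem_setOf_eq, mem_preimage, mem_empty_iff_false,
        iff_false]
      rintro ⟨⟨_, h⟩, h'⟩; exact h h'
    rw [h5] at h4
    exact Ultrafilter.empty_notMem h4
  -- A is infinite
  have hAinf : A.Infinite := by
    obtain ⟨x, hxU⟩ := hUne
    obtain ⟨p, rfl⟩ := hQs x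
    have hpA : A ∈ p.1 := hclA p (subset_closure hxU)
    intro hfin
    obtain ⟨y, _, hy⟩ := Ultrafilter.eq_pure_of_finite_mem hfin hpA
    exact p.2 y hy
  -- A is cofinite
  have hAcof : Aᶜ.Finite := by
    obtain ⟨N, hN⟩ := hSfin.bddAbove
    obtain ⟨a₀, ha₀A, ha₀N⟩ := hAinf.exists_gt N
    have htail : ∀ m : ℕ, a₀ + m ∈ A := by
      intro m
      induction m with
      | zero => simpa using ha₀A
      | succ k ih =>
        by_contra hnot
        have : a₀ + k ∈ {a | a ∈ A ∧ a + 1 ∉ A} := ⟨ih, by rwa [Nat.add_assoc]⟩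
        have := hN this
        omega
    apply (Set.finite_Iio a₀).subset
    intro m hm
    simp only [mem_Iio]
    by_contra hge
    push_neg at hge
    exact hm (by simpa [Nat.add_sub_cancel' hge] using htail (m - a₀))
  -- conclude
  have hall : ∀ q : OmegaStar, shiftMap q ∈ V := fun q =>
    hAV q (cofinite_mem_free q.2 hAcof)
  obtain ⟨x, hx⟩ : ∃ x, x ∉ U := by
    by_contra hnx; push_neg at hnx
    exact hUuniv (Set.eq_univ_of_forall hnx)
  obtain ⟨p, rfl⟩ := hQs x
  obtain ⟨q, rfl⟩ := shiftMap_surjective p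
  exact hx (hall q)
end

section
/- Let X be a compact Hausdorff space and f : X → X a homeomorphism. Then f is weakly incompressible if and only if f⁻¹ is weakly incompressible. -/
lemma weaklyIncompressible_symm_aux {X : Type*} [TopologicalSpace X] (f : X ≃ₜ X)
    (hf : WeaklyIncompressible (f : X → X)) :
    WeaklyIncompressible (f.symm : X → X) := by
  intro U hU hne hUniv hsub
  -- hsub : f.symm '' closure U ⊆ U, i.e. f ⁻¹' closure U ⊆ U
  have hpre : (f : X → X) ⁻¹' closure U ⊆ U := by
    intro x hx
    exact hsub ⟨f x, hx, f.symm_apply_apply x⟩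
  set V : Set X := (closure U)ᶜ with hV
  have hVopen : IsOpen V := isClosed_closure.isOpen_compl
  have hVne : V.Nonempty := by
    rw [Set.nonempty_compl]
    intro h
    apply hUniv
    apply Set.eq_univ_of_univ_subset
    calc Set.univ = (f : X → X) ⁻¹' closure U := by rw [h]; simp
      _ ⊆ U := hpre
  have hVuniv : V ≠ Set.univ := by
    intro h
    have : closure U = ∅ := by
      rw [hV, Set.compl_univ_iff] at h
      exact h
    rcases hne with ⟨x, hx⟩
    have : x ∈ closure U := subset_closure hx
    simp_all
  refine hf V hVopen hVne hVuniv ?_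
  rintro _ ⟨x, hx, rfl⟩
  have hx' : x ∈ Uᶜ := fun hxu => by
    have : (closure U)ᶜ ⊆ Uᶜ := Set.compl_subset_compl.mpr subset_closure
    have hclV : closure V ⊆ Uᶜ := closure_minimal this hU.isClosed_compl
    exact hclV hx hxu
  -- x ∈ Uᶜ ⊆ (f ⁻¹' closure U)ᶜ, so f x ∈ (closure U)ᶜ = V
  have : x ∉ (f : X → X) ⁻¹' closure U := fun h => hx' (hpre h)
  exact this

/-- A homeomorphism of a compact Hausdorff space is weakly incompressible iff
its inverse is. -/
theorem weaklyIncompressible_iff_weaklyIncompressible_symm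
    {X : Type u} [TopologicalSpace X] [CompactSpace X] [T2Space X] (f : X ≃ₜ X) :
    WeaklyIncompressible (f : X → X) ↔ WeaklyIncompressible (f.symm : X → X) := by
  constructor
  · exact weaklyIncompressible_symm_aux f
  · intro h
    simpa using weaklyIncompressible_symm_aux f.symm h
end

section
/- Let κ be an infinite cardinal and let Y be a nonempty compact Hausdorff space of weight κ. Then there exist a compact Hausdorff space X of weight κ, a weakly incompressible continuous map f : X → X, and a topological embedding e : Y → X whose image e(Y) is clopen in X. -/
open Topology

open OnePoint Set TopologicalSpace

universe u

variable {Y : Type u} [TopologicalSpace Y] [CompactSpace Y] [T2Space Y] [Nonempty Y]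

/-- The shift homeomorphism on `Y × ℤ`. -/
def shiftHomeo (Y : Type u) [TopologicalSpace Y] : (Y × ℤ) ≃ₜ (Y × ℤ) where
  toFun z := (z.1, z.2 + 1)
  invFun z := (z.1, z.2 - 1)
  left_inv z := by simp
  right_inv z := by simp
  continuous_toFun :=
    continuous_fst.prodMk ((continuous_of_discreteTopology (f := fun n : ℤ => n + 1)).comp continuous_snd)
  continuous_invFun :=
    continuous_fst.prodMk ((continuous_of_discreteTopology (f := fun n : ℤ => n - 1)).comp continuous_snd)

lemma shift_weaklyIncompressible :
    WeaklyIncompressible (⇑(shiftHomeo Y).onePointCongr) := by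
  set f := ⇑(shiftHomeo Y).onePointCongr with hf
  have hfc : ∀ z : Y × ℤ, f ↑z = ↑((z.1, z.2 + 1) : Y × ℤ) := fun z => by
    simp [hf, Homeomorph.onePointCongr, shiftHomeo]
  have hfi : f ∞ = ∞ := by simp [hf, Homeomorph.onePointCongr]; rfl
  intro U hU hne hproper hsub
  by_cases hinf : ∞ ∈ U
  · have hKc : IsCompact (((↑) ⁻¹' U : Set (Y × ℤ))ᶜ) :=
      ((OnePoint.isOpen_iff_of_mem' hinf).mp hU).1
    have hKne : (((↑) ⁻¹' U : Set (Y × ℤ))ᶜ).Nonempty := by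
      obtain ⟨x, hx⟩ := (Set.ne_univ_iff_exists_notMem U).mp hproper
      induction x using OnePoint.rec with
      | infty => exact (hx hinf).elim
      | coe z => exact ⟨z, hx⟩
    obtain ⟨z, hzK, hzmin⟩ := hKc.exists_isMinOn hKne continuous_snd.continuousOn
    have hmem : ((z.1, z.2 - 1) : Y × ℤ) ∈ ((↑) ⁻¹' U : Set (Y × ℤ))ᶜ := by
      by_contra h
      have h1 : ((↑((z.1, z.2 - 1) : Y × ℤ)) : OnePoint (Y × ℤ)) ∈ closure U :=
        subset_closure (not_not.mp h)
      have h3 : f ↑((z.1, z.2 - 1) : Y × ℤ) ∈ U := hsub ⟨_, h1, rfl⟩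
      rw [hfc] at h3
      simp only [sub_add_cancel] at h3
      exact hzK h3
    have h5 := isMinOn_iff.mp hzmin _ hmem
    simp only at h5
    omega
  · have hinfc : ∞ ∉ closure U := by
      intro h
      have : f ∞ ∈ U := hsub ⟨∞, h, rfl⟩
      rw [hfi] at this
      exact hinf this
    have hsubr : closure U ⊆ Set.range ((↑) : Y × ℤ → OnePoint (Y × ℤ)) := by
      intro x hx
      induction x using OnePoint.rec with
      | infty => exact (hinfc hx).elim
      | coe z => exact ⟨z, rfl⟩
    have hCcomp : IsCompact ((↑) ⁻¹' closure U : Set (Y × ℤ)) := by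
      rw [isOpenEmbedding_coe.isEmbedding.isCompact_iff]
      rw [Set.image_preimage_eq_of_subset hsubr]
      exact isClosed_closure.isCompact
    have hCne : ((↑) ⁻¹' closure U : Set (Y × ℤ)).Nonempty := by
      obtain ⟨x, hx⟩ := hne
      have hx' : x ∈ closure U := subset_closure hx
      obtain ⟨z, rfl⟩ := hsubr hx'
      exact ⟨z, hx'⟩
    obtain ⟨z, hzC, hzmax⟩ := hCcomp.exists_isMaxOn hCne continuous_snd.continuousOn
    have h3 : f ↑z ∈ U := hsub ⟨_, hzC, rfl⟩
    rw [show (z : Y × ℤ) = (z.1, z.2) from rfl, hfc] at h3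
    have h4 : ((z.1, z.2 + 1) : Y × ℤ) ∈ ((↑) ⁻¹' closure U : Set (Y × ℤ)) :=
      subset_closure h3
    have h5 := isMaxOn_iff.mp hzmax _ h4
    simp only at h5
    omega

lemma isTopologicalBasis_onePointShift {BZ : Set (Set (Y × ℤ))}
    (hBZ : IsTopologicalBasis BZ) :
    IsTopologicalBasis
      (((fun s : Set (Y × ℤ) => ((↑) '' s : Set (OnePoint (Y × ℤ)))) '' BZ) ∪
        (Set.range fun n : ℕ =>
          ({∞} ∪ (↑) '' ((univ ×ˢ (Set.Icc (-(n:ℤ)) (n:ℤ)) : Set (Y × ℤ))ᶜ)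
            : Set (OnePoint (Y × ℤ))))) := by
  refine isTopologicalBasis_of_isOpen_of_nhds ?_ ?_
  · rintro v (⟨s, hs, rfl⟩ | ⟨n, rfl⟩)
    · exact isOpenMap_coe _ (hBZ.isOpen hs)
    · have hpre : (((↑) : Y × ℤ → OnePoint (Y × ℤ)) ⁻¹' ({∞} ∪ (↑) ''
          ((univ ×ˢ (Set.Icc (-(n:ℤ)) (n:ℤ)) : Set (Y × ℤ))ᶜ)))
          = ((univ ×ˢ (Set.Icc (-(n:ℤ)) (n:ℤ)) : Set (Y × ℤ)))ᶜ := by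
        rw [Set.preimage_union, Set.preimage_image_eq _ coe_injective]
        ext z
        simp [OnePoint.coe_ne_infty]
      show IsOpen (({∞} ∪ (↑) '' ((univ ×ˢ (Set.Icc (-(n:ℤ)) (n:ℤ)) : Set (Y × ℤ))ᶜ)) : Set (OnePoint (Y × ℤ)))
      refine (OnePoint.isOpen_iff_of_mem'
        (Set.mem_union_left _ (Set.mem_singleton _))).mpr ?_
      rw [hpre, compl_compl]
      refine ⟨isCompact_univ.prod ?_, isOpen_compl_iff.mpr ?_⟩
      · exact Set.finite_Icc _ _ |>.isCompact
      · exact isClosed_univ.prod (isClosed_discrete _)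
  · rintro a u hau hu
    induction a using OnePoint.rec with
    | infty =>
      obtain ⟨hcomp, -⟩ := (OnePoint.isOpen_iff_of_mem' hau).mp hu
      have hfin : ((Prod.snd '' (((↑) ⁻¹' u : Set (Y × ℤ))ᶜ))).Finite :=
        (hcomp.image continuous_snd).finite_of_discrete
      obtain ⟨n, hn⟩ := (hfin.image Int.natAbs).bddAbove
      refine ⟨{∞} ∪ (↑) '' ((univ ×ˢ (Set.Icc (-(n:ℤ)) (n:ℤ)) : Set (Y × ℤ))ᶜ),
        Set.mem_union_right _ ⟨n, rfl⟩, Set.mem_union_left _ rfl, ?_⟩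
      rintro x (rfl | ⟨z, hz, rfl⟩)
      · exact hau
      · by_contra hzu
        have hzK : z ∈ (((↑) ⁻¹' u : Set (Y × ℤ))ᶜ) := hzu
        have h1 : z.2.natAbs ∈ Int.natAbs '' (Prod.snd '' (((↑) ⁻¹' u : Set (Y × ℤ))ᶜ)) :=
          ⟨z.2, ⟨z, hzK, rfl⟩, rfl⟩
        have h2 := hn h1
        refine hz ⟨Set.mem_univ _, ?_⟩
        simp only [Set.mem_Icc]
        omega
    | coe z =>
      obtain ⟨s, hsB, hzs, hsub'⟩ := hBZ.exists_subset_of_mem_open hau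
        (hu.preimage OnePoint.continuous_coe)
      refine ⟨(↑) '' s, Set.mem_union_left _ ⟨s, hsB, rfl⟩, ⟨z, hzs, rfl⟩, ?_⟩
      rintro x ⟨w, hw, rfl⟩
      exact hsub' hw

lemma tweight_le_mk {α : Type*} [TopologicalSpace α] {B : Set (Set α)}
    (hB : IsTopologicalBasis B) : tweight α ≤ Cardinal.mk B := by
  have : Nonempty {B : Set (Set α) // IsTopologicalBasis B} :=
    ⟨⟨{s | IsOpen s}, isTopologicalBasis_opens⟩⟩
  exact ciInf_le (OrderBot.bddBelow _) (⟨B, hB⟩ : {B : Set (Set α) // IsTopologicalBasis B})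

lemma exists_basis_tweight (α : Type*) [TopologicalSpace α] :
    ∃ B : Set (Set α), IsTopologicalBasis B ∧ Cardinal.mk B = tweight α := by
  have hne : Nonempty {B : Set (Set α) // IsTopologicalBasis B} :=
    ⟨⟨{s | IsOpen s}, isTopologicalBasis_opens⟩⟩
  obtain ⟨B, hB⟩ := csInf_mem (Set.range_nonempty
    (fun B : {B : Set (Set α) // IsTopologicalBasis B} => Cardinal.mk B.1))
  exact ⟨B.1, B.2, hB⟩

lemma le_tweight_of_isEmbedding {α β : Type u} [TopologicalSpace α] [TopologicalSpace β]
    {e : α → β} (he : IsEmbedding e) : tweight α ≤ tweight β := by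
  have : Nonempty {B : Set (Set β) // IsTopologicalBasis B} :=
    ⟨⟨{s | IsOpen s}, isTopologicalBasis_opens⟩⟩
  refine le_ciInf fun B => ?_
  calc tweight α ≤ Cardinal.mk ((e ⁻¹' ·) '' B.1) :=
        tweight_le_mk (B.2.isInducing he.toIsInducing)
    _ ≤ Cardinal.mk B.1 := Cardinal.mk_image_le

/-- Every nonempty compact Hausdorff space `Y` of infinite weight `κ` embeds as a
clopen subset of a compact Hausdorff space `X` of weight `κ` carrying a weakly
incompressible continuous self-map. -/
theorem exists_weaklyIncompressible_clopen_embedding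
    {Y : Type u} [TopologicalSpace Y] [CompactSpace Y] [T2Space Y] [Nonempty Y]
    (κ : Cardinal.{u}) (hκ : Cardinal.aleph0 ≤ κ) (hw : tweight Y = κ) :
    ∃ (X : Type u) (_ : TopologicalSpace X) (_ : CompactSpace X) (_ : T2Space X)
      (f : X → X) (e : Y → X),
      tweight X = κ ∧ Continuous f ∧ WeaklyIncompressible f ∧
      IsEmbedding e ∧ IsClopen (Set.range e) := by
  classical
  let e : Y → OnePoint (Y × ℤ) := fun y => ((y, (0:ℤ)) : Y × ℤ)
  have hec : Continuous e :=
    OnePoint.continuous_coe.comp (continuous_id.prodMk continuous_const)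
  have hei : Function.Injective e := by
    intro a b h
    have h2 := coe_injective h
    exact (Prod.ext_iff.mp h2).1
  have hce := hec.isClosedEmbedding hei
  have hrange : Set.range e = (↑) '' ((univ : Set Y) ×ˢ ({(0:ℤ)} : Set ℤ)) := by
    ext x
    constructor
    · rintro ⟨y, rfl⟩; exact ⟨(y, 0), ⟨mem_univ _, rfl⟩, rfl⟩
    · rintro ⟨⟨y, n⟩, ⟨-, hn⟩, rfl⟩
      cases hn
      exact ⟨y, rfl⟩
  have hopen : IsOpen (Set.range e) := by
    rw [hrange]
    exact isOpenMap_coe _ (isOpen_univ.prod (isOpen_discrete _))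
  have htw : tweight (OnePoint (Y × ℤ)) = κ := by
    apply le_antisymm
    · obtain ⟨BY, hBY, hBYc⟩ := exists_basis_tweight Y
      rw [hw] at hBYc
      set BZ := Set.image2 (· ×ˢ ·) BY {s : Set ℤ | ∃ n : ℤ, s = {n}} with hBZdef
      have hBZ : IsTopologicalBasis BZ := hBY.prod (isTopologicalBasis_singletons ℤ)
      have hbasis := isTopologicalBasis_onePointShift hBZ
      have hBZle : Cardinal.mk BZ ≤ κ := by
        have hsub2 : (BZ : Set (Set (Y × ℤ))) ⊆ Set.range
            (fun p : BY × ULift.{u} ℤ => (p.1.1 ×ˢ ({p.2.down} : Set ℤ))) := by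
          rintro w ⟨a, ha, b, hb, rfl⟩
          obtain ⟨n, rfl⟩ := hb
          exact ⟨(⟨a, ha⟩, ⟨n⟩), rfl⟩
        refine le_trans (Cardinal.mk_le_mk_of_subset hsub2) ?_
        refine le_trans Cardinal.mk_range_le ?_
        have : Cardinal.mk (↥BY × ULift.{u} ℤ) = Cardinal.mk BY * Cardinal.aleph0 := by
          simp [Cardinal.mk_prod]
        rw [this, hBYc]
        exact le_of_eq (Cardinal.mul_eq_left hκ hκ Cardinal.aleph0_ne_zero)
      refine le_trans (tweight_le_mk hbasis) ?_
      refine le_trans (Cardinal.mk_union_le _ _) ?_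
      have h1 : Cardinal.mk ((fun s : Set (Y × ℤ) =>
          ((↑) '' s : Set (OnePoint (Y × ℤ)))) '' BZ) ≤ κ :=
        le_trans Cardinal.mk_image_le hBZle
      have h2 : Cardinal.mk (Set.range fun n : ℕ =>
          ({∞} ∪ (↑) '' ((univ ×ˢ (Set.Icc (-(n:ℤ)) (n:ℤ)) : Set (Y × ℤ))ᶜ)
            : Set (OnePoint (Y × ℤ)))) ≤ Cardinal.aleph0 := by
        have hr : (Set.range fun n : ℕ =>
            ({∞} ∪ (↑) '' ((univ ×ˢ (Set.Icc (-(n:ℤ)) (n:ℤ)) : Set (Y × ℤ))ᶜ)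
              : Set (OnePoint (Y × ℤ)))) = Set.range ((fun n : ℕ =>
            ({∞} ∪ (↑) '' ((univ ×ˢ (Set.Icc (-(n:ℤ)) (n:ℤ)) : Set (Y × ℤ))ᶜ)
              : Set (OnePoint (Y × ℤ)))) ∘ (ULift.down : ULift.{u} ℕ → ℕ)) := by
          rw [Set.range_comp, ULift.down_surjective.range_eq, Set.image_univ]
        rw [hr]
        refine le_trans Cardinal.mk_range_le ?_
        simp
      calc _ ≤ κ + Cardinal.aleph0 := add_le_add h1 h2
        _ = κ := Cardinal.add_eq_left hκ hκ
    · rw [← hw]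
      exact le_tweight_of_isEmbedding hce.isEmbedding
  exact ⟨OnePoint (Y × ℤ), inferInstance, inferInstance, inferInstance,
    ⇑(shiftHomeo Y).onePointCongr, e, htw, (shiftHomeo Y).onePointCongr.continuous,
    shift_weaklyIncompressible, hce.isEmbedding, hce.isClosed_range, hopen⟩
end

section
/- Let κ be an infinite cardinal. Suppose that every dynamical system (X,f) with X nonempty, the weight of X at most κ, and f weakly incompressible is a quotient of (ω*,σ). Then every nonempty compact Hausdorff space of weight at most κ is a continuous image of ω*, i.e., admits a continuous surjection from ω*. -/
open Topology Set

open Topology Set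

section aux

universe u

variable {Y : Type u} [TopologicalSpace Y]

/-- The shift on `ℕ → Y`. -/
def piShift (x : ℕ → Y) : ℕ → Y := fun k => x (k + 1)

lemma piShift_iterate (x : ℕ → Y) (n k : ℕ) : (piShift^[n] x) k = x (k + n) := by
  induction n generalizing x k with
  | zero => rfl
  | succ n ih =>
    rw [Function.iterate_succ_apply, ih]
    simp [piShift, Nat.add_assoc, Nat.add_comm 1 n]

lemma piShift_continuous : Continuous (piShift (Y := Y)) :=
  continuous_pi fun k => continuous_apply (k + 1)

lemma piShift_wi : WeaklyIncompressible (piShift (Y := Y)) := by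
  intro U hU hne hneq hsub
  -- U is forward invariant
  have hinv : ∀ x ∈ U, piShift x ∈ U := fun x hx =>
    hsub ⟨x, subset_closure hx, rfl⟩
  have hiter : ∀ n, ∀ x ∈ U, piShift^[n] x ∈ U := by
    intro n
    induction n with
    | zero => intro x hx; exact hx
    | succ n ih =>
      intro x hx
      rw [Function.iterate_succ_apply]
      exact ih _ (hinv x hx)
  obtain ⟨x, hx⟩ := hne
  obtain ⟨z, hz⟩ : ∃ z, z ∉ U := by
    by_contra h
    push_neg at h
    exact hneq (Set.eq_univ_of_forall h)
  obtain ⟨I, u, h1, h2⟩ := isOpen_pi_iff.mp hU x hx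
  set n := (I.sup id) + 1 with hn
  set w : ℕ → Y := fun k => if k < n then x k else z (k - n) with hw
  have hwU : w ∈ U := by
    apply h2
    intro i hi
    have : i < n := Nat.lt_succ_of_le (Finset.le_sup (f := id) hi)
    simp only [hw, if_pos this]
    exact (h1 i hi).2
  have : piShift^[n] w = z := by
    funext k
    rw [piShift_iterate]
    have : ¬ (k + n < n) := by omega
    simp only [hw, if_neg this, Nat.add_sub_cancel]
  exact hz (this ▸ hiter n w hwU)

end aux

open TopologicalSpace in
lemma tweight_le_of_basis {X : Type u} [TopologicalSpace X]
    {B : Set (Set X)} (hB : IsTopologicalBasis B) {κ : Cardinal.{u}}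
    (h : Cardinal.mk B ≤ κ) : tweight X ≤ κ :=
  le_trans (ciInf_le' (fun B : {B : Set (Set X) // IsTopologicalBasis B} => Cardinal.mk B.1)
    ⟨B, hB⟩) h

open TopologicalSpace in
lemma exists_basis_of_tweight_le {X : Type u} [TopologicalSpace X] {κ : Cardinal.{u}}
    (h : tweight X ≤ κ) : ∃ B : Set (Set X), IsTopologicalBasis B ∧ Cardinal.mk B ≤ κ := by
  have hne : Nonempty {B : Set (Set X) // IsTopologicalBasis B} :=
    ⟨⟨_, isTopologicalBasis_opens⟩⟩
  have := csInf_mem (Set.range_nonempty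
    (fun B : {B : Set (Set X) // IsTopologicalBasis B} => Cardinal.mk B.1))
  obtain ⟨B, hB⟩ := this
  refine ⟨B.1, B.2, ?_⟩
  have : Cardinal.mk B.1 = tweight X := hB
  rw [this]; exact h

open TopologicalSpace in
lemma tweight_pi_le {Y : Type u} [TopologicalSpace Y] {κ : Cardinal.{u}}
    (hκ : Cardinal.aleph0 ≤ κ) (h : tweight Y ≤ κ) : tweight (ℕ → Y) ≤ κ := by
  classical
  obtain ⟨B, hB, hBκ⟩ := exists_basis_of_tweight_le h
  set B' : Set (Set (ℕ → Y)) := { S | ∃ (U : ℕ → Set Y) (F : Finset ℕ),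
      (∀ i, i ∈ F → U i ∈ B) ∧ S = (F : Set ℕ).pi U } with hB'
  have hbasis : IsTopologicalBasis B' := isTopologicalBasis_pi (fun _ => hB)
  apply tweight_le_of_basis hbasis
  -- encode each basic set by a finite set of pairs
  set g : Finset (ULift.{u} ℕ × ↥B) → Set (ℕ → Y) :=
    fun s => ⋂ p ∈ s, (fun x : ℕ → Y => x p.1.down) ⁻¹' (p.2 : Set Y) with hg
  have hsub : B' ⊆ Set.range g := by
    rintro S ⟨U, F, hU, rfl⟩
    refine ⟨F.attach.image (fun i => (ULift.up i.1, ⟨U i.1, hU i.1 i.2⟩)), ?_⟩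
    ext x
    simp only [hg, Set.mem_iInter, Finset.mem_image, Finset.mem_attach, true_and,
      Set.mem_pi, Finset.mem_coe, Set.mem_preimage]
    constructor
    · intro hx i hi
      exact hx (ULift.up i, ⟨U i, hU i hi⟩) ⟨⟨i, hi⟩, rfl⟩
    · rintro hx p ⟨i, rfl⟩
      exact hx i.1 i.2
  have h1 : Cardinal.mk B' ≤ Cardinal.mk (Finset (ULift.{u} ℕ × ↥B)) :=
    le_trans (Cardinal.mk_le_mk_of_subset hsub) Cardinal.mk_range_le
  refine h1.trans ?_
  have h2 : Cardinal.mk (Finset (ULift.{u} ℕ × ↥B)) ≤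
      Cardinal.mk (List (ULift.{u} ℕ × ↥B)) :=
    Cardinal.mk_le_of_surjective (f := fun l : List (ULift.{u} ℕ × ↥B) => l.toFinset)
      (fun s => ⟨s.toList, by simp⟩)
  refine h2.trans ((Cardinal.mk_list_le_max _).trans ?_)
  have h3 : Cardinal.mk (ULift.{u} ℕ × ↥B) ≤ κ := by
    rw [Cardinal.mk_prod, Cardinal.mk_uLift, Cardinal.mk_nat, Cardinal.lift_aleph0,
      Cardinal.lift_id, Cardinal.lift_id]
    calc Cardinal.aleph0 * Cardinal.mk ↥B ≤ κ * κ :=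
          mul_le_mul' hκ hBκ
      _ = κ := Cardinal.mul_eq_self hκ
  exact max_le hκ h3

/-- If every nonempty weakly incompressible dynamical system of weight at most `κ`
is a quotient of `(ω*, σ)`, then every nonempty compact Hausdorff space of weight
at most `κ` is a continuous image of `ω*`. -/
theorem continuous_image_of_quotient_hypothesis
    (κ : Cardinal.{u}) (hκ : Cardinal.aleph0 ≤ κ)
    (H : ∀ (X : Type u) [TopologicalSpace X] [CompactSpace X] [T2Space X] [Nonempty X]
      (f : X → X), Continuous f → tweight X ≤ κ → WeaklyIncompressible f →
        IsQuotientOfShift f) :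
    ∀ (Y : Type u) [TopologicalSpace Y] [CompactSpace Y] [T2Space Y] [Nonempty Y],
      tweight Y ≤ κ → ∃ g : OmegaStar → Y, Continuous g ∧ Function.Surjective g := by
  intro Y _ _ _ _ hY
  obtain ⟨Q, hQc, hQs, -⟩ := H (ℕ → Y) piShift piShift_continuous (tweight_pi_le hκ hY)
    piShift_wi
  refine ⟨(fun x => x 0) ∘ Q, (continuous_apply 0).comp hQc, ?_⟩
  intro y
  obtain ⟨p, hp⟩ := hQs (fun _ => y)
  exact ⟨p, by simp [hp]⟩
end

section
/- Every nonempty compact Hausdorff space of weight at most ℵ₁ is a continuous image of ω*, i.e., admits a continuous surjection from ω*. -/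
open Topology Set

namespace Parov
open Set

variable {κ X : Type*}

def pc (f : κ → Bool → Set X) (F : Finset κ) (ε : κ → Bool) : Set X := ⋂ i ∈ F, f i (ε i)

def efn (e : κ → Set ℕ) : κ → Bool → Set ℕ := fun i b => bif b then e i else (e i)ᶜ

lemma mem_pc {f : κ → Bool → Set X} {F : Finset κ} {ε : κ → Bool} {x : X} :
    x ∈ pc f F ε ↔ ∀ i ∈ F, x ∈ f i (ε i) := by simp [pc]

lemma pc_empty (f : κ → Bool → Set X) (ε : κ → Bool) : pc f ∅ ε = univ := by simp [pc]

lemma pc_congr {f : κ → Bool → Set X} {F G : Finset κ} {ε δ : κ → Bool}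
    (hFG : F = G) (h : ∀ i ∈ F, ε i = δ i) : pc f F ε = pc f G δ := by
  subst hFG; ext x; simp only [mem_pc]
  exact ⟨fun hx i hi => h i hi ▸ hx i hi, fun hx i hi => (h i hi).symm ▸ hx i hi⟩

lemma pc_subset {f : κ → Bool → Set X} {F G : Finset κ} {ε δ : κ → Bool}
    (hFG : F ⊆ G) (h : ∀ i ∈ F, δ i = ε i) : pc f G δ ⊆ pc f F ε := by
  intro x hx
  rw [mem_pc] at hx ⊢
  intro i hi
  rw [← h i hi]
  exact hx i (hFG hi)

lemma pc_insert [DecidableEq κ] {f : κ → Bool → Set X} {F : Finset κ} {ε : κ → Bool} {x : κ} :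
    pc f (insert x F) ε = f x (ε x) ∩ pc f F ε := by
  ext z; simp [pc, Set.mem_iInter]

lemma efn_disjoint {e : κ → Set ℕ} {i : κ} {b b' : Bool} (h : b ≠ b') :
    efn e i b ∩ efn e i b' = ∅ := by
  cases b <;> cases b' <;> simp_all [efn, compl_inter_self, inter_compl_self]


lemma pc_union [DecidableEq κ] {f : κ → Bool → Set X} {F G : Finset κ} {ε δ : κ → Bool}
    (hagree : ∀ i ∈ F, i ∈ G → ε i = δ i) :
    pc f (F ∪ G) (fun i => if i ∈ F then ε i else δ i) = pc f F ε ∩ pc f G δ := by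
  ext w
  simp only [Set.mem_inter_iff, mem_pc]
  constructor
  · intro h
    refine ⟨fun i hi => ?_, fun i hi => ?_⟩
    · have := h i (Finset.mem_union_left _ hi)
      simpa [if_pos hi] using this
    · have := h i (Finset.mem_union_right _ hi)
      by_cases hiq : i ∈ F
      · simp only [if_pos hiq] at this
        rwa [hagree i hiq hi] at this
      · simpa [if_neg hiq] using this
  · rintro ⟨h1, h2⟩ i hi
    by_cases hiq : i ∈ F
    · simpa [if_pos hiq] using h1 i hiq
    · rcases Finset.mem_union.1 hi with h | h
      · exact absurd h hiq
      · simpa [if_neg hiq] using h2 i h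

lemma enum {S : Set κ} (hS : S.Countable) :
    ∃ t : ℕ → Finset κ × (κ → Bool), (∀ n, ↑(t n).1 ⊆ S) ∧
      ∀ (F : Finset κ) (ε : κ → Bool), ↑F ⊆ S →
        ∃ n, (t n).1 = F ∧ ∀ i ∈ F, (t n).2 i = ε i := by
  classical
  haveI : Countable S := hS.to_subtype
  obtain ⟨u, hu⟩ := exists_surjective_nat (Finset (S × Bool))
  refine ⟨fun n => ((u n).image (fun x => (x.1 : κ)),
      fun i => decide (∃ x ∈ u n, (x.1 : κ) = i ∧ x.2 = true)), ?_, ?_⟩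
  · intro n i hi
    simp only [Finset.coe_image, Set.mem_image, Finset.mem_coe] at hi
    obtain ⟨x, _, rfl⟩ := hi
    exact x.1.2
  · intro F ε hF
    set A : Finset (S × Bool) :=
      F.attach.image (fun i => ((⟨i.1, hF i.2⟩ : S), ε i.1)) with hA
    have hmem : ∀ x : S × Bool, x ∈ A ↔ ∃ j, ∃ hj : j ∈ F, x = ((⟨j, hF hj⟩ : S), ε j) := by
      intro x
      simp only [hA, Finset.mem_image, Finset.mem_attach, true_and, Subtype.exists]
      constructor
      · rintro ⟨j, hj, rfl⟩; exact ⟨j, hj, rfl⟩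
      · rintro ⟨j, hj, rfl⟩; exact ⟨j, hj, rfl⟩
    obtain ⟨n, hn⟩ := hu A
    refine ⟨n, ?_, ?_⟩
    · show (u n).image (fun x => (x.1 : κ)) = F
      rw [hn]
      ext j
      simp only [Finset.mem_image]
      constructor
      · rintro ⟨x, hx, rfl⟩
        obtain ⟨j', hj', rfl⟩ := (hmem x).1 hx
        exact hj'
      · intro hj
        refine ⟨((⟨j, hF hj⟩ : S), ε j), (hmem _).2 ⟨j, hj, rfl⟩, rfl⟩
    · intro i hi
      show decide (∃ x ∈ u n, (x.1 : κ) = i ∧ x.2 = true) = ε i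
      rw [hn]
      by_cases hε : ε i = true
      · rw [hε, decide_eq_true_iff]
        exact ⟨((⟨i, hF hi⟩ : S), ε i), (hmem _).2 ⟨i, hi, rfl⟩, rfl, hε⟩
      · simp only [Bool.not_eq_true] at hε
        rw [hε, decide_eq_false_iff_not]
        rintro ⟨x, hx, hx1, hx2⟩
        obtain ⟨j, hj, rfl⟩ := (hmem x).1 hx
        simp only at hx1 hx2
        rw [hx1] at hx2
        rw [hx2] at hε
        exact Bool.true_eq_false.mp hε


section Step

variable {κ X : Type*} (Cf : κ → Bool → Set X) (e : κ → Set ℕ) (S : Set κ)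

lemma ref [Nonempty X]
    (hcov : ∀ i, Cf i true ∪ Cf i false = univ)
    (H : ∀ (F : Finset κ) (ε : κ → Bool), ↑F ⊆ S →
      (pc Cf F ε = ∅ ↔ (pc (efn e) F ε).Finite))
    {ι : Type*} (t : ι → Finset κ × (κ → Bool)) (ht : ∀ m, ↑(t m).1 ⊆ S)
    (q : Finset κ × (κ → Bool)) (hq : ↑q.1 ⊆ S) (G : Finset ι)
    (hne : (pc Cf q.1 q.2 \ ⋃ m ∈ G, pc Cf (t m).1 (t m).2).Nonempty) :
    (pc (efn e) q.1 q.2 \ ⋃ m ∈ G, pc (efn e) (t m).1 (t m).2).Infinite := by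
  classical
  obtain ⟨z, hz1, hz2⟩ := hne
  set δ : κ → Bool := fun i =>
    if i ∈ q.1 then q.2 i else (if z ∈ Cf i false then false else true) with hδ
  set G' : Finset κ := q.1 ∪ G.biUnion (fun m => (t m).1) with hG'
  have hG'S : ↑G' ⊆ S := by
    intro i hi
    simp only [hG', Finset.coe_union, Set.mem_union, Finset.mem_coe,
      Finset.mem_biUnion] at hi
    rcases hi with h | h
    · exact hq h
    · obtain ⟨m, _, hm⟩ := h
      exact ht m hm
  have hzmem : ∀ i, z ∈ Cf i (δ i) := by
    intro i
    by_cases hiq : i ∈ q.1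
    · have := mem_pc.1 hz1 i hiq
      simp only [hδ, if_pos hiq]
      exact this
    · simp only [hδ, if_neg hiq]
      by_cases hzf : z ∈ Cf i false
      · simpa [hzf] using hzf
      · have : z ∈ Cf i true ∪ Cf i false := (hcov i) ▸ Set.mem_univ z
        rcases this with h | h
        · simpa [hzf] using h
        · exact absurd h hzf
  have hzG' : z ∈ pc Cf G' δ := mem_pc.2 fun i _ => hzmem i
  have hinf : (pc (efn e) G' δ).Infinite := by
    have h1 : ¬ (pc Cf G' δ = ∅) := fun h0 => by rw [h0] at hzG'; exact hzG'
    exact fun hfin => h1 ((H G' δ hG'S).2 hfin)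
  have hsub1 : pc (efn e) G' δ ⊆ pc (efn e) q.1 q.2 := by
    apply pc_subset (Finset.subset_union_left)
    intro i hi
    simp [hδ, if_pos hi]
  have hdisj : ∀ m ∈ G, pc (efn e) G' δ ∩ pc (efn e) (t m).1 (t m).2 = ∅ := by
    intro m hm
    have hzm : z ∉ pc Cf (t m).1 (t m).2 := by
      intro hzm
      exact hz2 (Set.mem_biUnion hm hzm)
    obtain ⟨i₀, hi₀, hzi₀⟩ : ∃ i₀ ∈ (t m).1, z ∉ Cf i₀ ((t m).2 i₀) := by
      by_contra hc
      push_neg at hc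
      exact hzm (mem_pc.2 hc)
    have hδne : δ i₀ ≠ (t m).2 i₀ := by
      intro heq
      exact hzi₀ (heq ▸ hzmem i₀)
    have hi₀G' : i₀ ∈ G' := by
      simp only [hG', Finset.mem_union, Finset.mem_biUnion]
      exact Or.inr ⟨m, hm, hi₀⟩
    ext w
    simp only [Set.mem_inter_iff, Set.mem_empty_iff_false, iff_false, not_and]
    intro hw1 hw2
    have h1 : w ∈ efn e i₀ (δ i₀) := mem_pc.1 hw1 i₀ hi₀G'
    have h2 : w ∈ efn e i₀ ((t m).2 i₀) := mem_pc.1 hw2 i₀ hi₀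
    have := efn_disjoint (e := e) (i := i₀) hδne
    exact absurd (this ▸ Set.mem_inter h1 h2 : w ∈ (∅ : Set ℕ)) (Set.notMem_empty w)
  apply Set.Infinite.mono _ hinf
  intro w hw
  refine ⟨hsub1 hw, ?_⟩
  intro hmem
  obtain ⟨s, ⟨m, rfl⟩, hs⟩ := hmem
  simp only [Set.mem_iUnion] at hs
  obtain ⟨hm, hws⟩ := hs
  have := hdisj m hm
  exact absurd (this ▸ Set.mem_inter hw hws : w ∈ (∅ : Set ℕ)) (Set.notMem_empty w)

lemma merge
    (H : ∀ (F : Finset κ) (ε : κ → Bool), ↑F ⊆ S →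
      (pc Cf F ε = ∅ ↔ (pc (efn e) F ε).Finite))
    (q p : Finset κ × (κ → Bool)) (hq : ↑q.1 ⊆ S) (hp : ↑p.1 ⊆ S)
    (hdisj : pc Cf q.1 q.2 ∩ pc Cf p.1 p.2 = ∅) :
    (pc (efn e) q.1 q.2 ∩ pc (efn e) p.1 p.2).Finite := by
  classical
  by_cases hc : ∃ i, i ∈ q.1 ∧ i ∈ p.1 ∧ q.2 i ≠ p.2 i
  · obtain ⟨i, hiq, hip, hne⟩ := hc
    have : pc (efn e) q.1 q.2 ∩ pc (efn e) p.1 p.2 = ∅ := by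
      ext w
      simp only [Set.mem_inter_iff, Set.mem_empty_iff_false, iff_false, not_and]
      intro h1 h2
      have := efn_disjoint (e := e) (i := i) hne
      exact absurd (this ▸ Set.mem_inter (mem_pc.1 h1 i hiq) (mem_pc.1 h2 i hip) : w ∈ (∅ : Set ℕ))
        (Set.notMem_empty w)
    rw [this]; exact Set.finite_empty
  · push_neg at hc
    have key1 := pc_union (f := Cf) hc
    have key2 := pc_union (f := efn e) hc
    set δ : κ → Bool := (fun i => if i ∈ q.1 then q.2 i else p.2 i) with hδ
    have hsub : ↑(q.1 ∪ p.1) ⊆ S := by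
      intro i hi
      simp only [Finset.coe_union, Set.mem_union, Finset.mem_coe] at hi
      rcases hi with h | h
      · exact hq h
      · exact hp h
    have := (H (q.1 ∪ p.1) δ hsub).1 (by rw [hδ, key1]; exact hdisj)
    rwa [hδ, key2] at this

theorem step [Nonempty X]
    (hcov : ∀ i, Cf i true ∪ Cf i false = univ)
    (H : ∀ (F : Finset κ) (ε : κ → Bool), ↑F ⊆ S →
      (pc Cf F ε = ∅ ↔ (pc (efn e) F ε).Finite))
    (hS : S.Countable) (P M : Set X) (hPM : P ∪ M = univ) :
    ∃ y : Set ℕ, ∀ (F : Finset κ) (ε : κ → Bool), ↑F ⊆ S →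
      ((pc Cf F ε ∩ P = ∅ ↔ (pc (efn e) F ε ∩ y).Finite) ∧
       (pc Cf F ε ∩ M = ∅ ↔ (pc (efn e) F ε \ y).Finite)) := by
  classical
  obtain ⟨t, ht1, ht2⟩ := enum hS
  set R : ℕ → Set X := fun n => pc Cf (t n).1 (t n).2 with hR
  set a : ℕ → Set ℕ := fun n => pc (efn e) (t n).1 (t n).2 with ha
  have hmerge : ∀ n m, R n ∩ R m = ∅ → (a n ∩ a m).Finite :=
    fun n m h => merge Cf e S H (t n) (t m) (ht1 n) (ht1 m) h
  set A : ℕ → Set ℕ := fun n => if R n ∩ P = ∅ then a n else ∅ with hA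
  set B : ℕ → Set ℕ := fun n => if R n ∩ M = ∅ then a n else ∅ with hB
  have hAmem : ∀ m x, x ∈ A m ↔ (R m ∩ P = ∅ ∧ x ∈ a m) := by
    intro m x
    by_cases h : R m ∩ P = ∅ <;> simp [hA, h]
  have hBmem : ∀ m x, x ∈ B m ↔ (R m ∩ M = ∅ ∧ x ∈ a m) := by
    intro m x
    by_cases h : R m ∩ M = ∅ <;> simp [hB, h]
  have hRdisj : ∀ n m, R n ∩ M = ∅ → R m ∩ P = ∅ → R n ∩ R m = ∅ := by
    intro n m h1 h2
    ext z
    simp only [Set.mem_inter_iff, Set.mem_empty_iff_false, iff_false, not_and]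
    intro hzn hzm
    have : z ∈ P ∪ M := hPM ▸ Set.mem_univ z
    rcases this with h | h
    · exact absurd (Set.mem_inter hzm h) (by rw [h2]; exact Set.notMem_empty z)
    · exact absurd (Set.mem_inter hzn h) (by rw [h1]; exact Set.notMem_empty z)
  have hBA : ∀ n m, (B n ∩ A m).Finite := by
    intro n m
    by_cases h1 : R n ∩ M = ∅
    · by_cases h2 : R m ∩ P = ∅
      · exact (hmerge n m (hRdisj n m h1 h2)).subset
          (fun x hx => ⟨((hBmem n x).1 hx.1).2, ((hAmem m x).1 hx.2).2⟩)
      · exact Set.finite_empty.subset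
          (fun x hx => absurd ((hAmem m x).1 hx.2).1 h2)
    · exact Set.finite_empty.subset
        (fun x hx => absurd ((hBmem n x).1 hx.1).1 h1)
  set y0 : Set ℕ := ⋃ n, (B n \ ⋃ m ∈ Finset.range (n+1), A m) with hy0
  have hy0A : ∀ m, (y0 ∩ A m).Finite := by
    intro m
    apply Set.Finite.subset
      (Set.Finite.biUnion (Finset.range m).finite_toSet (fun n _ => hBA n m))
    rintro x ⟨hx1, hx2⟩
    simp only [hy0, Set.mem_iUnion] at hx1
    obtain ⟨n, hxB, hxA⟩ := hx1
    have hnm : n < m := by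
      by_contra hge
      push_neg at hge
      apply hxA
      simp only [Set.mem_iUnion]
      exact ⟨m, Finset.mem_range.2 (Nat.lt_succ_of_le hge), hx2⟩
    simp only [Set.mem_iUnion]
    exact ⟨n, Finset.mem_coe.2 (Finset.mem_range.2 hnm), hxB, hx2⟩
  have hy0B : ∀ n, R n ∩ M = ∅ → (a n \ y0).Finite := by
    intro n hn
    have hfin : (⋃ m ∈ Finset.range (n+1), (a n ∩ A m)).Finite := by
      apply Set.Finite.biUnion (Finset.range (n+1)).finite_toSet
      intro m _
      by_cases h2 : R m ∩ P = ∅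
      · exact (hmerge n m (hRdisj n m hn h2)).subset
          (fun x hx => ⟨hx.1, ((hAmem m x).1 hx.2).2⟩)
      · exact Set.finite_empty.subset
          (fun x hx => absurd ((hAmem m x).1 hx.2).1 h2)
    apply hfin.subset
    rintro x ⟨hx1, hx2⟩
    have hxB : x ∈ B n := (hBmem n x).2 ⟨hn, hx1⟩
    have hxU : x ∈ ⋃ m ∈ Finset.range (n+1), A m := by
      by_contra hc
      exact hx2 (Set.mem_iUnion.2 ⟨n, hxB, hc⟩)
    simp only [Set.mem_iUnion] at hxU ⊢
    obtain ⟨m, hm, hxm⟩ := hxU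
    exact ⟨m, hm, hx1, hxm⟩
  set pick : Set ℕ → Finset ℕ → ℕ :=
    fun s av => if h : (s \ ↑av).Nonempty then h.choose else 0 with hpickdef
  have hpick : ∀ s av, s.Infinite → pick s av ∈ s \ ↑av := by
    intro s av hs
    have h : (s \ ↑av).Nonempty := (hs.diff av.finite_toSet).nonempty
    show (if h : (s \ ↑av).Nonempty then h.choose else 0) ∈ s \ ↑av
    rw [dif_pos h]
    exact h.choose_spec
  set sA : ℕ → Set ℕ :=
    fun k => a (Nat.unpair k).1 \ ⋃ m ∈ Finset.range (k+1), A m with hsA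
  set sB : ℕ → Set ℕ :=
    fun k => a (Nat.unpair k).1 \ ⋃ m ∈ Finset.range (k+1), B m with hsB
  have hinfA : ∀ k, (R (Nat.unpair k).1 ∩ P).Nonempty → (sA k).Infinite := by
    intro k hne
    have hEq : (⋃ m ∈ Finset.range (k+1), A m) =
        ⋃ m ∈ (Finset.range (k+1)).filter (fun m => R m ∩ P = ∅), a m := by
      ext w
      simp only [Set.mem_iUnion, Finset.mem_filter, Finset.mem_coe]
      constructor
      · rintro ⟨m, hm, hw⟩
        obtain ⟨h1, h2⟩ := (hAmem m w).1 hw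
        exact ⟨m, ⟨hm, h1⟩, h2⟩
      · rintro ⟨m, ⟨hm, h⟩, hw⟩
        exact ⟨m, hm, (hAmem m w).2 ⟨h, hw⟩⟩
    show (a (Nat.unpair k).1 \ ⋃ m ∈ Finset.range (k+1), A m).Infinite
    rw [hEq]
    apply ref Cf e S hcov H t ht1 (t (Nat.unpair k).1) (ht1 _)
    obtain ⟨z, hz1, hz2⟩ := hne
    refine ⟨z, hz1, ?_⟩
    intro hmem
    simp only [Set.mem_iUnion, Finset.mem_coe, Finset.mem_filter] at hmem
    obtain ⟨m, ⟨_, hm2⟩, hzm⟩ := hmem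
    exact absurd (Set.mem_inter hzm hz2) (by rw [hm2]; exact Set.notMem_empty z)
  have hinfB : ∀ k, (R (Nat.unpair k).1 ∩ M).Nonempty → (sB k).Infinite := by
    intro k hne
    have hEq : (⋃ m ∈ Finset.range (k+1), B m) =
        ⋃ m ∈ (Finset.range (k+1)).filter (fun m => R m ∩ M = ∅), a m := by
      ext w
      simp only [Set.mem_iUnion, Finset.mem_filter, Finset.mem_coe]
      constructor
      · rintro ⟨m, hm, hw⟩
        obtain ⟨h1, h2⟩ := (hBmem m w).1 hw
        exact ⟨m, ⟨hm, h1⟩, h2⟩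
      · rintro ⟨m, ⟨hm, h⟩, hw⟩
        exact ⟨m, hm, (hBmem m w).2 ⟨h, hw⟩⟩
    show (a (Nat.unpair k).1 \ ⋃ m ∈ Finset.range (k+1), B m).Infinite
    rw [hEq]
    apply ref Cf e S hcov H t ht1 (t (Nat.unpair k).1) (ht1 _)
    obtain ⟨z, hz1, hz2⟩ := hne
    refine ⟨z, hz1, ?_⟩
    intro hmem
    simp only [Set.mem_iUnion, Finset.mem_coe, Finset.mem_filter] at hmem
    obtain ⟨m, ⟨_, hm2⟩, hzm⟩ := hmem
    exact absurd (Set.mem_inter hzm hz2) (by rw [hm2]; exact Set.notMem_empty z)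
  -- the recursive construction of the diagonal point sets
  set stepf : ℕ → Finset ℕ × Finset ℕ → Finset ℕ × Finset ℕ := fun k ih =>
    (if (R (Nat.unpair k).1 ∩ P).Nonempty
       then insert (pick (sA k) (ih.1 ∪ ih.2)) ih.1 else ih.1,
     if (R (Nat.unpair k).1 ∩ M).Nonempty
       then insert (pick (sB k) (insert (pick (sA k) (ih.1 ∪ ih.2)) (ih.1 ∪ ih.2))) ih.2
       else ih.2) with hstepf
  set st : ℕ → Finset ℕ × Finset ℕ := fun k => Nat.rec (∅, ∅) stepf k with hstdef
  have hstS : ∀ k, st (k+1) = stepf k (st k) := fun k => rfl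
  have hmono : ∀ k, (st k).1 ⊆ (st (k+1)).1 ∧ (st k).2 ⊆ (st (k+1)).2 := by
    intro k
    rw [hstS k, hstepf]
    constructor
    · dsimp only
      split
      · exact Finset.subset_insert _ _
      · exact Finset.Subset.refl _
    · dsimp only
      split
      · exact Finset.subset_insert _ _
      · exact Finset.Subset.refl _
  have hmono' : ∀ k k', k ≤ k' → (st k).1 ⊆ (st k').1 ∧ (st k).2 ⊆ (st k').2 := by
    intro k k' hk
    induction k' with
    | zero =>
      rw [Nat.le_zero.1 hk]
      exact ⟨Finset.Subset.refl _, Finset.Subset.refl _⟩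
    | succ c ihc =>
      rcases Nat.lt_succ_iff_lt_or_eq.1 (Nat.lt_succ_of_le hk) with h | h
      · have h1 := ihc (Nat.lt_succ_iff.1 h)
        exact ⟨h1.1.trans (hmono c).1, h1.2.trans (hmono c).2⟩
      · rw [h]
        exact ⟨Finset.Subset.refl _, Finset.Subset.refl _⟩
  -- freshness of chosen points
  have hDfresh : ∀ k, (R (Nat.unpair k).1 ∩ P).Nonempty →
      pick (sA k) ((st k).1 ∪ (st k).2) ∈ sA k \ ↑((st k).1 ∪ (st k).2) ∧
      (st (k+1)).1 = insert (pick (sA k) ((st k).1 ∪ (st k).2)) (st k).1 := by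
    intro k hk
    refine ⟨hpick _ _ (hinfA k hk), ?_⟩
    rw [hstS k, hstepf]
    dsimp only
    rw [if_pos hk]
  have hEfresh : ∀ k, (R (Nat.unpair k).1 ∩ M).Nonempty →
      pick (sB k) (insert (pick (sA k) ((st k).1 ∪ (st k).2)) ((st k).1 ∪ (st k).2)) ∈
        sB k \ ↑(insert (pick (sA k) ((st k).1 ∪ (st k).2)) ((st k).1 ∪ (st k).2)) ∧
      (st (k+1)).2 = insert
        (pick (sB k) (insert (pick (sA k) ((st k).1 ∪ (st k).2)) ((st k).1 ∪ (st k).2)))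
        (st k).2 := by
    intro k hk
    refine ⟨hpick _ _ (hinfB k hk), ?_⟩
    rw [hstS k, hstepf]
    dsimp only
    rw [if_pos hk]
  have hDsub : ∀ k, (st (k+1)).1 ⊆ insert (pick (sA k) ((st k).1 ∪ (st k).2)) (st k).1 := by
    intro k
    rw [hstS k, hstepf]
    dsimp only
    split
    · exact Finset.Subset.refl _
    · exact Finset.subset_insert _ _
  have hEsub : ∀ k, (st (k+1)).2 ⊆ insert
      (pick (sB k) (insert (pick (sA k) ((st k).1 ∪ (st k).2)) ((st k).1 ∪ (st k).2)))
      (st k).2 := by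
    intro k
    rw [hstS k, hstepf]
    dsimp only
    split
    · exact Finset.Subset.refl _
    · exact Finset.subset_insert _ _
  -- new D-points at step k lie in sA k, new E-points in sB k
  have hDnew : ∀ k x, x ∈ (st (k+1)).1 → x ∉ (st k).1 → x ∈ sA k ∧ x ∉ ((st k).1 ∪ (st k).2 : Finset ℕ) := by
    intro k x hx hxn
    have := hDsub k hx
    rcases Finset.mem_insert.1 this with h | h
    · subst h
      by_cases hk : (R (Nat.unpair k).1 ∩ P).Nonempty
      · have := (hDfresh k hk).1
        exact ⟨this.1, fun hc => this.2 (Finset.mem_coe.2 hc)⟩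
      · exfalso
        apply hxn
        have : (st (k+1)).1 = (st k).1 := by
          rw [hstS k, hstepf]
          dsimp only
          rw [if_neg hk]
        rwa [this] at hx
    · exact absurd h hxn
  have hEnew : ∀ k x, x ∈ (st (k+1)).2 → x ∉ (st k).2 →
      x ∈ sB k ∧ x ∉ ((st k).1 ∪ (st k).2 : Finset ℕ) ∧ x ∉ (st (k+1)).1 := by
    intro k x hx hxn
    have := hEsub k hx
    rcases Finset.mem_insert.1 this with h | h
    · by_cases hk : (R (Nat.unpair k).1 ∩ M).Nonempty
      · have h2 := (hEfresh k hk).1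
        rw [h]
        have h3 : ∀ w, w ∈ (insert (pick (sA k) ((st k).1 ∪ (st k).2)) ((st k).1 ∪ (st k).2) : Finset ℕ) →
            w ≠ pick (sB k) (insert (pick (sA k) ((st k).1 ∪ (st k).2)) ((st k).1 ∪ (st k).2)) := by
          intro w hw heq
          rw [heq] at hw
          exact h2.2 (Finset.mem_coe.2 hw)
        refine ⟨h2.1, fun hc => ?_, fun hc => ?_⟩
        · exact h3 _ (Finset.mem_insert_of_mem hc) rfl
        · rcases Finset.mem_insert.1 (hDsub k hc) with h4 | h4
          · exact h3 _ (Finset.mem_insert.2 (Or.inl h4)) rfl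
          · exact h3 _ (Finset.mem_insert_of_mem (Finset.mem_union_left _ h4)) rfl
      · exfalso
        apply hxn
        have : (st (k+1)).2 = (st k).2 := by
          rw [hstS k, hstepf]
          dsimp only
          rw [if_neg hk]
        rwa [this] at hx
    · exact absurd h hxn
  set Dset : Set ℕ := ⋃ k, ((st k).1 : Set ℕ) with hDset
  set Eset : Set ℕ := ⋃ k, ((st k).2 : Set ℕ) with hEset
  have hDE : ∀ x, x ∈ Dset → x ∈ Eset → False := by
    have key : ∀ k x, x ∈ (st k).1 → x ∈ (st k).2 → False := by
      intro k
      induction k with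
      | zero => intro x hx _; exact absurd hx (Finset.notMem_empty x)
      | succ c ihc =>
        intro x hx1 hx2
        by_cases hD : x ∈ (st c).1
        · by_cases hE : x ∈ (st c).2
          · exact ihc x hD hE
          · exact ((hEnew c x hx2 hE).2.2) hx1
        · have := hDnew c x hx1 hD
          by_cases hE : x ∈ (st c).2
          · exact this.2 (Finset.mem_union_right _ hE)
          · exact ((hEnew c x hx2 hE).2.2) hx1
    intro x hx1 hx2
    simp only [hDset, hEset, Set.mem_iUnion, Finset.mem_coe] at hx1 hx2
    obtain ⟨k1, h1⟩ := hx1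
    obtain ⟨k2, h2⟩ := hx2
    exact key (max k1 k2) x ((hmono' k1 _ (le_max_left _ _)).1 h1)
      ((hmono' k2 _ (le_max_right _ _)).2 h2)
  have hDAk : ∀ m k, (((st k).1 : Set ℕ) ∩ A m) ⊆ ((st m).1 : Set ℕ) := by
    intro m k
    induction k with
    | zero =>
      rintro x ⟨hx1, _⟩
      exact absurd (Finset.mem_coe.1 hx1) (Finset.notMem_empty x)
    | succ c ihc =>
      rintro x ⟨hx1, hx2⟩
      by_cases hD : x ∈ (st c).1
      · exact ihc ⟨Finset.mem_coe.2 hD, hx2⟩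
      · have hnew := hDnew c x (Finset.mem_coe.1 hx1) hD
        have hxnot : x ∉ ⋃ i ∈ Finset.range (c+1), A i := hnew.1.2
        have hcm : c + 1 ≤ m := by
          by_contra hlt
          push_neg at hlt
          exact hxnot (Set.mem_iUnion.2 ⟨m, Set.mem_iUnion.2 ⟨Finset.mem_range.2 hlt, hx2⟩⟩)
        exact Finset.mem_coe.2 ((hmono' (c+1) m hcm).1 (Finset.mem_coe.1 hx1))
  have hDA : ∀ m, (Dset ∩ A m).Finite := by
    intro m
    apply Set.Finite.subset ((st m).1.finite_toSet)
    rintro x ⟨hx1, hx2⟩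
    simp only [hDset, Set.mem_iUnion, Finset.mem_coe] at hx1
    obtain ⟨k, hk⟩ := hx1
    exact hDAk m k ⟨Finset.mem_coe.2 hk, hx2⟩
  have hEBk : ∀ m k, (((st k).2 : Set ℕ) ∩ B m) ⊆ ((st m).2 : Set ℕ) := by
    intro m k
    induction k with
    | zero =>
      rintro x ⟨hx1, _⟩
      exact absurd (Finset.mem_coe.1 hx1) (Finset.notMem_empty x)
    | succ c ihc =>
      rintro x ⟨hx1, hx2⟩
      by_cases hE : x ∈ (st c).2
      · exact ihc ⟨Finset.mem_coe.2 hE, hx2⟩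
      · have hnew := hEnew c x (Finset.mem_coe.1 hx1) hE
        have hxnot : x ∉ ⋃ i ∈ Finset.range (c+1), B i := hnew.1.2
        have hcm : c + 1 ≤ m := by
          by_contra hlt
          push_neg at hlt
          exact hxnot (Set.mem_iUnion.2 ⟨m, Set.mem_iUnion.2 ⟨Finset.mem_range.2 hlt, hx2⟩⟩)
        exact Finset.mem_coe.2 ((hmono' (c+1) m hcm).2 (Finset.mem_coe.1 hx1))
  have hEB : ∀ m, (Eset ∩ B m).Finite := by
    intro m
    apply Set.Finite.subset ((st m).2.finite_toSet)
    rintro x ⟨hx1, hx2⟩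
    simp only [hEset, Set.mem_iUnion, Finset.mem_coe] at hx1
    obtain ⟨k, hk⟩ := hx1
    exact hEBk m k ⟨Finset.mem_coe.2 hk, hx2⟩
  -- infinitely many D-points inside a n, when R n ∩ P ≠ ∅
  have hDinf : ∀ n, (R n ∩ P).Nonempty → (Dset ∩ a n).Infinite := by
    intro n hn
    set pf : ℕ → ℕ := fun j =>
      pick (sA (Nat.pair n j)) ((st (Nat.pair n j)).1 ∪ (st (Nat.pair n j)).2) with hpf
    have hcond : ∀ j, (R (Nat.unpair (Nat.pair n j)).1 ∩ P).Nonempty := by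
      intro j; rw [Nat.unpair_pair]; exact hn
    have hpfmem : ∀ j, pf j ∈ sA (Nat.pair n j) ∧ pf j ∉ ((st (Nat.pair n j)).1 ∪ (st (Nat.pair n j)).2 : Finset ℕ) ∧ pf j ∈ (st (Nat.pair n j + 1)).1 := by
      intro j
      obtain ⟨h1, h2⟩ := hDfresh (Nat.pair n j) (hcond j)
      refine ⟨h1.1, fun hc => h1.2 (Finset.mem_coe.2 hc), ?_⟩
      rw [h2]
      exact Finset.mem_insert_self _ _
    have hinj : Function.Injective pf := by
      have key : ∀ j j', j < j' → pf j ≠ pf j' := by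
        intro j j' hjj heq
        have hlt : Nat.pair n j + 1 ≤ Nat.pair n j' :=
          Nat.succ_le_of_lt (Nat.pair_lt_pair_right n hjj)
        have h1 : pf j ∈ (st (Nat.pair n j')).1 :=
          (hmono' _ _ hlt).1 (hpfmem j).2.2
        exact (hpfmem j').2.1 (heq ▸ Finset.mem_union_left _ h1)
      intro j j' heq
      rcases lt_trichotomy j j' with h | h | h
      · exact absurd heq (key j j' h)
      · exact h
      · exact absurd heq.symm (key j' j h)
    apply Set.infinite_of_injective_forall_mem hinj
    intro j
    constructor
    · exact Set.mem_iUnion.2 ⟨Nat.pair n j + 1, Finset.mem_coe.2 (hpfmem j).2.2⟩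
    · have := (hpfmem j).1
      have h2 : sA (Nat.pair n j) ⊆ a n := by
        intro w hw
        have := hw.1
        rwa [Nat.unpair_pair] at this
      exact h2 this
  have hEinf : ∀ n, (R n ∩ M).Nonempty → (Eset ∩ a n).Infinite := by
    intro n hn
    set pf : ℕ → ℕ := fun j =>
      pick (sB (Nat.pair n j))
        (insert (pick (sA (Nat.pair n j)) ((st (Nat.pair n j)).1 ∪ (st (Nat.pair n j)).2))
          ((st (Nat.pair n j)).1 ∪ (st (Nat.pair n j)).2)) with hpf
    have hcond : ∀ j, (R (Nat.unpair (Nat.pair n j)).1 ∩ M).Nonempty := by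
      intro j; rw [Nat.unpair_pair]; exact hn
    have hpfmem : ∀ j, pf j ∈ sB (Nat.pair n j) ∧ pf j ∉ ((st (Nat.pair n j)).1 ∪ (st (Nat.pair n j)).2 : Finset ℕ) ∧ pf j ∈ (st (Nat.pair n j + 1)).2 := by
      intro j
      obtain ⟨h1, h2⟩ := hEfresh (Nat.pair n j) (hcond j)
      refine ⟨h1.1, fun hc => h1.2 (Finset.mem_coe.2 (Finset.mem_insert_of_mem hc)), ?_⟩
      rw [h2]
      exact Finset.mem_insert_self _ _
    have hinj : Function.Injective pf := by
      have key : ∀ j j', j < j' → pf j ≠ pf j' := by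
        intro j j' hjj heq
        have hlt : Nat.pair n j + 1 ≤ Nat.pair n j' :=
          Nat.succ_le_of_lt (Nat.pair_lt_pair_right n hjj)
        have h1 : pf j ∈ (st (Nat.pair n j')).2 :=
          (hmono' _ _ hlt).2 (hpfmem j).2.2
        exact (hpfmem j').2.1 (heq ▸ Finset.mem_union_right _ h1)
      intro j j' heq
      rcases lt_trichotomy j j' with h | h | h
      · exact absurd heq (key j j' h)
      · exact h
      · exact absurd heq.symm (key j' j h)
    apply Set.infinite_of_injective_forall_mem hinj
    intro j
    constructor
    · exact Set.mem_iUnion.2 ⟨Nat.pair n j + 1, Finset.mem_coe.2 (hpfmem j).2.2⟩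
    · have := (hpfmem j).1
      have h2 : sB (Nat.pair n j) ⊆ a n := by
        intro w hw
        have := hw.1
        rwa [Nat.unpair_pair] at this
      exact h2 this
  -- the final set y and the verification
  refine ⟨(y0 ∪ Dset) \ Eset, ?_⟩
  intro F ε hF
  obtain ⟨n, hn1, hn2⟩ := ht2 F ε hF
  have hCeq : pc Cf F ε = R n := pc_congr hn1.symm (fun i hi => (hn2 i hi).symm) ▸ rfl
  have haeq : pc (efn e) F ε = a n := by
    show pc (efn e) F ε = pc (efn e) (t n).1 (t n).2
    exact pc_congr hn1.symm (fun i hi => (hn2 i hi).symm)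
  rw [hCeq, haeq]
  have hyD : Dset ∩ a n ⊆ a n ∩ ((y0 ∪ Dset) \ Eset) := by
    rintro x ⟨hx1, hx2⟩
    exact ⟨hx2, Or.inr hx1, fun hc => hDE x hx1 hc⟩
  have hyE : Eset ∩ a n ⊆ a n \ ((y0 ∪ Dset) \ Eset) := by
    rintro x ⟨hx1, hx2⟩
    exact ⟨hx2, fun hc => hc.2 hx1⟩
  constructor
  · constructor
    · intro hP
      have hAn : A n = a n := by rw [hA]; simp only [if_pos hP]
      apply Set.Finite.subset ((hy0A n).union (hDA n))
      rintro x ⟨hx1, hx2⟩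
      rcases hx2.1 with h | h
      · exact Or.inl ⟨h, hAn ▸ hx1⟩
      · exact Or.inr ⟨h, hAn ▸ hx1⟩
    · intro hfin
      by_contra hP
      have hne : (R n ∩ P).Nonempty := Set.nonempty_iff_ne_empty.2 hP
      exact (Set.Infinite.mono hyD (hDinf n hne)) hfin
  · constructor
    · intro hM
      have hBn : B n = a n := by rw [hB]; simp only [if_pos hM]
      apply Set.Finite.subset ((hy0B n hM).union (hEB n))
      rintro x ⟨hx1, hx2⟩
      by_cases hE : x ∈ Eset
      · exact Or.inr ⟨hE, hBn ▸ hx1⟩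
      · refine Or.inl ⟨hx1, fun hy0mem => ?_⟩
        exact hx2 ⟨Or.inl hy0mem, hE⟩
    · intro hfin
      by_contra hM
      have hne : (R n ∩ M).Nonempty := Set.nonempty_iff_ne_empty.2 hM
      exact (Set.Infinite.mono hyE (hEinf n hne)) hfin

end Step



section Rec

variable {κ X : Type*} (Cf : κ → Bool → Set X) (r : κ → κ → Prop)

lemma pc_efn_congr {e e' : κ → Set ℕ} {F : Finset κ} {ε : κ → Bool}
    (h : ∀ i ∈ F, e i = e' i) : pc (efn e) F ε = pc (efn e') F ε := by
  unfold pc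
  apply Set.iInter₂_congr
  intro i hi
  simp only [efn, h i hi]

/-- The extension condition at stage `x`. -/
def GA (x : κ) (ev : κ → Set ℕ) (y : Set ℕ) : Prop :=
  ∀ (F : Finset κ) (ε : κ → Bool), ↑F ⊆ {z | r z x} →
    ((pc Cf F ε ∩ Cf x true = ∅ ↔ (pc (efn ev) F ε ∩ y).Finite) ∧
     (pc Cf F ε ∩ Cf x false = ∅ ↔ (pc (efn ev) F ε \ y).Finite))

open Classical in
noncomputable def Efun (wf : WellFounded r) : κ → Set ℕ :=
  wf.fix (fun x ih =>
    if h : ∃ y : Set ℕ, GA Cf r x (fun z => ⋃ (hz : r z x), ih z hz) y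
    then h.choose else ∅)

open Classical in
lemma Efun_eq (wf : WellFounded r) (x : κ) :
    Efun Cf r wf x =
      if h : ∃ y : Set ℕ, GA Cf r x (fun z => ⋃ (hz : r z x), Efun Cf r wf z) y
      then h.choose else ∅ := by
  rw [Efun, WellFounded.fix_eq]

end Rec

theorem main {κ X : Type u} [Nonempty X] (hκ : Cardinal.mk κ ≤ Cardinal.aleph 1)
    (Cf : κ → Bool → Set X) (hcov : ∀ i, Cf i true ∪ Cf i false = univ) :
    ∃ e : κ → Set ℕ, ∀ (F : Finset κ) (ε : κ → Bool),
      (pc Cf F ε = ∅ ↔ (pc (efn e) F ε).Finite) := by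
  classical
  obtain ⟨f⟩ : Nonempty (κ ↪ (Cardinal.aleph 1).ord.ToType) := by
    rw [← Cardinal.le_def]
    rwa [Cardinal.mk_toType, Cardinal.card_ord]
  set r : κ → κ → Prop := fun x y => f x < f y with hr
  have wf : WellFounded r := InvImage.wf f (IsWellFounded.wf)
  have hcnt : ∀ x, {z | r z x}.Countable := by
    intro x
    rw [Cardinal.countable_iff_lt_aleph_one]
    calc Cardinal.mk {z // r z x}
        ≤ Cardinal.mk (Set.Iio (f x)) := by
          apply Cardinal.mk_le_of_injective
            (f := fun z => (⟨f z.1, z.2⟩ : Set.Iio (f x)))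
          intro z z' hzz
          apply Subtype.ext
          exact f.injective (congrArg Subtype.val hzz)
      _ < Cardinal.aleph 1 := Cardinal.mk_Iio_ord_toType _
  set E : κ → Set ℕ := Efun Cf r wf with hE
  have base : ∀ (ev : κ → Set ℕ) (ε : κ → Bool),
      (pc Cf (∅ : Finset κ) ε = ∅ ↔ (pc (efn ev) (∅ : Finset κ) ε).Finite) := by
    intro ev ε
    rw [pc_empty, pc_empty]
    exact iff_of_false (Set.univ_nonempty.ne_empty) (fun h => Set.infinite_univ h)
  have hmax : ∀ (F : Finset κ), F.Nonempty → ∃ m ∈ F, ∀ z ∈ F, z ≠ m → r z m := by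
    intro F hF
    obtain ⟨m, hmF, hm⟩ := F.exists_max_image (fun z => f z) hF
    refine ⟨m, hmF, fun z hz hne => ?_⟩
    exact lt_of_le_of_ne (hm z hz) (fun hEq => hne (f.injective hEq))
  have Inv : ∀ x : κ, ∀ (F : Finset κ) (ε : κ → Bool), ↑F ⊆ {z | r z x ∨ z = x} →
      (pc Cf F ε = ∅ ↔ (pc (efn E) F ε).Finite) := by
    intro x
    induction x using WellFounded.induction wf with
    | _ x ih =>
    have Hpred : ∀ (F : Finset κ) (ε : κ → Bool), ↑F ⊆ {z | r z x} →
        (pc Cf F ε = ∅ ↔ (pc (efn E) F ε).Finite) := by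
      intro F ε hF
      rcases F.eq_empty_or_nonempty with rfl | hne
      · exact base E ε
      · obtain ⟨m, hmF, hm⟩ := hmax F hne
        refine ih m (hF hmF) F ε ?_
        intro z hz
        by_cases hzm : z = m
        · exact Or.inr hzm
        · exact Or.inl (hm z hz hzm)
    have hstep := step Cf E {z | r z x} hcov Hpred (hcnt x)
      (Cf x true) (Cf x false) (hcov x)
    have hev : ∀ (F : Finset κ), ↑F ⊆ {z | r z x} →
        ∀ i ∈ F, (⋃ (_ : r i x), E i) = E i := by
      intro F hF i hi
      ext n
      simp only [Set.mem_iUnion]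
      exact ⟨fun ⟨_, h⟩ => h, fun h => ⟨hF hi, h⟩⟩
    have hGA : ∃ y : Set ℕ, GA Cf r x (fun z => ⋃ (hz : r z x), E z) y := by
      obtain ⟨y, hy⟩ := hstep
      refine ⟨y, ?_⟩
      intro F ε hF
      have hcg : pc (efn (fun z => ⋃ (hz : r z x), E z)) F ε = pc (efn E) F ε :=
        pc_efn_congr (hev F hF)
      rw [hcg]
      exact hy F ε hF
    have hExval : GA Cf r x (fun z => ⋃ (hz : r z x), E z) (E x) := by
      have hkey := Efun_eq Cf r wf x
      rw [dif_pos hGA] at hkey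
      show GA Cf r x (fun z => ⋃ (hz : r z x), E z) (E x)
      rw [show E x = Efun Cf r wf x from rfl, hkey]
      exact hGA.choose_spec
    have hGAE : ∀ (F : Finset κ) (ε : κ → Bool), ↑F ⊆ {z | r z x} →
        ((pc Cf F ε ∩ Cf x true = ∅ ↔ (pc (efn E) F ε ∩ E x).Finite) ∧
         (pc Cf F ε ∩ Cf x false = ∅ ↔ (pc (efn E) F ε \ E x).Finite)) := by
      intro F ε hF
      have hcg : pc (efn (fun z => ⋃ (hz : r z x), E z)) F ε = pc (efn E) F ε :=
        pc_efn_congr (hev F hF)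
      have := hExval F ε hF
      rwa [hcg] at this
    intro F ε hF
    by_cases hxF : x ∈ F
    · set F' := F.erase x with hF'
      have hxF' : x ∉ F' := Finset.notMem_erase x F
      have hF'sub : ↑F' ⊆ {z | r z x} := by
        intro z hz
        have hzF : z ∈ F := Finset.mem_of_mem_erase (Finset.mem_coe.1 hz)
        have hzx : z ≠ x := Finset.ne_of_mem_erase (Finset.mem_coe.1 hz)
        rcases hF (Finset.mem_coe.2 hzF) with h | h
        · exact h
        · exact absurd h hzx
      have hins : F = insert x F' := (Finset.insert_erase hxF).symm
      rw [hins, pc_insert, pc_insert]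
      obtain ⟨h1, h2⟩ := hGAE F' ε hF'sub
      cases hε : ε x
      · have : efn E x false = (E x)ᶜ := rfl
        rw [this]
        rw [Set.inter_comm (Cf x false), Set.inter_comm ((E x)ᶜ), ← Set.diff_eq]
        exact h2
      · have : efn E x true = E x := rfl
        rw [this]
        rw [Set.inter_comm (Cf x true), Set.inter_comm (E x)]
        exact h1
    · refine Hpred F ε ?_
      intro z hz
      rcases hF hz with h | h
      · exact h
      · exact absurd (h ▸ (Finset.mem_coe.1 hz)) hxF
  refine ⟨E, ?_⟩
  intro F ε
  rcases F.eq_empty_or_nonempty with rfl | hne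
  · exact base E ε
  · obtain ⟨m, hmF, hm⟩ := hmax F hne
    refine Inv m F ε ?_
    intro z hz
    by_cases hzm : z = m
    · exact Or.inr hzm
    · exact Or.inl (hm z (Finset.mem_coe.1 hz) hzm)


theorem parovTop {Y : Type u} [TopologicalSpace Y] [CompactSpace Y] [T2Space Y] [Nonempty Y]
    (B : Set (Set Y)) (hB : TopologicalSpace.IsTopologicalBasis B)
    (hcard : Cardinal.mk B ≤ Cardinal.aleph 1) :
    ∃ g : OmegaStar → Y, Continuous g ∧ Function.Surjective g := by
  classical
  set κ := ↥B with hκdef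
  set Cf : κ → Bool → Set Y := fun U b => bif b then closure U.1 else (U.1)ᶜ with hCf
  have hcov : ∀ i : κ, Cf i true ∪ Cf i false = univ := by
    intro i
    apply Set.eq_univ_of_univ_subset
    intro z _
    by_cases hz : z ∈ i.1
    · exact Or.inl (subset_closure hz)
    · exact Or.inr hz
  obtain ⟨e, he⟩ := main hcard Cf hcov
  -- the pattern of an ultrafilter
  set pat : Ultrafilter ℕ → κ → Bool := fun u i => decide (e i ∈ u) with hpat
  have hpatmem : ∀ (p : OmegaStar) (F : Finset κ), pc (efn e) F (pat p.1) ∈ p.1 := by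
    intro p F
    apply (Filter.biInter_finset_mem F).2
    intro i _
    by_cases hi : e i ∈ p.1
    · have : pat p.1 i = true := decide_eq_true hi
      show efn e i (pat p.1 i) ∈ p.1
      rw [this]
      exact hi
    · have : pat p.1 i = false := decide_eq_false hi
      show efn e i (pat p.1 i) ∈ p.1
      rw [this]
      exact (Ultrafilter.compl_mem_iff_notMem).2 hi
  have hfreeinf : ∀ (p : OmegaStar) (s : Set ℕ), s ∈ p.1 → s.Infinite := by
    intro p s hs hfin
    obtain ⟨x, _, hx⟩ := Ultrafilter.eq_pure_of_finite_mem hfin hs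
    exact p.2 x hx
  have hclosed : ∀ (i : κ) (b : Bool), IsClosed (Cf i b) := by
    intro i b
    cases b
    · exact (hB.isOpen i.2).isClosed_compl
    · exact isClosed_closure
  -- nonemptiness of the intersection
  have hKP : ∀ p : OmegaStar, (⋂ i : κ, Cf i (pat p.1 i)).Nonempty := by
    intro p
    rw [Set.nonempty_iff_ne_empty]
    intro hemp
    obtain ⟨F, hF⟩ := IsCompact.elim_finite_subfamily_closed isCompact_univ
      (fun i : κ => Cf i (pat p.1 i)) (fun i => hclosed i _) (by rw [Set.univ_inter, hemp])
    rw [Set.univ_inter] at hF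
    have h1 : (pc (efn e) F (pat p.1)).Finite → False := fun hfin =>
      hfreeinf p _ (hpatmem p F) hfin
    exact h1 ((he F (pat p.1)).1 hF)
  -- uniqueness of the intersection point
  have huniq : ∀ (u : Ultrafilter ℕ) (z z' : Y),
      z ∈ (⋂ i : κ, Cf i (pat u i)) → z' ∈ (⋂ i : κ, Cf i (pat u i)) → z = z' := by
    intro u z z' hz hz'
    by_contra hne
    have hW : ({z'}ᶜ : Set Y) ∈ 𝓝 z :=
      (isOpen_compl_singleton).mem_nhds (by simpa using hne)
    obtain ⟨t, ht, htc, hts⟩ := exists_mem_nhds_isClosed_subset hW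
    obtain ⟨U, hUB, hzU, hUt⟩ := hB.mem_nhds_iff.1 ht
    set i : κ := ⟨U, hUB⟩ with hi
    have hcl : closure U ⊆ {z'}ᶜ := by
      calc closure U ⊆ closure t := closure_mono hUt
        _ = t := htc.closure_eq
        _ ⊆ {z'}ᶜ := hts
    cases hp : pat u i
    · -- false: both in Uᶜ, but z ∈ U
      have := Set.mem_iInter.1 hz i
      rw [hp] at this
      exact this hzU
    · -- true: both in closure U, but z' ∉ closure U
      have := Set.mem_iInter.1 hz' i
      rw [hp] at this
      exact hcl this rfl
  set g : OmegaStar → Y := fun p => (hKP p).some with hg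
  have hgmem : ∀ p : OmegaStar, g p ∈ ⋂ i : κ, Cf i (pat p.1 i) := fun p => (hKP p).some_mem
  have hgspec : ∀ (p : OmegaStar) (z : Y), z ∈ (⋂ i : κ, Cf i (pat p.1 i)) → g p = z :=
    fun p z hz => huniq p.1 (g p) z (hgmem p) hz
  refine ⟨g, ?_, ?_⟩
  · -- continuity
    rw [continuous_def]
    intro W hW
    rw [isOpen_iff_forall_mem_open]
    intro p hp
    have hKPW : (⋂ i : κ, Cf i (pat p.1 i)) ⊆ W := by
      intro z hz
      rw [huniq p.1 z (g p) hz (hgmem p)]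
      exact hp
    have hemp : Wᶜ ∩ ⋂ i : κ, Cf i (pat p.1 i) = ∅ := by
      rw [Set.eq_empty_iff_forall_notMem]
      rintro z ⟨hz1, hz2⟩
      exact hz1 (hKPW hz2)
    obtain ⟨F, hF⟩ := IsCompact.elim_finite_subfamily_closed hW.isClosed_compl.isCompact
      (fun i : κ => Cf i (pat p.1 i)) (fun i => hclosed i _) hemp
    have hFW : (⋂ i ∈ F, Cf i (pat p.1 i)) ⊆ W := by
      intro z hz
      by_contra hzW
      rw [Set.eq_empty_iff_forall_notMem] at hF
      exact hF z ⟨hzW, hz⟩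
    refine ⟨{q : OmegaStar | ∀ i ∈ F, (e i ∈ q.1 ↔ e i ∈ p.1)}, ?_, ?_, ?_⟩
    · -- maps into W
      intro q hq
      have hpatq : ∀ i ∈ F, pat q.1 i = pat p.1 i := by
        intro i hi
        have := hq i hi
        show decide (e i ∈ q.1) = decide (e i ∈ p.1)
        by_cases h : e i ∈ p.1
        · rw [decide_eq_true (this.2 h), decide_eq_true h]
        · rw [decide_eq_false (fun hc => h (this.1 hc)), decide_eq_false h]
      have : g q ∈ ⋂ i ∈ F, Cf i (pat p.1 i) := by
        apply Set.mem_iInter₂.2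
        intro i hi
        rw [← hpatq i hi]
        exact Set.mem_iInter.1 (hgmem q) i
      exact hFW this
    · -- open
      have : {q : OmegaStar | ∀ i ∈ F, (e i ∈ q.1 ↔ e i ∈ p.1)} =
          ⋂ i ∈ F, {q : OmegaStar | e i ∈ q.1 ↔ e i ∈ p.1} := by
        ext q; simp
      rw [this]
      apply isOpen_biInter_finset
      intro i _
      by_cases h : e i ∈ p.1
      · have : {q : OmegaStar | e i ∈ q.1 ↔ e i ∈ p.1} =
            Subtype.val ⁻¹' {u : Ultrafilter ℕ | e i ∈ u} := by
          ext q; simp [h]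
        rw [this]
        exact (ultrafilter_isOpen_basic (e i)).preimage continuous_subtype_val
      · have : {q : OmegaStar | e i ∈ q.1 ↔ e i ∈ p.1} =
            Subtype.val ⁻¹' {u : Ultrafilter ℕ | (e i)ᶜ ∈ u} := by
          ext q
          simp only [Set.mem_setOf_eq, Set.mem_preimage, Ultrafilter.compl_mem_iff_notMem]
          constructor
          · intro hq hc
            exact h (hq.1 hc)
          · intro hq
            exact ⟨fun hc => absurd hc hq, fun hc => absurd hc h⟩
        rw [this]
        exact (ultrafilter_isOpen_basic ((e i)ᶜ)).preimage continuous_subtype_val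
    · -- contains p
      intro i _
      exact Iff.rfl
  · -- surjectivity
    intro y
    set εy : κ → Bool := fun i => decide (y ∈ i.1) with hεy
    have hyCf : ∀ i : κ, y ∈ Cf i (εy i) := by
      intro i
      by_cases h : y ∈ i.1
      · have : εy i = true := decide_eq_true h
        rw [this]
        exact subset_closure h
      · have : εy i = false := decide_eq_false h
        rw [this]
        exact h
    have hpcinf : ∀ F : Finset κ, (pc (efn e) F εy).Infinite := by
      intro F
      have hne : pc Cf F εy ≠ ∅ := by
        rw [← Set.nonempty_iff_ne_empty]
        exact ⟨y, mem_pc.2 fun i _ => hyCf i⟩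
      intro hfin
      exact hne ((he F εy).2 hfin)
    -- build a free ultrafilter containing all the efn sets
    set L : Filter ℕ := Filter.generate (Set.range (fun i : κ => efn e i (εy i))) with hL
    have hLne : (L ⊓ Filter.cofinite).NeBot := by
      rw [Filter.inf_neBot_iff]
      intro s hs s' hs'
      rw [Filter.mem_generate_iff] at hs
      obtain ⟨t, htsub, htfin, hts⟩ := hs
      -- extract a Finset of κ
      have hchoice : ∀ u ∈ t, ∃ i : κ, efn e i (εy i) = u := fun u hu => htsub hu
      set T : Finset κ := htfin.toFinset.attach.image
        (fun u => (hchoice u.1 (htfin.mem_toFinset.1 u.2)).choose) with hT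
      have hsub : pc (efn e) T εy ⊆ ⋂₀ t := by
        intro w hw
        intro u hu
        have hmem : (hchoice u (htfin.mem_toFinset.1 (htfin.mem_toFinset.2 hu))).choose ∈ T := by
          rw [hT]
          apply Finset.mem_image.2
          exact ⟨⟨u, htfin.mem_toFinset.2 hu⟩, Finset.mem_attach _ _, rfl⟩
        have hspec := (hchoice u (htfin.mem_toFinset.1 (htfin.mem_toFinset.2 hu))).choose_spec
        have := mem_pc.1 hw _ hmem
        rwa [hspec] at this
      have hinf : (pc (efn e) T εy).Infinite := hpcinf T
      have hinter : (pc (efn e) T εy ∩ s').Infinite := by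
        have hs'co : s'ᶜ.Finite := Filter.mem_cofinite.1 hs'
        apply (hinf.diff hs'co).mono
        rintro w ⟨hw1, hw2⟩
        exact ⟨hw1, Set.not_notMem.1 hw2⟩
      obtain ⟨w, hw1, hw2⟩ := hinter.nonempty
      exact ⟨w, hts (hsub hw1), hw2⟩
    obtain ⟨u, hu⟩ := Ultrafilter.exists_le (L ⊓ Filter.cofinite)
    have huL : ∀ s ∈ L, s ∈ u := fun s hs => (le_trans hu inf_le_left) hs
    have hucof : ∀ s ∈ (Filter.cofinite : Filter ℕ), s ∈ u :=
      fun s hs => (le_trans hu inf_le_right) hs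
    have hfree : ∀ n : ℕ, u ≠ pure n := by
      intro n h
      have h1 : ({n}ᶜ : Set ℕ) ∈ u := by
        apply hucof
        rw [Filter.mem_cofinite, compl_compl]
        exact Set.finite_singleton n
      have h2 : ({n} : Set ℕ) ∈ u := by
        rw [h]
        exact Ultrafilter.mem_pure.2 rfl
      have h3 := Filter.inter_mem h2 h1
      rw [Set.inter_compl_self] at h3
      exact Ultrafilter.empty_notMem h3
    set p : OmegaStar := ⟨u, hfree⟩ with hpdef
    have hpatu : ∀ i : κ, pat u i = εy i := by
      intro i
      have hmemL : efn e i (εy i) ∈ L := Filter.mem_generate_of_mem ⟨i, rfl⟩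
      have hmemu : efn e i (εy i) ∈ u := huL _ hmemL
      show decide (e i ∈ u) = εy i
      cases hb : εy i
      · have : (e i)ᶜ ∈ u := by
          rw [hb] at hmemu
          exact hmemu
        exact decide_eq_false (Ultrafilter.compl_mem_iff_notMem.1 this)
      · have : e i ∈ u := by
          rw [hb] at hmemu
          exact hmemu
        exact decide_eq_true this
    refine ⟨p, ?_⟩
    apply hgspec p y
    apply Set.mem_iInter.2
    intro i
    show y ∈ Cf i (pat u i)
    rw [hpatu i]
    exact hyCf i


end Parov

/-- Parovičenko's theorem: every nonempty compact Hausdorff space of weight at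
most `ℵ₁` is a continuous image of `ω*`. -/
theorem parovicenko
    {Y : Type u} [TopologicalSpace Y] [CompactSpace Y] [T2Space Y] [Nonempty Y]
    (hw : tweight Y ≤ Cardinal.aleph 1) :
    ∃ g : OmegaStar → Y, Continuous g ∧ Function.Surjective g := by
  classical
  haveI hne : Nonempty {B : Set (Set Y) // TopologicalSpace.IsTopologicalBasis B} :=
    ⟨⟨{U | IsOpen U}, TopologicalSpace.isTopologicalBasis_opens⟩⟩
  have hmem : tweight Y ∈ Set.range
      (fun B : {B : Set (Set Y) // TopologicalSpace.IsTopologicalBasis B} =>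
        Cardinal.mk B.1) :=
    csInf_mem (Set.range_nonempty _)
  obtain ⟨B0, hB0⟩ := hmem
  exact Parov.parovTop B0.1 B0.2 (le_of_eq_of_le hB0 hw)
end

section
/- Let X be a compact Hausdorff space such that (X, id_X) is a quotient of (ω*,σ), where id_X is the identity map on X. Then there exists a continuous surjection from ℍ* onto X. -/
open Topology Set

/-- The half line `ℍ = [0, ∞)`. -/
abbrev HalfLine : Type := Set.Ici (0 : ℝ)

/-- `ℍ* = βℍ ∖ ℍ`, the Stone–Čech remainder of the half line. -/
abbrev HStar : Type :=
  {y : StoneCech HalfLine // y ∉ Set.range (stoneCechUnit : HalfLine → StoneCech HalfLine)}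

/-! ### Auxiliary material -/

open Filter

section Interp

/-- piecewise-linear interpolation of `A : ℤ → ℝ`. -/
noncomputable def interp (A : ℤ → ℝ) (t : ℝ) : ℝ :=
  A ⌊t⌋ + (t - ⌊t⌋) * (A (⌊t⌋ + 1) - A ⌊t⌋)

lemma interp_affine (A : ℤ → ℝ) (m : ℤ) {t : ℝ} (h1 : (m : ℝ) ≤ t) (h2 : t < (m : ℝ) + 1) :
    interp A t = A m + (t - m) * (A (m + 1) - A m) := by
  have hm : ⌊t⌋ = m := Int.floor_eq_iff.mpr ⟨h1, by exact_mod_cast h2⟩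
  rw [interp, hm]

lemma interp_intCast (A : ℤ → ℝ) (m : ℤ) : interp A (m : ℝ) = A m := by
  simp [interp]

lemma continuous_affine (c1 c2 c3 : ℝ) : Continuous (fun t : ℝ => c1 + (t - c2) * c3) := by
  continuity

lemma continuous_interp (A : ℤ → ℝ) : Continuous (interp A) := by
  rw [continuous_iff_continuousAt]
  intro x
  rw [continuousAt_iff_continuous_left_right]
  constructor
  · rcases eq_or_lt_of_le (Int.floor_le x) with hx | hx
    · set m := ⌊x⌋ with hm
      have haff : ContinuousWithinAt
          (fun t : ℝ => A (m - 1) + (t - ((m : ℝ) - 1)) * (A m - A (m - 1))) (Set.Iic x) x :=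
        (continuous_affine _ _ _).continuousWithinAt
      have hmem : x ∈ Set.Ioc ((m : ℝ) - 1) ((m : ℝ)) := by
        rw [← hx]; exact ⟨by linarith, le_rfl⟩
      refine haff.congr_of_eventuallyEq ?_ ?_
      · refine Filter.eventuallyEq_of_mem (Icc_mem_nhdsLE_of_mem hmem) ?_
        intro t ht
        rcases eq_or_lt_of_le ht.2 with h | h
        · rw [h, interp_intCast]; ring
        · have h1 : ((m - 1 : ℤ) : ℝ) ≤ t := by push_cast; linarith [ht.1]
          have h2 : t < ((m - 1 : ℤ) : ℝ) + 1 := by push_cast; linarith [h]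
          rw [interp_affine A (m - 1) h1 h2]
          have h3 : m - 1 + 1 = m := by ring
          rw [h3]; push_cast; ring
      · rw [← hx, interp_intCast]; ring
    · have haff : ContinuousWithinAt
          (fun t : ℝ => A ⌊x⌋ + (t - (⌊x⌋ : ℝ)) * (A (⌊x⌋ + 1) - A ⌊x⌋)) (Set.Iic x) x :=
        (continuous_affine _ _ _).continuousWithinAt
      refine haff.congr_of_eventuallyEq ?_ ?_
      · refine Filter.eventuallyEq_of_mem
          (Icc_mem_nhdsLE_of_mem (⟨hx, le_refl x⟩ : x ∈ Set.Ioc ((⌊x⌋ : ℝ)) x)) ?_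
        intro t ht
        exact interp_affine A ⌊x⌋ ht.1 (lt_of_le_of_lt ht.2 (Int.lt_floor_add_one x))
      · exact interp_affine A ⌊x⌋ (Int.floor_le x) (Int.lt_floor_add_one x)
  · have haff : ContinuousWithinAt
        (fun t : ℝ => A ⌊x⌋ + (t - (⌊x⌋ : ℝ)) * (A (⌊x⌋ + 1) - A ⌊x⌋)) (Set.Ici x) x :=
      (continuous_affine _ _ _).continuousWithinAt
    refine haff.congr_of_eventuallyEq ?_ ?_
    · refine Filter.eventuallyEq_of_mem
        (Ico_mem_nhdsGE_of_mem (⟨Int.floor_le x, Int.lt_floor_add_one x⟩ :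
          x ∈ Set.Ico ((⌊x⌋ : ℝ)) ((⌊x⌋ : ℝ) + 1))) ?_
      intro t ht
      exact interp_affine A ⌊x⌋ ht.1 ht.2
    · exact interp_affine A ⌊x⌋ (Int.floor_le x) (Int.lt_floor_add_one x)

lemma abs_interp_le (A : ℤ → ℝ) (c : ℝ) (hA : ∀ k, |A k| ≤ c) (t : ℝ) : |interp A t| ≤ c := by
  have h0 := Int.floor_le t
  have h1 := Int.lt_floor_add_one t
  have hn := abs_le.mp (hA ⌊t⌋)
  have hm := abs_le.mp (hA (⌊t⌋ + 1))
  rw [interp, abs_le]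
  constructor <;> nlinarith [hn.1, hn.2, hm.1, hm.2]

end Interp

section SCAux

variable {α : Type*} [TopologicalSpace α]

/-- The canonical map from ultrafilters on `α` onto `StoneCech α`. -/
noncomputable def scMk (α : Type*) [TopologicalSpace α] (U : Ultrafilter α) : StoneCech α :=
  T2Quotient.mk (Quot.mk _ U : PreStoneCech α)

lemma scMk_surjective : Function.Surjective (scMk α) := by
  intro y
  obtain ⟨z, rfl⟩ := (T2Quotient.surjective_mk (PreStoneCech α)) y
  obtain ⟨U, rfl⟩ := Quot.exists_rep z
  exact ⟨U, rfl⟩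

lemma continuous_scMk : Continuous (scMk α) :=
  (T2Quotient.continuous_mk _).comp continuous_quot_mk

lemma tendsto_stoneCechUnit_scMk (U : Ultrafilter α) :
    Tendsto stoneCechUnit (U : Filter α) (𝓝 (scMk α U)) := by
  have h1 : Tendsto pure (U : Filter α) (𝓝 U) := U.tendsto_pure_self
  exact ((continuous_scMk (α := α)).tendsto U).comp h1

lemma scMk_eq_unit {U : Ultrafilter α} {t : α} (h : (U : Filter α) ≤ 𝓝 t) :
    scMk α U = stoneCechUnit t :=
  congrArg T2Quotient.mk (Quot.sound ⟨t, h, pure_le_nhds t⟩)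

lemma stoneCechExtend_scMk {γ : Type*} [TopologicalSpace γ] [T2Space γ] [CompactSpace γ]
    {g : α → γ} (hg : Continuous g) (U : Ultrafilter α) {c : γ}
    (h : Tendsto g (U : Filter α) (𝓝 c)) :
    stoneCechExtend hg (scMk α U) = c := by
  have h1 : Tendsto (stoneCechExtend hg ∘ stoneCechUnit) (U : Filter α)
      (𝓝 (stoneCechExtend hg (scMk α U))) :=
    ((continuous_stoneCechExtend hg).tendsto _).comp (tendsto_stoneCechUnit_scMk U)
  rw [stoneCechExtend_extends hg] at h1
  exact tendsto_nhds_unique h1 h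

end SCAux

section CubeAux

/-- A free ultrafilter on `ℕ` contains every cofinite set. -/
lemma omegaStar_mem_of_cofinite (p : OmegaStar) {S : Set ℕ} (h : Sᶜ.Finite) : S ∈ p.1 := by
  by_contra hS
  have hc : Sᶜ ∈ p.1 := Ultrafilter.compl_mem_iff_notMem.mpr hS
  obtain ⟨x, -, hx⟩ := Ultrafilter.eq_pure_of_finite_mem h hc
  exact p.2 x hx

/-- The `ℕ`-valued floor map on the half line. -/
noncomputable def natFloorH (t : HalfLine) : ℕ := ⌊t.1⌋₊

/-- The inclusion of `ℕ` into the half line. -/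
def natInclH (n : ℕ) : HalfLine := ⟨(n : ℝ), Set.mem_Ici.mpr (Nat.cast_nonneg n)⟩

variable {X : Type u} [TopologicalSpace X] [CompactSpace X] [T2Space X]

/-- Evaluation embedding of `X` into a cube. -/
noncomputable def toCube (x : X) : ∀ f : C(X, ℝ), Set.Icc (-‖f‖) ‖f‖ :=
  fun f => Set.projIcc _ _ (neg_le_self (norm_nonneg f)) (f x)

lemma toCube_val (x : X) (f : C(X, ℝ)) : (toCube x f : ℝ) = f x := by
  have hb : ‖f x‖ ≤ ‖f‖ := f.norm_coe_le_norm x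
  rw [Real.norm_eq_abs] at hb
  have hmem : f x ∈ Set.Icc (-‖f‖) ‖f‖ := ⟨(abs_le.mp hb).1, (abs_le.mp hb).2⟩
  rw [toCube, Set.projIcc_of_mem _ hmem]

lemma continuous_toCube : Continuous (toCube (X := X)) :=
  continuous_pi fun f => continuous_projIcc.comp f.continuous

lemma toCube_injective : Function.Injective (toCube (X := X)) := by
  intro x y hxy
  by_contra hne
  obtain ⟨φ, hφ0, hφ1, -⟩ := exists_continuous_zero_one_of_isClosed
    (isClosed_singleton (x := x)) (isClosed_singleton (x := y))
    (Set.disjoint_singleton.mpr hne)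
  have h1 : (toCube x φ : ℝ) = (toCube y φ : ℝ) := by rw [hxy]
  rw [toCube_val, toCube_val] at h1
  have hx0 : φ x = 0 := hφ0 rfl
  have hy1 : φ y = 1 := hφ1 rfl
  rw [hx0, hy1] at h1
  exact zero_ne_one h1

/-- The interpolation map from the half line into the cube. -/
noncomputable def hbMap (a : C(X, ℝ) → ℕ → ℝ) (t : HalfLine) :
    ∀ f : C(X, ℝ), Set.Icc (-‖f‖) ‖f‖ :=
  fun f => Set.projIcc _ _ (neg_le_self (norm_nonneg f)) (interp (fun k => a f k.toNat) t.1)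

lemma continuous_hbMap (a : C(X, ℝ) → ℕ → ℝ) : Continuous (hbMap a) :=
  continuous_pi fun _ =>
    continuous_projIcc.comp ((continuous_interp _).comp continuous_subtype_val)

lemma hbMap_val (a : C(X, ℝ) → ℕ → ℝ) (hbd : ∀ f n, |a f n| ≤ ‖f‖) (t : HalfLine)
    (f : C(X, ℝ)) : (hbMap a t f : ℝ) = interp (fun k => a f k.toNat) t.1 := by
  have hmem : interp (fun k => a f k.toNat) t.1 ∈ Set.Icc (-‖f‖) ‖f‖ := by
    have := abs_le.mp (abs_interp_le _ ‖f‖ (fun k => hbd f k.toNat) t.1)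
    exact ⟨this.1, this.2⟩
  rw [hbMap, Set.projIcc_of_mem _ hmem]

end CubeAux

/-- If `(X, id)` is a quotient of `(ω*, σ)`, then `X` is a continuous image of `ℍ*`. -/
theorem continuous_image_of_HStar_of_id_quotient
    {X : Type u} [TopologicalSpace X] [CompactSpace X] [T2Space X]
    (h : IsQuotientOfShift (id : X → X)) :
    ∃ g : HStar → X, Continuous g ∧ Function.Surjective g := by
  classical
  obtain ⟨Q, hQc, hQs, hQσ⟩ := h
  -- ω* is a closed subset of βℕ
  have hmem_iff : ∀ (p : Ultrafilter ℕ) (n : ℕ), ({n} : Set ℕ) ∈ p ↔ p = pure n := by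
    intro p n
    constructor
    · intro hsing
      obtain ⟨x, hx, hpx⟩ := Ultrafilter.eq_pure_of_finite_mem (Set.finite_singleton n) hsing
      rcases hx with rfl
      exact hpx
    · rintro rfl; exact singleton_mem_pure
  have hC_closed : IsClosed {p : Ultrafilter ℕ | ∀ n : ℕ, p ≠ pure n} := by
    rw [← isOpen_compl_iff]
    have hCc : {p : Ultrafilter ℕ | ∀ n : ℕ, p ≠ pure n}ᶜ
        = ⋃ n : ℕ, {p : Ultrafilter ℕ | ({n} : Set ℕ) ∈ p} := by
      ext p
      simp only [Set.mem_compl_iff, Set.mem_setOf_eq, Set.mem_iUnion]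
      constructor
      · intro hp
        push_neg at hp
        obtain ⟨n, hn⟩ := hp
        exact ⟨n, (hmem_iff p n).mpr hn⟩
      · rintro ⟨n, hn⟩ hall
        exact hall n ((hmem_iff p n).mp hn)
    rw [hCc]
    exact isOpen_iUnion fun n => ultrafilter_isOpen_basic {n}
  -- the coordinate sequences
  have key : ∀ f : C(X, ℝ), ∃ a : ℕ → ℝ,
      (∀ n, |a n| ≤ ‖f‖) ∧
      (∀ p : OmegaStar, Tendsto a (p.1 : Filter ℕ) (𝓝 (f (Q p)))) := by
    intro f
    have hcont : Continuous (fun p : {p : Ultrafilter ℕ // ∀ n : ℕ, p ≠ pure n} => f (Q p)) :=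
      f.continuous.comp hQc
    obtain ⟨G, hG⟩ := ContinuousMap.exists_restrict_eq hC_closed
      (⟨_, hcont⟩ : C({p : Ultrafilter ℕ | ∀ n : ℕ, p ≠ pure n}, ℝ))
    have hG' : ∀ p : OmegaStar, G p.1 = f (Q p) := by
      intro p
      have := DFunLike.congr_fun hG (⟨p.1, p.2⟩ : {p : Ultrafilter ℕ | ∀ n : ℕ, p ≠ pure n})
      exact this
    refine ⟨fun n => max (-‖f‖) (min (G (pure n)) ‖f‖), ?_, ?_⟩
    · intro n
      rw [abs_le]
      constructor
      · exact le_max_left _ _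
      · exact max_le (by linarith [norm_nonneg f]) (min_le_right _ _)
    · intro p
      have h1 : Tendsto (fun n : ℕ => G (pure n)) (p.1 : Filter ℕ) (𝓝 (G p.1)) :=
        (G.continuous.tendsto _).comp p.1.tendsto_pure_self
      have h2 : Tendsto (fun n : ℕ => max (-‖f‖) (min (G (pure n)) ‖f‖)) (p.1 : Filter ℕ)
          (𝓝 (max (-‖f‖) (min (G p.1) ‖f‖))) :=
        tendsto_const_nhds.max (h1.min tendsto_const_nhds)
      have h3 : max (-‖f‖) (min (G p.1) ‖f‖) = f (Q p) := by
        rw [hG' p]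
        have hb : ‖f (Q p)‖ ≤ ‖f‖ := f.norm_coe_le_norm (Q p)
        rw [Real.norm_eq_abs] at hb
        rw [min_eq_left (abs_le.mp hb).2, max_eq_right (abs_le.mp hb).1]
      rwa [h3] at h2
  choose a ha_bd ha_lim using key
  -- successive differences tend to zero
  have ha_diff : ∀ f : C(X, ℝ),
      Tendsto (fun n => a f (n + 1) - a f n) atTop (𝓝 0) := by
    intro f
    by_contra hcon
    rw [Metric.tendsto_atTop] at hcon
    push_neg at hcon
    obtain ⟨ε, hε, hfreq⟩ := hcon
    set S : Set ℕ := {n | ε ≤ dist (a f (n + 1) - a f n) 0} with hSdef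
    have hS : S.Infinite := by
      intro hfin
      obtain ⟨b, hb⟩ := hfin.bddAbove
      obtain ⟨n, hnb, hmem⟩ := hfreq (b + 1)
      have := hb hmem
      omega
    haveI hne : Filter.NeBot (Filter.cofinite ⊓ Filter.principal S) := by
      rw [Filter.inf_principal_neBot_iff]
      intro U hU
      refine Set.Infinite.nonempty (Set.Infinite.mono ?_ (hS.diff (Filter.mem_cofinite.mp hU)))
      rintro x ⟨hxS, hxU⟩
      exact ⟨not_not.mp hxU, hxS⟩
    set p : Ultrafilter ℕ := Ultrafilter.of (Filter.cofinite ⊓ Filter.principal S) with hpdef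
    have hple : (p : Filter ℕ) ≤ Filter.cofinite ⊓ Filter.principal S := Ultrafilter.of_le _
    have hpfree : ∀ n : ℕ, p ≠ pure n := by
      intro n hn
      have h1 : ({n}ᶜ : Set ℕ) ∈ Filter.cofinite := by
        rw [Filter.mem_cofinite, compl_compl]
        exact Set.finite_singleton n
      have h2 : ({n}ᶜ : Set ℕ) ∈ p := hple (Filter.mem_inf_of_left h1)
      rw [hn] at h2
      simp at h2
    have hSp : S ∈ p := hple (Filter.mem_inf_of_right (Filter.mem_principal_self S))
    set pf : OmegaStar := ⟨p, hpfree⟩ with hpf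
    have h1 : Tendsto (a f) (p : Filter ℕ) (𝓝 (f (Q pf))) := ha_lim f pf
    have hs := ha_lim f (shiftMap pf)
    rw [hQσ pf] at hs
    simp only [id_eq] at hs
    have hcoe : (((shiftMap pf).1 : Ultrafilter ℕ) : Filter ℕ) = Filter.map (· + 1) (p : Filter ℕ) :=
      rfl
    rw [hcoe, Filter.tendsto_map'_iff] at hs
    have h3 := hs.sub h1
    rw [sub_self] at h3
    have hlt : {n : ℕ | dist (a f (n + 1) - a f n) 0 < ε} ∈ p := by
      have := Metric.tendsto_nhds.mp h3 ε hε
      exact Filter.eventually_iff.mp this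
    obtain ⟨n, hn1, hn2⟩ := Filter.nonempty_of_mem (Filter.inter_mem hSp hlt)
    simp only [hSdef, Set.mem_setOf_eq] at hn1 hn2
    linarith
  -- the cube is compact Hausdorff
  haveI hIccC : ∀ f : C(X, ℝ), CompactSpace (Set.Icc (-‖f‖) ‖f‖) := fun f =>
    isCompact_iff_compactSpace.mp isCompact_Icc
  have hbc : Continuous (hbMap a) := continuous_hbMap a
  -- freeness of pushed-forward ultrafilters
  have hfree : ∀ U : Ultrafilter HalfLine, (∀ r : ℝ, {t : HalfLine | r ≤ t.1} ∈ U) →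
      ∀ n : ℕ, Ultrafilter.map natFloorH U ≠ pure n := by
    intro U hU n hn
    have h1 : natFloorH ⁻¹' {n} ∈ U := by
      apply Ultrafilter.mem_map.mp
      rw [hn]; exact rfl
    have h2 : {t : HalfLine | ((n : ℝ) + 1) ≤ t.1} ∈ U := hU ((n : ℝ) + 1)
    obtain ⟨t, ht1, ht2⟩ := Filter.nonempty_of_mem (Filter.inter_mem h1 h2)
    simp only [Set.mem_preimage, Set.mem_singleton_iff, Set.mem_setOf_eq] at ht1 ht2
    have : n + 1 ≤ natFloorH t := Nat.le_floor (by push_cast; linarith)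
    omega
  -- the main convergence lemma
  have hconv : ∀ U : Ultrafilter HalfLine, (hU : ∀ r : ℝ, {t : HalfLine | r ≤ t.1} ∈ U) →
      Tendsto (hbMap a) (U : Filter HalfLine)
        (𝓝 (toCube (Q ⟨Ultrafilter.map natFloorH U, hfree U hU⟩))) := by
    intro U hU
    rw [tendsto_pi_nhds]
    intro f
    rw [tendsto_subtype_rng]
    set p : OmegaStar := ⟨Ultrafilter.map natFloorH U, hfree U hU⟩ with hpdef
    simp only [hbMap_val a ha_bd, toCube_val]
    rw [Metric.tendsto_nhds]
    intro ε hε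
    have hε2 : 0 < ε / 2 := by linarith
    have hT1 : {n : ℕ | dist (a f n) (f (Q p)) < ε / 2} ∈ Ultrafilter.map natFloorH U := by
      have := Metric.tendsto_nhds.mp (ha_lim f p) (ε / 2) hε2
      exact Filter.eventually_iff.mp this
    have hT1' : natFloorH ⁻¹' {n : ℕ | dist (a f n) (f (Q p)) < ε / 2} ∈ U :=
      Ultrafilter.mem_map.mp hT1
    obtain ⟨N, hN⟩ := Metric.tendsto_atTop.mp (ha_diff f) (ε / 2) hε2
    have hU2 : {t : HalfLine | (N : ℝ) ≤ t.1} ∈ U := hU N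
    rw [Filter.eventually_iff]
    refine Filter.mem_of_superset (Filter.inter_mem hT1' hU2) ?_
    rintro t ⟨ht1, ht2⟩
    simp only [Set.mem_preimage, Set.mem_setOf_eq, natFloorH] at ht1 ht2 ⊢
    have h0t : (0 : ℝ) ≤ t.1 := t.2
    set n : ℕ := ⌊(t : ℝ)⌋₊ with hndef
    have heq1 : ⌊(t : ℝ)⌋.toNat = n := by rw [hndef]; exact Int.floor_toNat _
    have hge : 0 ≤ ⌊(t : ℝ)⌋ := Int.floor_nonneg.mpr h0t
    have heq2 : (⌊(t : ℝ)⌋ + 1).toNat = n + 1 := by omega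
    have hfl1 : ((⌊(t : ℝ)⌋ : ℤ) : ℝ) = (n : ℝ) := by
      rw [hndef]
      exact_mod_cast (Int.natCast_floor_eq_floor h0t).symm
    have hnN : N ≤ n := by
      rw [hndef]
      exact Nat.le_floor (by exact_mod_cast ht2)
    have hd := hN n hnN
    rw [Real.dist_eq, sub_zero] at hd
    rw [Real.dist_eq] at ht1 ⊢
    have hμ0 : 0 ≤ t.1 - (n : ℝ) := by
      rw [← hfl1]; linarith [Int.floor_le (t : ℝ)]
    have hμ1 : t.1 - (n : ℝ) ≤ 1 := by
      rw [← hfl1]; linarith [Int.lt_floor_add_one (t : ℝ)]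
    have hint : interp (fun k : ℤ => a f k.toNat) t.1
        = a f n + (t.1 - (n : ℝ)) * (a f (n + 1) - a f n) := by
      simp only [interp]
      rw [heq1, heq2, hfl1]
    rw [hint]
    have heq : a f n + (t.1 - (n : ℝ)) * (a f (n + 1) - a f n) - f (Q p)
        = (t.1 - (n : ℝ)) * (a f (n + 1) - a f n) + (a f n - f (Q p)) := by ring
    have habs : |a f n + (t.1 - (n : ℝ)) * (a f (n + 1) - a f n) - f (Q p)|
        ≤ (t.1 - (n : ℝ)) * |a f (n + 1) - a f n| + |a f n - f (Q p)| := by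
      rw [heq]
      refine (abs_add_le _ _).trans ?_
      rw [abs_mul, abs_of_nonneg hμ0]
    have h3 : (t.1 - (n : ℝ)) * |a f (n + 1) - a f n| ≤ |a f (n + 1) - a f n| :=
      mul_le_of_le_one_left (abs_nonneg _) hμ1
    linarith
  -- main structure lemmas
  have st1 : ∀ y : StoneCech HalfLine, y ∉ Set.range stoneCechUnit →
      ∃ p : OmegaStar, stoneCechExtend hbc y = toCube (Q p) := by
    intro y hy
    obtain ⟨U, rfl⟩ := scMk_surjective y
    have hU : ∀ r : ℝ, {t : HalfLine | r ≤ t.1} ∈ U := by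
      intro r
      by_contra hr
      have hcompl : {t : HalfLine | r ≤ t.1}ᶜ ∈ U := Ultrafilter.compl_mem_iff_notMem.mpr hr
      have hKmem : (Subtype.val ⁻¹' Set.Icc (0 : ℝ) r : Set HalfLine) ∈ U := by
        refine Filter.mem_of_superset hcompl ?_
        intro t ht
        simp only [Set.mem_compl_iff, Set.mem_setOf_eq, not_le] at ht
        exact ⟨t.2, le_of_lt ht⟩
      have hce : IsClosedEmbedding (Subtype.val : HalfLine → ℝ) :=
        IsClosedEmbedding.subtypeVal isClosed_Ici
      have hK : IsCompact (Subtype.val ⁻¹' Set.Icc (0 : ℝ) r : Set HalfLine) :=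
        hce.isInducing.isCompact_preimage hce.isClosed_range isCompact_Icc
      obtain ⟨tt, -, htt⟩ := hK.ultrafilter_le_nhds U (le_principal_iff.mpr hKmem)
      exact hy ⟨tt, (scMk_eq_unit htt).symm⟩
    exact ⟨⟨Ultrafilter.map natFloorH U, hfree U hU⟩,
      stoneCechExtend_scMk hbc U (hconv U hU)⟩
  have st2 : ∀ p0 : OmegaStar, ∃ y, y ∉ Set.range stoneCechUnit ∧
      stoneCechExtend hbc y = toCube (Q p0) := by
    intro p0
    set U : Ultrafilter HalfLine := Ultrafilter.map natInclH p0.1 with hUdef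
    have hU : ∀ r : ℝ, {t : HalfLine | r ≤ t.1} ∈ U := by
      intro r
      rw [hUdef]
      apply Ultrafilter.mem_map.mpr
      have hsub : ({n : ℕ | r ≤ (n : ℝ)})ᶜ.Finite := by
        apply Set.Finite.subset (Set.finite_Iio (⌈r⌉₊))
        intro n hn
        simp only [Set.mem_compl_iff, Set.mem_setOf_eq, not_le] at hn
        exact Set.mem_Iio.mpr (Nat.lt_ceil.mpr hn)
      exact omegaStar_mem_of_cofinite p0 hsub
    have hmapU : Ultrafilter.map natFloorH U = p0.1 := by
      rw [hUdef, Ultrafilter.map_map]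
      have hid : natFloorH ∘ natInclH = id := funext fun n => Nat.floor_natCast n
      rw [hid, Ultrafilter.map_id]
    have hy : scMk HalfLine U ∉ Set.range stoneCechUnit := by
      rintro ⟨t, ht⟩
      haveI : CompactSpace (Set.Icc (0 : ℝ) 1) := isCompact_iff_compactSpace.mp isCompact_Icc
      have hψmem : ∀ s : HalfLine, min |s.1 - t.1| 1 ∈ Set.Icc (0 : ℝ) 1 :=
        fun s => ⟨le_min (abs_nonneg _) zero_le_one, min_le_right _ _⟩
      have hΨc : Continuous (fun s : HalfLine => (⟨min |s.1 - t.1| 1, hψmem s⟩ : Set.Icc (0:ℝ) 1)) :=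
        (((continuous_subtype_val.sub continuous_const).abs).min continuous_const).subtype_mk _
      have h1 : Tendsto (fun s : HalfLine => (⟨min |s.1 - t.1| 1, hψmem s⟩ : Set.Icc (0:ℝ) 1))
          (U : Filter HalfLine) (𝓝 (stoneCechExtend hΨc (scMk HalfLine U))) := by
        have hcomp := ((continuous_stoneCechExtend hΨc).tendsto _).comp
          (tendsto_stoneCechUnit_scMk U)
        rwa [show stoneCechExtend hΨc ∘ stoneCechUnit
          = (fun s : HalfLine => (⟨min |s.1 - t.1| 1, hψmem s⟩ : Set.Icc (0:ℝ) 1))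
          from stoneCechExtend_extends hΨc] at hcomp
      rw [← ht, show stoneCechExtend hΨc (stoneCechUnit t)
        = (⟨min |t.1 - t.1| 1, hψmem t⟩ : Set.Icc (0:ℝ) 1)
        from congrFun (stoneCechExtend_extends hΨc) t] at h1
      have h3 : Tendsto (fun s : HalfLine => min |s.1 - t.1| 1) (U : Filter HalfLine) (𝓝 0) := by
        have hval := (continuous_subtype_val.tendsto _).comp h1
        simpa [Function.comp_def] using hval
      have h4 : ∀ᶠ s : HalfLine in (U : Filter HalfLine), min |s.1 - t.1| 1 < 1 :=
        h3.eventually_lt_const zero_lt_one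
      obtain ⟨s, hs1, hs2⟩ := Filter.nonempty_of_mem
        (Filter.inter_mem (Filter.eventually_iff.mp h4) (hU (t.1 + 1)))
      simp only [Set.mem_setOf_eq] at hs1 hs2
      have habs : (1 : ℝ) ≤ |s.1 - t.1| := by
        rw [abs_of_nonneg (by linarith)]; linarith
      have : (1 : ℝ) ≤ min |s.1 - t.1| 1 := le_min habs le_rfl
      linarith
    refine ⟨scMk HalfLine U, hy, ?_⟩
    rw [stoneCechExtend_scMk hbc U (hconv U hU)]
    exact congrArg toCube (congrArg Q (Subtype.ext hmapU))
  -- assemble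
  have hchoice : ∀ y : HStar, ∃ x : X, stoneCechExtend hbc y.1 = toCube x := by
    intro y
    obtain ⟨p, hp⟩ := st1 y.1 y.2
    exact ⟨Q p, hp⟩
  choose g hg using hchoice
  have he : IsClosedEmbedding (toCube (X := X)) :=
    continuous_toCube.isClosedEmbedding toCube_injective
  refine ⟨g, ?_, ?_⟩
  · have hcomp : toCube ∘ g = fun y : HStar => stoneCechExtend hbc y.1 :=
      funext fun y => (hg y).symm
    rw [he.isInducing.continuous_iff, hcomp]
    exact (continuous_stoneCechExtend hbc).comp continuous_subtype_val
  · intro x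
    obtain ⟨p0, rfl⟩ := hQs x
    obtain ⟨y, hy, hval⟩ := st2 p0
    refine ⟨⟨y, hy⟩, toCube_injective ?_⟩
    rw [← hg ⟨y, hy⟩]
    exact hval
end

section
/- For every function q : ℕ → ℕ all of whose fibers are finite (q is finite-to-one), there exists a free (non-principal) ultrafilter p on ℕ such that s(q⁎(s(p))) ≠ q⁎(p), where s denotes the pushforward of ultrafilters under n ↦ n+1 and q⁎ denotes the pushforward of ultrafilters under q. Equivalently, the self-map of ω* induced by q does not satisfy Q ∘ σ = σ⁻¹ ∘ Q. -/
/-- For every finite-to-one `q : ℕ → ℕ` there is a free ultrafilter `p` on `ℕ`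
with `s(q⁎(s(p))) ≠ q⁎(p)`, where `s` is pushforward under `n ↦ n + 1`;
i.e. the self-map of `ω*` induced by `q` does not conjugate `σ` to `σ⁻¹`. -/
theorem exists_free_ultrafilter_shift_map_ne
    (q : ℕ → ℕ) (hq : ∀ n : ℕ, (q ⁻¹' {n}).Finite) :
    ∃ p : Ultrafilter ℕ, (∀ n : ℕ, p ≠ pure n) ∧
      Ultrafilter.map (· + 1) (Ultrafilter.map q (Ultrafilter.map (· + 1) p)) ≠
        Ultrafilter.map q p := by
  classical
  set f : ℕ → ℕ := fun n => q (n + 1) + 1 with hf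
  -- preimages of finite sets under `q` are finite
  have hqpre : ∀ B : Set ℕ, B.Finite → (q ⁻¹' B).Finite := by
    intro B hB
    have h : q ⁻¹' B = ⋃ b ∈ B, q ⁻¹' {b} := by ext x; simp
    rw [h]; exact hB.biUnion fun b _ => hq b
  have hfpre : ∀ B : Set ℕ, B.Finite → (f ⁻¹' B).Finite := by
    intro B hB
    have h1 : (((· + 1) : ℕ → ℕ) ⁻¹' B).Finite :=
      hB.preimage (fun a _ b _ h => by omega)
    have h2 : (q ⁻¹' (((· + 1) : ℕ → ℕ) ⁻¹' B)).Finite := hqpre _ h1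
    have h3 : (f ⁻¹' B) =
        ((· + 1) : ℕ → ℕ) ⁻¹' (q ⁻¹' (((· + 1) : ℕ → ℕ) ⁻¹' B)) := by
      ext x; simp [hf]
    rw [h3]; exact h2.preimage (fun a _ b _ h => by omega)
  -- there are infinitely many `n` with `q n ≠ q (n+1) + 1`
  have hD : {n | q n ≠ f n}.Infinite := by
    by_contra h
    rw [Set.not_infinite] at h
    obtain ⟨N, hN⟩ := h.bddAbove
    have step : ∀ n, N < n → q n = q (n + 1) + 1 := by
      intro n hn
      by_contra hne
      have : n ≤ N := hN (show n ∈ {n | q n ≠ f n} from hne)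
      omega
    have iter : ∀ k, q (N + 1) = q (N + 1 + k) + k := by
      intro k
      induction k with
      | zero => simp
      | succ k ih =>
        have h1 := step (N + 1 + k) (by omega)
        have e : N + 1 + (k + 1) = (N + 1 + k) + 1 := by ring
        rw [e]
        omega
    have := iter (q (N + 1) + 1)
    omega
  -- at every stage we can pick a new point avoiding a finite forbidden set
  have key : ∀ (n : ℕ) (B : Finset ℕ),
      {m | n < m ∧ q m ∉ B ∧ f m ∉ B ∧ q m ≠ f m}.Nonempty := by
    intro n B
    have hbad : ({m | m ≤ n} ∪ q ⁻¹' ↑B ∪ f ⁻¹' ↑B).Finite :=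
      ((Set.finite_le_nat n).union (hqpre _ B.finite_toSet)).union
        (hfpre _ B.finite_toSet)
    obtain ⟨m, hm1, hm2⟩ := (hD.diff hbad).nonempty
    simp only [Set.mem_union, Set.mem_setOf_eq, Set.mem_preimage,
      Finset.mem_coe, not_or, not_le] at hm2
    exact ⟨m, hm2.1.1, hm2.1.2, hm2.2, hm1⟩
  -- recursive construction
  let F : ℕ → ℕ × Finset ℕ := fun k => Nat.rec
    ((key 0 ∅).choose, {q (key 0 ∅).choose, f (key 0 ∅).choose})
    (fun _ s => ((key s.1 s.2).choose,
      insert (q (key s.1 s.2).choose) (insert (f (key s.1 s.2).choose) s.2))) k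
  have specs : ∀ k, (F k).1 < (F (k + 1)).1 ∧ q ((F (k + 1)).1) ∉ (F k).2 ∧
      f ((F (k + 1)).1) ∉ (F k).2 ∧ q ((F (k + 1)).1) ≠ f ((F (k + 1)).1) :=
    fun k => (key (F k).1 (F k).2).choose_spec
  have spec0 : q ((F 0).1) ≠ f ((F 0).1) := (key 0 ∅).choose_spec.2.2.2
  have hmem : ∀ k, q ((F k).1) ∈ (F k).2 ∧ f ((F k).1) ∈ (F k).2 := by
    intro k
    cases k with
    | zero => constructor <;> simp [F]
    | succ k =>
      constructor <;> simp [F]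
  have hsub : ∀ k, (F k).2 ⊆ (F (k + 1)).2 := by
    intro k x hx
    show x ∈ insert _ (insert _ (F k).2)
    exact Finset.mem_insert_of_mem (Finset.mem_insert_of_mem hx)
  have hsub' : ∀ j k, j ≤ k → (F j).2 ⊆ (F k).2 := by
    intro j k
    induction k with
    | zero =>
      intro hjk
      have : j = 0 := by omega
      subst this; exact fun x hx => hx
    | succ k ih =>
      intro hjk
      rcases Nat.lt_or_ge j (k + 1) with h | h
      · exact (ih (by omega)).trans (hsub k)
      · have : j = k + 1 := by omega
        subst this; exact fun x hx => hx
  have hmem' : ∀ j k, j ≤ k → q ((F j).1) ∈ (F k).2 ∧ f ((F j).1) ∈ (F k).2 :=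
    fun j k hjk => ⟨hsub' j k hjk (hmem j).1, hsub' j k hjk (hmem j).2⟩
  have hnejj : ∀ j, q ((F j).1) ≠ f ((F j).1) := by
    intro j
    cases j with
    | zero => exact spec0
    | succ j => exact (specs j).2.2.2
  have main : ∀ j k, q ((F j).1) ≠ f ((F k).1) := by
    intro j k
    rcases lt_trichotomy j k with h | h | h
    · obtain ⟨k', rfl⟩ : ∃ k', k = k' + 1 := ⟨k - 1, by omega⟩
      have h1 := (specs k').2.2.1
      have h2 := (hmem' j k' (by omega)).1
      intro he; rw [he] at h2; exact h1 h2
    · subst h; exact hnejj j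
    · obtain ⟨j', rfl⟩ : ∃ j', j = j' + 1 := ⟨j - 1, by omega⟩
      have h1 := (specs j').2.1
      have h2 := (hmem' k j' (by omega)).2
      intro he; rw [he] at h1; exact h1 h2
  -- the separating set
  set a : ℕ → ℕ := fun k => (F k).1 with ha
  have hamono : StrictMono a := strictMono_nat_of_lt_succ fun k => (specs k).1
  set S : Set ℕ := q '' Set.range a with hS
  set G : Set ℕ := {n | q n ∈ S ∧ f n ∉ S} with hG
  have hrange : Set.range a ⊆ G := by
    rintro _ ⟨k, rfl⟩
    refine ⟨⟨a k, ⟨k, rfl⟩, rfl⟩, ?_⟩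
    rintro ⟨_, ⟨j, rfl⟩, hj⟩
    exact main j k hj
  have hGinf : G.Infinite :=
    (Set.infinite_range_of_injective hamono.injective).mono hrange
  -- the ultrafilter
  have hnb : (Filter.cofinite ⊓ Filter.principal G).NeBot :=
    hGinf.cofinite_inf_principal_neBot
  refine ⟨Ultrafilter.of (Filter.cofinite ⊓ Filter.principal G), ?_, ?_⟩
  · intro n hpure
    have h1 : ({n}ᶜ : Set ℕ) ∈ Ultrafilter.of (Filter.cofinite ⊓ Filter.principal G) :=
      Ultrafilter.of_le _ (Filter.mem_inf_of_left (by simp))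
    rw [hpure] at h1
    simp at h1
  · set p := Ultrafilter.of (Filter.cofinite ⊓ Filter.principal G) with hp
    have hGp : G ∈ p :=
      Ultrafilter.of_le _ (Filter.mem_inf_of_right (Filter.mem_principal_self G))
    intro h
    have h1 : q ⁻¹' S ∈ p := Filter.mem_of_superset hGp fun n hn => hn.1
    have h2 : S ∈ Ultrafilter.map q p := Ultrafilter.mem_map.2 h1
    rw [← h, Ultrafilter.map_map, Ultrafilter.map_map] at h2
    have h3 : ((· + 1) ∘ q ∘ (· + 1) : ℕ → ℕ) ⁻¹' S ∈ p := Ultrafilter.mem_map.1 h2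
    have h4 := Filter.inter_mem h3 hGp
    obtain ⟨n, hn1, hn2⟩ := Filter.nonempty_of_mem h4
    exact hn2.2 hn1
end

section
/- For every function q : ℕ → ℕ all of whose fibers are finite (q is finite-to-one), there exists an infinite set B ⊆ ℕ such that for all b, b' ∈ B, q(b+1) + 1 ≠ q(b'). -/
/-- For every finite-to-one `q : ℕ → ℕ` there is an infinite `B ⊆ ℕ` such that
`q(b+1) + 1 ≠ q(b')` for all `b, b' ∈ B`. -/
theorem exists_infinite_set_of_finite_to_one
    (q : ℕ → ℕ) (hq : ∀ n : ℕ, (q ⁻¹' {n}).Finite) :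
    ∃ B : Set ℕ, B.Infinite ∧ ∀ b ∈ B, ∀ b' ∈ B, q (b + 1) + 1 ≠ q b' := by
  classical
  -- fibers of `b ↦ q (b+1)` are finite
  have hq' : ∀ n : ℕ, {b : ℕ | q (b + 1) = n}.Finite := by
    intro n
    have hinj : Set.InjOn (fun b : ℕ => b + 1) ((fun b : ℕ => b + 1) ⁻¹' (q ⁻¹' {n})) := by
      intro a _ b _ h; simpa using h
    exact ((hq n).preimage hinj).subset (fun b hb => by simpa using hb)
  -- the diagonal-good set is infinite
  have hT : {b : ℕ | q (b + 1) + 1 ≠ q b}.Infinite := by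
    by_contra h
    rw [Set.not_infinite] at h
    obtain ⟨a, ha⟩ := h.bddAbove
    have hall : ∀ b, a < b → q (b + 1) + 1 = q b := by
      intro b hb
      by_contra hne
      exact absurd (ha hne) (by omega)
    have key : ∀ k : ℕ, q (a + 1) = q (a + 1 + k) + k := by
      intro k
      induction k with
      | zero => simp
      | succ k ih =>
        have h1 := hall (a + 1 + k) (by omega)
        have : a + 1 + (k + 1) = a + 1 + k + 1 := by omega
        rw [this]
        omega
    have := key (q (a + 1) + 1)
    omega
  -- given a finite set already chosen, we can choose a new large good element
  have step' : ∀ s : Finset ℕ, ∃ b, s.sup id < b ∧ q (b + 1) + 1 ≠ q b ∧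
      (∀ b' ∈ s, q (b + 1) + 1 ≠ q b') ∧ (∀ b' ∈ s, q (b' + 1) + 1 ≠ q b) := by
    intro s
    have hbad1 : (⋃ b' ∈ s, {b : ℕ | q (b + 1) + 1 = q b'}).Finite :=
      Set.Finite.biUnion s.finite_toSet (fun b' _ =>
        (hq' (q b' - 1)).subset (fun b hb => by simp only [Set.mem_setOf_eq] at hb ⊢; omega))
    have hbad2 : (⋃ b' ∈ s, {b : ℕ | q (b' + 1) + 1 = q b}).Finite :=
      Set.Finite.biUnion s.finite_toSet (fun b' _ =>
        (hq (q (b' + 1) + 1)).subset (fun b hb => by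
          simp only [Set.mem_setOf_eq] at hb
          simp [Set.mem_preimage, hb.symm]))
    have hfin : ((⋃ b' ∈ s, {b : ℕ | q (b + 1) + 1 = q b'}) ∪
        ((⋃ b' ∈ s, {b : ℕ | q (b' + 1) + 1 = q b}) ∪ Set.Iic (s.sup id))).Finite :=
      hbad1.union (hbad2.union (Set.finite_Iic _))
    obtain ⟨b, hbT, hbn⟩ := (hT.diff hfin).nonempty
    simp only [Set.mem_union, Set.mem_iUnion, Set.mem_Iic, not_or, not_exists,
      Set.mem_setOf_eq, not_le] at hbn
    refine ⟨b, hbn.2.2, hbT, ?_, ?_⟩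
    · intro b' hb'; exact hbn.1 b' hb'
    · intro b' hb'; exact hbn.2.1 b' hb'
  choose pick hpick1 hpick2 hpick3 hpick4 using step'
  -- iterate
  let F : ℕ → Finset ℕ := fun n => Nat.rec ∅ (fun _ s => insert (pick s) s) n
  have hFsucc : ∀ n, F (n + 1) = insert (pick (F n)) (F n) := fun n => rfl
  have hnotmem : ∀ s : Finset ℕ, pick s ∉ s := by
    intro s hmem
    have := Finset.le_sup (f := id) hmem
    have := hpick1 s
    simp only [id] at *
    omega
  have hmono : ∀ n m, n ≤ m → F n ⊆ F m := by
    intro n m hnm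
    induction m with
    | zero => simp_all
    | succ m ih =>
      rcases Nat.eq_or_lt_of_le hnm with h | h
      · subst h; exact Finset.Subset.refl _
      · exact (ih (by omega)).trans (by rw [hFsucc]; exact Finset.subset_insert _ _)
  have hcard : ∀ n, n ≤ (F n).card := by
    intro n
    induction n with
    | zero => simp
    | succ n ih =>
      rw [hFsucc, Finset.card_insert_of_notMem (hnotmem _)]
      omega
  -- invariant
  have hinv : ∀ n, ∀ b ∈ F n, ∀ b' ∈ F n, q (b + 1) + 1 ≠ q b' := by
    intro n
    induction n with
    | zero => simp [F]
    | succ n ih =>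
      rw [hFsucc]
      intro b hb b' hb'
      rcases Finset.mem_insert.mp hb with hb | hb <;>
        rcases Finset.mem_insert.mp hb' with hb' | hb'
      · subst hb; subst hb'; exact hpick2 (F n)
      · subst hb; exact hpick3 (F n) b' hb'
      · subst hb'; exact hpick4 (F n) b hb
      · exact ih b hb b' hb'
  refine ⟨⋃ n, {x : ℕ | x ∈ F n}, ?_, ?_⟩
  · by_contra h
    rw [Set.not_infinite] at h
    have hsub : ∀ n, F n ⊆ h.toFinset := by
      intro n b hb
      simp only [Set.Finite.mem_toFinset, Set.mem_iUnion]
      exact ⟨n, hb⟩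
    have := Finset.card_le_card (hsub (h.toFinset.card + 1))
    have := hcard (h.toFinset.card + 1)
    omega
  · intro b hb b' hb'
    simp only [Set.mem_iUnion, Set.mem_setOf_eq] at hb hb'
    obtain ⟨n, hn⟩ := hb
    obtain ⟨m, hm⟩ := hb'
    exact hinv (max n m) b (hmono n _ (le_max_left _ _) hn) b' (hmono m _ (le_max_right _ _) hm)
end
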